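/- arXiv:1808.00045 — 10 statements merged into one kernel-verified Lean document; each statement's English description precedes it below -/
import Mathlib

section
/- Let q, r be coprime integers with 1 ≤ q ≤ r, let P ≥ 0 and N = rP+1, and let K ≥ 1. Then, as an identity of rational numbers, C(K + (r−q)P, N) = Σ_{λ ⊢ N} w(λ) · M(λ) · C(K, ℓ(λ)), where the sum runs over all partitions λ of N. -/
open Finset

/-- The Haldane weight `w(λ)` of a partition `λ` of `N`, for FES parameter `g = q/r`
with excess `P = (N-1)/r`:
`w(λ) = [C(P, ℓ(λ) − k₁(λ)) / C(ℓ(λ), k₁(λ))] · ∏_{j=0}^{r−q} C(r−q, j)^{k_{j+1}(λ)}`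
if the largest part of `λ` is at most `r − q + 1`, and `0` otherwise. -/
def haldaneWeight (q r P N : ℕ) (lam : Nat.Partition N) : ℚ :=
  if ∀ i ∈ lam.parts, i ≤ r - q + 1 then
    ((Nat.choose P (Multiset.card lam.parts - lam.parts.count 1) : ℚ) /
        (Nat.choose (Multiset.card lam.parts) (lam.parts.count 1) : ℚ)) *
      ∏ j ∈ Finset.range (r - q + 1),
        ((Nat.choose (r - q) j : ℚ)) ^ (lam.parts.count (j + 1))
  else 0

/-- The multinomial factor `M(λ) = ℓ(λ)! / ∏_{i=1}^N kᵢ(λ)!` of a partition `λ` of `N`. -/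
def multiFactor (N : ℕ) (lam : Nat.Partition N) : ℚ :=
  (Nat.factorial (Multiset.card lam.parts) : ℚ) /
    ∏ i ∈ Finset.Icc 1 N, (Nat.factorial (lam.parts.count i) : ℚ)

section HaldaneAux
open Polynomial

-- middle sum
noncomputable def midSum (s P K N : ℕ) : ℚ :=
  ∑ m ∈ range (P+1), (P.choose m : ℚ) *
    ∑ k ∈ Finset.piAntidiag (Icc 1 s) m,
      (Nat.multinomial (Icc 1 s) k : ℚ) *
        (∏ j ∈ Icc 1 s, (s.choose j : ℚ) ^ (k j)) *
        (K.choose (N - ∑ j ∈ Icc 1 s, j * k j) : ℚ)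

lemma sum_le_of_piAntidiag {s m : ℕ} {k : ℕ → ℕ} (hk : k ∈ Finset.piAntidiag (Icc 1 s) m) :
    ∑ j ∈ Icc 1 s, j * k j ≤ s * m := by
  rw [Finset.mem_piAntidiag] at hk
  calc ∑ j ∈ Icc 1 s, j * k j ≤ ∑ j ∈ Icc 1 s, s * k j := by
        refine Finset.sum_le_sum fun j hj => ?_
        exact Nat.mul_le_mul_right _ (Finset.mem_Icc.mp hj).2
    _ = s * m := by rw [← Finset.mul_sum, hk.1]


lemma multiset_sum_eq (S : Finset ℕ) (M : Multiset ℕ) :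
    (∀ a ∈ M, a ∈ S) → M.sum = ∑ i ∈ S, M.count i * i := by
  induction M using Multiset.induction_on with
  | empty => intro _; simp
  | cons a M ih =>
    intro h
    have haS : a ∈ S := h a (Multiset.mem_cons_self a M)
    have hM : ∀ b ∈ M, b ∈ S := fun b hb => h b (Multiset.mem_cons_of_mem hb)
    rw [Multiset.sum_cons, ih hM]
    have hc : ∀ i ∈ S, (a ::ₘ M).count i * i = M.count i * i + (if i = a then i else 0) := by
      intro i _
      rw [Multiset.count_cons]
      split_ifs with h' <;> ring
    rw [Finset.sum_congr rfl hc, Finset.sum_add_distrib,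
      Finset.sum_ite_eq' S a (fun i => i), if_pos haS]
    ring

lemma card_finset_sum (S : Finset ℕ) (f : ℕ → Multiset ℕ) :
    Multiset.card (∑ j ∈ S, f j) = ∑ j ∈ S, Multiset.card (f j) := by
  classical
  induction S using Finset.induction_on with
  | empty => simp
  | insert _ _ h ih => rw [Finset.sum_insert h, Finset.sum_insert h, Multiset.card_add, ih]

lemma sum_finset_sum (S : Finset ℕ) (f : ℕ → Multiset ℕ) :
    (∑ j ∈ S, f j).sum = ∑ j ∈ S, (f j).sum := by
  classical
  induction S using Finset.induction_on with
  | empty => simp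
  | insert _ _ h ih => rw [Finset.sum_insert h, Finset.sum_insert h, Multiset.sum_add, ih]

/-- parts multiset built from `c1` ones and `k j` copies of `j+1` for `j ∈ [1,s]`. -/
def muParts (s c1 : ℕ) (k : ℕ → ℕ) : Multiset ℕ :=
  Multiset.replicate c1 1 + ∑ j ∈ Icc 1 s, Multiset.replicate (k j) (j+1)

lemma muParts_count_one (s c1 : ℕ) (k : ℕ → ℕ) : (muParts s c1 k).count 1 = c1 := by
  unfold muParts
  rw [Multiset.count_add, Multiset.count_replicate, if_pos rfl, Multiset.count_sum',
    Finset.sum_eq_zero, add_zero]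
  intro j hj
  rw [Multiset.count_replicate, if_neg]
  have := (Finset.mem_Icc.mp hj).1; omega

lemma muParts_count_succ (s c1 j : ℕ) (k : ℕ → ℕ) (hj : j ∈ Icc 1 s) :
    (muParts s c1 k).count (j+1) = k j := by
  have hj1 := (Finset.mem_Icc.mp hj).1
  unfold muParts
  rw [Multiset.count_add, Multiset.count_replicate, if_neg (by omega), Multiset.count_sum',
    Finset.sum_eq_single j (fun j' _ hne => by rw [Multiset.count_replicate, if_neg (by omega)])
      (fun h => absurd hj h), Multiset.count_replicate, if_pos rfl, zero_add]

lemma muParts_count_other (s c1 i : ℕ) (k : ℕ → ℕ) (hi : i ≠ 1) (hi2 : ¬ (2 ≤ i ∧ i ≤ s + 1)) :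
    (muParts s c1 k).count i = 0 := by
  unfold muParts
  rw [Multiset.count_add, Multiset.count_replicate, if_neg (by omega), Multiset.count_sum',
    Finset.sum_eq_zero, add_zero]
  intro j hj
  have := Finset.mem_Icc.mp hj
  rw [Multiset.count_replicate, if_neg (by omega)]

lemma muParts_card (s c1 : ℕ) (k : ℕ → ℕ) :
    Multiset.card (muParts s c1 k) = c1 + ∑ j ∈ Icc 1 s, k j := by
  unfold muParts
  rw [Multiset.card_add, Multiset.card_replicate, card_finset_sum]
  simp [Multiset.card_replicate]

lemma muParts_sum (s c1 : ℕ) (k : ℕ → ℕ) :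
    (muParts s c1 k).sum = c1 + ∑ j ∈ Icc 1 s, (j+1) * k j := by
  unfold muParts
  rw [Multiset.sum_add, sum_finset_sum]
  simp [Multiset.sum_replicate, mul_comm]

/-- the partition of `N` associated to a multiplicity vector `k` on `[1,s]`. -/
def toPart (N s : ℕ) (k : ℕ → ℕ) : Nat.Partition N :=
  if h : (∑ j ∈ Icc 1 s, (j+1) * k j) ≤ N then
    { parts := muParts s (N - ∑ j ∈ Icc 1 s, (j+1) * k j) k
      parts_pos := by
        intro i hi
        unfold muParts at hi
        rcases Multiset.mem_add.mp hi with h1 | h2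
        · rw [Multiset.eq_of_mem_replicate h1]; norm_num
        · obtain ⟨j, _, hj⟩ := Multiset.mem_sum.mp h2
          rw [Multiset.eq_of_mem_replicate hj]; omega
      parts_sum := by rw [muParts_sum]; omega }
  else
    { parts := Multiset.replicate N 1
      parts_pos := fun hi => by rw [Multiset.eq_of_mem_replicate hi]; norm_num
      parts_sum := by simp [Multiset.sum_replicate] }

lemma lemB (s P K N : ℕ) (hsP : s * P < N) :
    ((K + s * P).choose N : ℚ) = midSum s P K N := by
  have h1 : (X + 1 : ℚ[X]) ^ s = 1 + ∑ j ∈ Icc 1 s, C (s.choose j : ℚ) * X ^ j := by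
    rw [add_pow]
    have hr : range (s+1) = insert 0 (Icc 1 s) := by
      ext x; simp only [Finset.mem_range, Finset.mem_insert, Finset.mem_Icc]; omega
    rw [hr, Finset.sum_insert (by simp)]
    simp only [pow_zero, one_pow, Nat.choose_zero_right, Nat.cast_one, mul_one, one_mul]
    congr 1
    refine Finset.sum_congr rfl fun j hj => ?_
    rw [mul_comm, C_eq_natCast]
  set p : ℚ[X] := ∑ j ∈ Icc 1 s, C (s.choose j : ℚ) * X ^ j with hp
  have h2 : (X + 1 : ℚ[X]) ^ (K + s * P) =
      ∑ m ∈ range (P+1), C ((P.choose m : ℚ)) * ((X+1)^K * p ^ m) := by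
    rw [pow_add, pow_mul, h1, add_comm 1 p, add_pow p 1 P, Finset.mul_sum]
    refine Finset.sum_congr rfl fun m hm => ?_
    rw [one_pow, mul_one, C_eq_natCast]; ring
  have hc := congrArg (fun q : ℚ[X] => q.coeff N) h2
  simp only [coeff_X_add_one_pow] at hc
  rw [hc, finset_sum_coeff]
  unfold midSum
  refine Finset.sum_congr rfl fun m hm => ?_
  have hm' : m ≤ P := Nat.lt_succ_iff.mp (Finset.mem_range.mp hm)
  rw [coeff_C_mul]
  congr 1
  rw [hp, Finset.sum_pow_eq_sum_piAntidiag, Finset.mul_sum, finset_sum_coeff]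
  refine Finset.sum_congr rfl fun k hk => ?_
  have ht : (∑ j ∈ Icc 1 s, j * k j) ≤ N :=
    le_of_lt (lt_of_le_of_lt (le_trans (sum_le_of_piAntidiag hk)
      (Nat.mul_le_mul_left s hm')) hsP)
  have hprod : ∏ j ∈ Icc 1 s, (C ((s.choose j : ℚ)) * X ^ j) ^ (k j)
      = C (∏ j ∈ Icc 1 s, (s.choose j : ℚ) ^ (k j)) * X ^ (∑ j ∈ Icc 1 s, j * k j) := by
    simp_rw [mul_pow, ← C_pow, ← pow_mul]
    rw [Finset.prod_mul_distrib, ← map_prod, Finset.prod_pow_eq_pow_sum]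
  rw [hprod]
  have hre : (X+1:ℚ[X])^K * ((Nat.multinomial (Icc 1 s) k : ℚ[X]) *
        (C (∏ j ∈ Icc 1 s, (s.choose j : ℚ) ^ (k j)) * X ^ (∑ j ∈ Icc 1 s, j * k j)))
      = C ((Nat.multinomial (Icc 1 s) k : ℚ) * ∏ j ∈ Icc 1 s, (s.choose j : ℚ) ^ (k j)) *
        ((X+1:ℚ[X])^K * X ^ (∑ j ∈ Icc 1 s, j * k j)) := by
    rw [map_mul, C_eq_natCast]; ring
  rw [hre, coeff_C_mul, coeff_mul_X_pow', if_pos ht, coeff_X_add_one_pow]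


lemma muParts_le (s c1 : ℕ) (k : ℕ → ℕ) : ∀ i ∈ muParts s c1 k, i ≤ s + 1 := by
  intro i hi
  unfold muParts at hi
  rcases Multiset.mem_add.mp hi with h1 | h2
  · rw [Multiset.eq_of_mem_replicate h1]; omega
  · obtain ⟨j, hj, hj2⟩ := Multiset.mem_sum.mp h2
    rw [Multiset.eq_of_mem_replicate hj2]
    have := (Finset.mem_Icc.mp hj).2; omega

lemma lemA (s P K N : ℕ) (hN : (s + 1) * P < N) :
    (∑ lam : Nat.Partition N,
      (if ∀ i ∈ lam.parts, i ≤ s + 1 then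
        ((P.choose (Multiset.card lam.parts - lam.parts.count 1) : ℚ) /
          ((Multiset.card lam.parts).choose (lam.parts.count 1) : ℚ)) *
         ∏ j ∈ Finset.range (s+1), ((s.choose j : ℚ)) ^ (lam.parts.count (j+1))
       else 0) * multiFactor N lam * (K.choose (Multiset.card lam.parts) : ℚ))
    = midSum s P K N := by
  classical
  have hN0 : 0 < N := lt_of_le_of_lt (Nat.zero_le _) hN
  have hcount0 : ∀ lam : Nat.Partition N, lam.parts.count 0 = 0 := by
    intro lam
    rw [Multiset.count_eq_zero]
    intro hmem
    exact absurd (lam.parts_pos hmem) (by omega)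
  -- facts about good partitions
  have key : ∀ lam : Nat.Partition N, (∀ i ∈ lam.parts, i ≤ s + 1) →
      Multiset.card lam.parts = lam.parts.count 1 + ∑ j ∈ Icc 1 s, lam.parts.count (j+1)
      ∧ N = lam.parts.count 1 + ∑ j ∈ Icc 1 s, (j+1) * lam.parts.count (j+1) := by
    intro lam hb
    have hmem : ∀ a ∈ lam.parts, a ∈ Icc 1 (s+1) := fun a ha =>
      Finset.mem_Icc.mpr ⟨lam.parts_pos ha, hb a ha⟩
    have hsplit : Icc 1 (s+1) = insert 1 ((Icc 1 s).map (addRightEmbedding 1)) := by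
      rw [Finset.map_add_right_Icc]
      ext x; simp only [Finset.mem_Icc, Finset.mem_insert]; omega
    have h1 : (1:ℕ) ∉ (Icc 1 s).map (addRightEmbedding 1) := by
      rw [Finset.map_add_right_Icc]; simp
    constructor
    · rw [← Multiset.sum_count_eq_card hmem, hsplit, Finset.sum_insert h1, Finset.sum_map]
      simp only [addRightEmbedding_apply]
    · conv_lhs => rw [← lam.parts_sum]
      rw [multiset_sum_eq _ _ hmem, hsplit, Finset.sum_insert h1, Finset.sum_map]
      simp only [addRightEmbedding_apply, mul_one]
      congr 1
      exact Finset.sum_congr rfl fun j _ => mul_comm _ _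
  -- restrict to good partitions
  rw [← Finset.sum_filter_of_ne (p := fun lam : Nat.Partition N =>
      (∀ i ∈ lam.parts, i ≤ s + 1) ∧ Multiset.card lam.parts - lam.parts.count 1 ≤ P)
      (by
        intro lam _ hne
        by_contra hbad
        apply hne
        by_cases hA : ∀ i ∈ lam.parts, i ≤ s + 1
        · have hB : ¬ (Multiset.card lam.parts - lam.parts.count 1 ≤ P) :=
            fun h => hbad ⟨hA, h⟩
          rw [if_pos hA, Nat.choose_eq_zero_of_lt (by omega)]
          simp
        · rw [if_neg hA]; simp)]
  rw [midSum]
  simp only [Finset.mul_sum]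
  rw [Finset.sum_sigma']
  refine Finset.sum_nbij'
    (fun lam => ⟨Multiset.card lam.parts - lam.parts.count 1,
        fun j => if j = 0 then 0 else lam.parts.count (j+1)⟩)
    (fun x => toPart N s x.2) ?_ ?_ ?_ ?_ ?_
  · -- hi : forward into sigma
    intro lam hlam
    obtain ⟨-, hA, hB⟩ := Finset.mem_filter.mp hlam
    obtain ⟨hk1, hk2⟩ := key lam hA
    simp only [Finset.mem_sigma, Finset.mem_range, Finset.mem_piAntidiag]
    refine ⟨by omega, ?_, ?_⟩
    · rw [Finset.sum_congr rfl (fun j hj => if_neg (by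
        have := (Finset.mem_Icc.mp hj).1; omega))]
      omega
    · intro j hj
      by_cases hj0 : j = 0
      · simp [hj0] at hj
      · rw [if_neg hj0] at hj
        have hmem : j + 1 ∈ lam.parts := by
          by_contra hc
          exact hj (Multiset.count_eq_zero.mpr hc)
        exact Finset.mem_Icc.mpr ⟨by omega, by have := hA _ hmem; omega⟩
  · -- hj : backward into filter
    rintro ⟨m, k⟩ hx
    simp only [Finset.mem_sigma, Finset.mem_range, Finset.mem_piAntidiag] at hx
    obtain ⟨hm, hk1, hk2⟩ := hx
    have hT : (∑ j ∈ Icc 1 s, (j+1) * k j) ≤ (s+1) * m := by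
      calc ∑ j ∈ Icc 1 s, (j+1) * k j ≤ ∑ j ∈ Icc 1 s, (s+1) * k j :=
            Finset.sum_le_sum fun j hj =>
              Nat.mul_le_mul_right _ (by have := (Finset.mem_Icc.mp hj).2; omega)
        _ = (s+1) * m := by rw [← Finset.mul_sum, hk1]
    have hTN : (∑ j ∈ Icc 1 s, (j+1) * k j) < N :=
      lt_of_le_of_lt (le_trans hT (Nat.mul_le_mul_left _ (by omega))) hN
    have hparts : (toPart N s k).parts = muParts s (N - ∑ j ∈ Icc 1 s, (j+1) * k j) k := by
      unfold toPart
      rw [dif_pos hTN.le]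
    refine Finset.mem_filter.mpr ⟨Finset.mem_univ _, ?_, ?_⟩
    · rw [hparts]; exact muParts_le _ _ _
    · rw [hparts, muParts_card, muParts_count_one, hk1]
      omega
  · -- left inverse
    intro lam hlam
    obtain ⟨-, hA, hB⟩ := Finset.mem_filter.mp hlam
    obtain ⟨hk1, hk2⟩ := key lam hA
    have hTc : (∑ j ∈ Icc 1 s, (j+1) * (if j = 0 then 0 else lam.parts.count (j+1)))
        = ∑ j ∈ Icc 1 s, (j+1) * lam.parts.count (j+1) :=
      Finset.sum_congr rfl fun j hj => by
        rw [if_neg (by have := (Finset.mem_Icc.mp hj).1; omega)]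
    have hTN : (∑ j ∈ Icc 1 s, (j+1) * (if j = 0 then 0 else lam.parts.count (j+1))) ≤ N := by
      rw [hTc]; omega
    ext1
    dsimp only
    unfold toPart
    rw [dif_pos hTN]
    ext i
    dsimp only
    rcases Nat.eq_zero_or_pos i with hi0 | hi1
    · subst hi0
      rw [muParts_count_other _ _ _ _ (by omega) (by omega), hcount0 lam]
    · by_cases hi1' : i = 1
      · rw [hi1', muParts_count_one, hTc]
        omega
      · have hi2 : 2 ≤ i := by omega
        by_cases his : i ≤ s + 1
        · have hj : i - 1 ∈ Icc 1 s := Finset.mem_Icc.mpr ⟨by omega, by omega⟩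
          have hieq : i = (i-1) + 1 := by omega
          rw [hieq, muParts_count_succ _ _ _ _ hj, if_neg (by omega)]
        · rw [muParts_count_other _ _ _ _ (by omega) (by omega)]
          symm
          rw [Multiset.count_eq_zero]
          intro hmem
          exact his (hA i hmem)
  · -- right inverse
    rintro ⟨m, k⟩ hx
    simp only [Finset.mem_sigma, Finset.mem_range, Finset.mem_piAntidiag] at hx
    obtain ⟨hm, hk1, hk2⟩ := hx
    have hk0 : ∀ j, j ∉ Icc 1 s → k j = 0 := by
      intro j hj
      by_contra hc
      exact hj (hk2 j hc)
    have hT : (∑ j ∈ Icc 1 s, (j+1) * k j) ≤ (s+1) * m := by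
      calc ∑ j ∈ Icc 1 s, (j+1) * k j ≤ ∑ j ∈ Icc 1 s, (s+1) * k j :=
            Finset.sum_le_sum fun j hj =>
              Nat.mul_le_mul_right _ (by have := (Finset.mem_Icc.mp hj).2; omega)
        _ = (s+1) * m := by rw [← Finset.mul_sum, hk1]
    have hTN : (∑ j ∈ Icc 1 s, (j+1) * k j) < N :=
      lt_of_le_of_lt (le_trans hT (Nat.mul_le_mul_left _ (by omega))) hN
    have hparts : (toPart N s k).parts = muParts s (N - ∑ j ∈ Icc 1 s, (j+1) * k j) k := by
      unfold toPart
      rw [dif_pos hTN.le]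
    dsimp only
    refine Sigma.ext ?_ (heq_of_eq ?_)
    · dsimp only
      rw [hparts, muParts_card, muParts_count_one, hk1]
      omega
    · dsimp only
      funext j
      by_cases hj0 : j = 0
      · subst hj0
        rw [if_pos rfl]
        exact (hk0 0 (by simp)).symm
      · rw [if_neg hj0]
        by_cases hjs : j ∈ Icc 1 s
        · rw [hparts, muParts_count_succ _ _ _ _ hjs]
        · rw [hparts, muParts_count_other _ _ _ _ (by omega)
            (by have := Finset.mem_Icc.not.mp hjs; omega)]
          exact (hk0 j hjs).symm
  · -- values agree
    intro lam hlam
    obtain ⟨-, hA, hB⟩ := Finset.mem_filter.mp hlam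
    obtain ⟨hk1, hk2⟩ := key lam hA
    dsimp only
    rw [if_pos hA]
    have hif : ∀ j ∈ Icc 1 s,
        (if j = 0 then 0 else lam.parts.count (j+1)) = lam.parts.count (j+1) :=
      fun j hj => if_neg (by have := (Finset.mem_Icc.mp hj).1; omega)
    have hsum0 : ∑ j ∈ Icc 1 s, (if j = 0 then 0 else lam.parts.count (j+1))
        = ∑ j ∈ Icc 1 s, lam.parts.count (j+1) := Finset.sum_congr rfl hif
    have hsplit : ∑ j ∈ Icc 1 s, (j+1) * lam.parts.count (j+1)
        = (∑ j ∈ Icc 1 s, j * lam.parts.count (j+1)) + ∑ j ∈ Icc 1 s, lam.parts.count (j+1) := by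
      rw [← Finset.sum_add_distrib]
      exact Finset.sum_congr rfl fun j _ => by ring
    have ha' : N - ∑ j ∈ Icc 1 s, j * (if j = 0 then 0 else lam.parts.count (j+1))
        = Multiset.card lam.parts := by
      rw [Finset.sum_congr rfl (fun j hj => by rw [hif j hj])]
      omega
    have hr : range (s+1) = insert 0 (Icc 1 s) := by
      ext x; simp only [Finset.mem_range, Finset.mem_insert, Finset.mem_Icc]; omega
    have hPr : ∏ j ∈ range (s+1), ((s.choose j : ℚ)) ^ (lam.parts.count (j+1))
        = ∏ j ∈ Icc 1 s, ((s.choose j : ℚ)) ^ (if j = 0 then 0 else lam.parts.count (j+1)) := by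
      rw [hr, Finset.prod_insert (by simp)]
      simp only [Nat.choose_zero_right, Nat.cast_one, one_pow, one_mul]
      exact Finset.prod_congr rfl fun j hj => by rw [hif j hj]
    have hc1L : lam.parts.count 1 ≤ Multiset.card lam.parts := Multiset.count_le_card _ _
    have hbig : ∀ i, N < i → lam.parts.count i = 0 := by
      intro i hi
      rw [Multiset.count_eq_zero]
      intro hmem
      have := Multiset.single_le_sum (fun x (_ : x ∈ lam.parts) => Nat.zero_le x) i hmem
      rw [lam.parts_sum] at this; omega
    have hfact : (∏ i ∈ Icc 1 N, (lam.parts.count i).factorial)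
        = (lam.parts.count 1).factorial *
          ∏ j ∈ Icc 1 s, (if j = 0 then 0 else lam.parts.count (j+1)).factorial := by
      have h1N : Icc 1 N = insert 1 (Icc 2 N) := by
        ext x; simp only [Finset.mem_Icc, Finset.mem_insert]; omega
      rw [h1N, Finset.prod_insert (by simp)]
      congr 1
      have e1 : (∏ i ∈ Icc 2 N, (lam.parts.count i).factorial)
          = ∏ i ∈ Icc 2 (N+s+1), (lam.parts.count i).factorial :=
        Finset.prod_subset (Finset.Icc_subset_Icc_right (by omega)) (fun i hi hni => by
          have h1 := Finset.mem_Icc.mp hi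
          have h2 := Finset.mem_Icc.not.mp hni
          simp [hbig i (by omega)])
      have e2 : (∏ i ∈ Icc 2 (s+1), (lam.parts.count i).factorial)
          = ∏ i ∈ Icc 2 (N+s+1), (lam.parts.count i).factorial :=
        Finset.prod_subset (Finset.Icc_subset_Icc_right (by omega)) (fun i hi hni => by
          have h1 := Finset.mem_Icc.mp hi
          have h2 := Finset.mem_Icc.not.mp hni
          simp [Multiset.count_eq_zero.mpr (fun hmem => by have := hA i hmem; omega)])
      rw [e1, ← e2,
        show Icc 2 (s+1) = (Icc 1 s).map (addRightEmbedding 1) from by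
          rw [Finset.map_add_right_Icc],
        Finset.prod_map]
      exact Finset.prod_congr rfl fun j hj => by
        simp only [addRightEmbedding_apply]
        rw [hif j hj]
    have hMulSpec : (∏ j ∈ Icc 1 s, (if j = 0 then 0 else lam.parts.count (j+1)).factorial)
        * Nat.multinomial (Icc 1 s) (fun j => if j = 0 then 0 else lam.parts.count (j+1))
        = (Multiset.card lam.parts - lam.parts.count 1).factorial := by
      rw [Nat.multinomial_spec]
      congr 1
      rw [hsum0]
      omega
    have hCh := Nat.choose_mul_factorial_mul_factorial hc1L
    have hLfact : (Multiset.card lam.parts).factorial =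
        (Multiset.card lam.parts).choose (lam.parts.count 1)
          * (∏ i ∈ Icc 1 N, (lam.parts.count i).factorial)
          * Nat.multinomial (Icc 1 s) (fun j => if j = 0 then 0 else lam.parts.count (j+1)) := by
      rw [hfact]
      symm
      calc (Multiset.card lam.parts).choose (lam.parts.count 1) *
            ((lam.parts.count 1).factorial *
              ∏ j ∈ Icc 1 s, (if j = 0 then 0 else lam.parts.count (j+1)).factorial) *
            Nat.multinomial (Icc 1 s) (fun j => if j = 0 then 0 else lam.parts.count (j+1))
          = (Multiset.card lam.parts).choose (lam.parts.count 1) * (lam.parts.count 1).factorial *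
            ((∏ j ∈ Icc 1 s, (if j = 0 then 0 else lam.parts.count (j+1)).factorial) *
              Nat.multinomial (Icc 1 s) (fun j => if j = 0 then 0 else lam.parts.count (j+1))) := by
            ring
        _ = (Multiset.card lam.parts).choose (lam.parts.count 1) * (lam.parts.count 1).factorial *
            (Multiset.card lam.parts - lam.parts.count 1).factorial := by rw [hMulSpec]
        _ = (Multiset.card lam.parts).factorial := hCh
    simp only [multiFactor]
    rw [ha', hPr]
    have hCLne : (((Multiset.card lam.parts).choose (lam.parts.count 1) : ℕ) : ℚ) ≠ 0 :=
      Nat.cast_ne_zero.mpr (Nat.choose_pos hc1L).ne'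
    have hDQne : (∏ i ∈ Icc 1 N, ((lam.parts.count i).factorial : ℚ)) ≠ 0 :=
      Finset.prod_ne_zero_iff.mpr fun i _ => Nat.cast_ne_zero.mpr (Nat.factorial_ne_zero _)
    have hQ : (((Multiset.card lam.parts).factorial : ℕ) : ℚ) =
        (((Multiset.card lam.parts).choose (lam.parts.count 1) : ℕ) : ℚ)
          * (∏ i ∈ Icc 1 N, ((lam.parts.count i).factorial : ℚ))
          * ((Nat.multinomial (Icc 1 s) (fun j => if j = 0 then 0 else lam.parts.count (j+1)) : ℕ) : ℚ) := by
      exact_mod_cast congrArg (Nat.cast : ℕ → ℚ) hLfact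
    rw [hQ]
    field_simp

end HaldaneAux

/-- For coprime `q ≤ r`, `N = rP + 1` and `K ≥ 1`, the Haldane state count
satisfies `C(K + (r−q)P, N) = Σ_{λ ⊢ N} w(λ) · M(λ) · C(K, ℓ(λ))` in `ℚ`. -/
theorem stmt1 (q r P K N : ℕ) (hq : 1 ≤ q) (hqr : q ≤ r) (hcop : Nat.Coprime q r)
    (hK : 1 ≤ K) (hN : N = r * P + 1) :
    (Nat.choose (K + (r - q) * P) N : ℚ) =
      ∑ lam : Nat.Partition N,
        haldaneWeight q r P N lam * multiFactor N lam *
          (Nat.choose K (Multiset.card lam.parts) : ℚ) := by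
  have hr : r - q + 1 ≤ r := by omega
  have hs1 : (r - q + 1) * P < N := by
    calc (r - q + 1) * P ≤ r * P := Nat.mul_le_mul_right _ hr
      _ < N := by omega
  have hs2 : (r - q) * P < N :=
    lt_of_le_of_lt (Nat.mul_le_mul_right _ (by omega)) hs1
  rw [lemB (r - q) P K N hs2, ← lemA (r - q) P K N hs1]
  exact Finset.sum_congr rfl fun lam _ => by rw [haldaneWeight]
end

section
/- Let q, r be coprime integers with 1 ≤ q ≤ r, let P ≥ 0 and N = rP+1. Then for every integer t with 0 ≤ t ≤ N, the sum of w(λ)·M(λ) over all partitions λ of N having exactly t parts equals C((r−q)P, N − t). (In particular, under the Haldane probability measure the number of occupied states ℓ(λ) follows a hypergeometric law with parameters K, K+(r−q)P and N.) -/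
open Finset

lemma prodIccRange (f : ℕ → ℚ) (n : ℕ) :
    ∏ i ∈ Finset.Icc 1 n, f i = ∏ i ∈ Finset.range n, f (i + 1) := by
  rw [← Finset.Ico_add_one_right_eq_Icc, Finset.prod_Ico_eq_prod_range]
  simp [add_comm]

lemma sum_map_add_one (m : Multiset ℕ) :
    (m.map (fun i => i + 1)).sum = m.sum + Multiset.card m := by
  rw [Multiset.sum_map_add]
  simp
def redHL (m : Multiset ℕ) : Multiset ℕ :=
  (m.filter (fun i => 2 ≤ i)).map (fun i => i - 1)

lemma map_add_one_redHL (m : Multiset ℕ) :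
    (redHL m).map (fun i => i + 1) = m.filter (fun i => 2 ≤ i) := by
  conv_rhs => rw [← Multiset.map_id (m.filter (fun i => 2 ≤ i))]
  rw [redHL, Multiset.map_map]
  apply Multiset.map_congr rfl
  intro x hx
  have : 2 ≤ x := (Multiset.mem_filter.mp hx).2
  simp only [Function.comp_apply, id]
  omega

lemma count_redHL (m : Multiset ℕ) (j : ℕ) (hj : 1 ≤ j) :
    (redHL m).count j = m.count (j + 1) := by
  rw [redHL, Multiset.count_map]
  rw [Multiset.filter_filter]
  rw [Multiset.count, Multiset.countP_eq_card_filter]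
  congr 1
  apply Multiset.filter_congr
  intro x _
  constructor
  · rintro ⟨h1, h2⟩; omega
  · rintro rfl; omega

lemma pos_redHL {m : Multiset ℕ} {i : ℕ} (hi : i ∈ redHL m) : 0 < i := by
  rw [redHL] at hi
  obtain ⟨x, hx, rfl⟩ := Multiset.mem_map.mp hi
  have := (Multiset.mem_filter.mp hx).2
  omega

lemma decomp_redHL (m : Multiset ℕ) (hpos : ∀ i ∈ m, 0 < i) :
    (redHL m).map (fun i => i + 1) + Multiset.replicate (m.count 1) 1 = m := by
  rw [map_add_one_redHL]
  have h2 : m.filter (fun i => ¬ 2 ≤ i) = Multiset.replicate (m.count 1) 1 := by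
    rw [Multiset.filter_congr (q := Eq 1) (fun x hx => by
      have := hpos x hx; constructor <;> omega)]
    exact Multiset.filter_eq m 1
  rw [← h2]
  exact Multiset.filter_add_not _ m

lemma card_redHL (m : Multiset ℕ) (hpos : ∀ i ∈ m, 0 < i) :
    Multiset.card (redHL m) + m.count 1 = Multiset.card m := by
  have := congrArg Multiset.card (decomp_redHL m hpos)
  simpa using this

lemma sum_redHL (m : Multiset ℕ) (hpos : ∀ i ∈ m, 0 < i) :
    (redHL m).sum + Multiset.card m = m.sum := by
  have h := congrArg Multiset.sum (decomp_redHL m hpos)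
  have h2 : ((redHL m).map (fun i => i + 1)).sum
      = (redHL m).sum + Multiset.card (redHL m) := by
    rw [Multiset.sum_map_add]
    simp
  rw [Multiset.sum_add, h2, Multiset.sum_replicate, smul_eq_mul, mul_one] at h
  have hc := card_redHL m hpos
  omega

noncomputable def restHL (s : ℕ) (m : Multiset ℕ) : ℚ :=
  (Nat.factorial (Multiset.card m) : ℚ)
      / (∏ i ∈ m.toFinset, (Nat.factorial (m.count i) : ℚ))
    * ∏ i ∈ m.toFinset, ((Nat.choose s i : ℚ)) ^ (m.count i)

lemma count_mul_rest (s : ℕ) (m : Multiset ℕ) (j : ℕ) (hj : j ∈ m) :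
    (m.count j : ℚ) * restHL s m
      = (Multiset.card m : ℚ) * (Nat.choose s j : ℚ) * restHL s (m.erase j) := by
  classical
  have hj' : j ∈ m.toFinset := Multiset.mem_toFinset.mpr hj
  set m' := m.erase j with hm'
  have hkpos : 0 < m.count j := Multiset.count_pos.mpr hj
  have hcpos : 0 < Multiset.card m := Multiset.card_pos.mpr (by rintro rfl; simp at hj)
  have hcount : m.count j = m'.count j + 1 := by
    rw [hm', Multiset.count_erase_self]; omega
  have hcard : Multiset.card m = Multiset.card m' + 1 := by
    rw [hm', Multiset.card_erase_of_mem hj, Nat.pred_eq_sub_one]; omega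
  have hsubT : m'.toFinset ⊆ m.toFinset :=
    Multiset.toFinset_subset.mpr (Multiset.erase_subset j m)
  have hF : (∏ i ∈ m'.toFinset, ((m'.count i).factorial : ℚ))
      = ∏ i ∈ m.toFinset, ((m'.count i).factorial : ℚ) :=
    Finset.prod_subset hsubT (fun x _ hnx => by
      have : m'.count x = 0 := by
        rw [Multiset.count_eq_zero]; exact fun h => hnx (Multiset.mem_toFinset.mpr h)
      simp [this])
  have hP : (∏ i ∈ m'.toFinset, ((s.choose i : ℚ)) ^ (m'.count i))
      = ∏ i ∈ m.toFinset, ((s.choose i : ℚ)) ^ (m'.count i) :=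
    Finset.prod_subset hsubT (fun x _ hnx => by
      have : m'.count x = 0 := by
        rw [Multiset.count_eq_zero]; exact fun h => hnx (Multiset.mem_toFinset.mpr h)
      simp [this])
  set A := ∏ i ∈ m.toFinset.erase j, ((m.count i).factorial : ℚ) with hA
  set B := ∏ i ∈ m.toFinset.erase j, ((s.choose i : ℚ)) ^ (m.count i) with hB
  have hA' : ∏ i ∈ m.toFinset.erase j, ((m'.count i).factorial : ℚ) = A :=
    Finset.prod_congr rfl (fun x hx => by
      rw [hm', Multiset.count_erase_of_ne (Finset.mem_erase.mp hx).1])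
  have hB' : ∏ i ∈ m.toFinset.erase j, ((s.choose i : ℚ)) ^ (m'.count i) = B :=
    Finset.prod_congr rfl (fun x hx => by
      rw [hm', Multiset.count_erase_of_ne (Finset.mem_erase.mp hx).1])
  have e1 : ∏ i ∈ m.toFinset, ((m.count i).factorial : ℚ)
      = ((m.count j).factorial : ℚ) * A := (Finset.mul_prod_erase _ _ hj').symm
  have e2 : ∏ i ∈ m.toFinset, ((m'.count i).factorial : ℚ)
      = ((m'.count j).factorial : ℚ) * A := by
    rw [← Finset.mul_prod_erase _ _ hj', hA']
  have e3 : ∏ i ∈ m.toFinset, ((s.choose i : ℚ)) ^ (m.count i)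
      = ((s.choose j : ℚ)) ^ (m.count j) * B := (Finset.mul_prod_erase _ _ hj').symm
  have e4 : ∏ i ∈ m.toFinset, ((s.choose i : ℚ)) ^ (m'.count i)
      = ((s.choose j : ℚ)) ^ (m'.count j) * B := by
    rw [← Finset.mul_prod_erase _ _ hj', hB']
  have hAne : A ≠ 0 := by
    rw [hA]
    apply Finset.prod_ne_zero_iff.mpr
    intro i _
    exact_mod_cast (Nat.factorial_pos _).ne'
  have hfne : ((m'.count j).factorial : ℚ) ≠ 0 := by
    exact_mod_cast (Nat.factorial_pos _).ne'
  rw [restHL, restHL, hF, hP, e1, e2, e3, e4, hcount, hcard]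
  push_cast [Nat.factorial_succ, pow_succ]
  field_simp

noncomputable def wgtHL (s P : ℕ) (m : Multiset ℕ) : ℚ :=
  (Nat.choose P (Multiset.card m) : ℚ) * restHL s m

lemma erase_decomp (s P : ℕ) (m : Multiset ℕ) (hm : m ≠ 0) :
    (Nat.choose P (Multiset.card m - 1) : ℚ) * restHL s m
      = ∑ j ∈ m.toFinset, (Nat.choose s j : ℚ) * wgtHL s P (m.erase j) := by
  classical
  have hcpos : 0 < Multiset.card m := Multiset.card_pos.mpr hm
  have hcne : (Multiset.card m : ℚ) ≠ 0 := by exact_mod_cast hcpos.ne'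
  apply mul_left_cancel₀ hcne
  rw [Finset.mul_sum]
  have key : ∀ j ∈ m.toFinset,
      (Multiset.card m : ℚ) * ((Nat.choose s j : ℚ) * wgtHL s P (m.erase j))
        = (m.count j : ℚ) * ((Nat.choose P (Multiset.card m - 1) : ℚ) * restHL s m) := by
    intro j hj
    have hjm : j ∈ m := Multiset.mem_toFinset.mp hj
    have hcard : Multiset.card (m.erase j) = Multiset.card m - 1 := by
      rw [Multiset.card_erase_of_mem hjm, Nat.pred_eq_sub_one]
    rw [wgtHL, hcard]
    have h := count_mul_rest s m j hjm
    linear_combination (-(Nat.choose P (Multiset.card m - 1) : ℚ)) * h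
  rw [Finset.sum_congr rfl key, ← Finset.sum_mul]
  have hsum : (∑ j ∈ m.toFinset, (m.count j : ℚ)) = (Multiset.card m : ℚ) := by
    exact_mod_cast congrArg (Nat.cast : ℕ → ℚ) (Multiset.toFinset_sum_count_eq m)
  rw [hsum]

noncomputable def PFhl (d : ℕ) : Finset (Multiset ℕ) :=
  Finset.univ.image (fun mu : Nat.Partition d => mu.parts)

lemma mem_PFhl {d : ℕ} {m : Multiset ℕ} :
    m ∈ PFhl d ↔ m.sum = d ∧ ∀ i ∈ m, 0 < i := by
  constructor
  · rintro hm
    simp only [PFhl, mem_image, mem_univ, true_and] at hm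
    obtain ⟨mu, rfl⟩ := hm
    exact ⟨mu.parts_sum, fun i hi => mu.parts_pos hi⟩
  · rintro ⟨h1, h2⟩
    simp only [PFhl, mem_image, mem_univ, true_and]
    exact ⟨⟨m, fun {i} hi => h2 i hi, h1⟩, rfl⟩

lemma sum_erase_reindex (s P d : ℕ) (hd : 1 ≤ d) :
    ∑ m ∈ PFhl d, ∑ j ∈ m.toFinset, (Nat.choose s j : ℚ) * wgtHL s P (m.erase j)
      = ∑ j ∈ Finset.Icc 1 d, (Nat.choose s j : ℚ) * ∑ m ∈ PFhl (d - j), wgtHL s P m := by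
  classical
  simp_rw [Finset.mul_sum]
  rw [Finset.sum_sigma' (PFhl d) (fun m => m.toFinset)
      (fun m j => (Nat.choose s j : ℚ) * wgtHL s P (m.erase j)),
    Finset.sum_sigma' (Finset.Icc 1 d) (fun j => PFhl (d - j))
      (fun j m => (Nat.choose s j : ℚ) * wgtHL s P m)]
  apply Finset.sum_bij' (fun p hp => (⟨p.2, p.1.erase p.2⟩ : Σ _ : ℕ, Multiset ℕ))
    (fun p hp => (⟨p.1 ::ₘ p.2, p.1⟩ : Σ _ : Multiset ℕ, ℕ))
  · rintro ⟨m, j⟩ hp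
    simp only [Finset.mem_sigma] at hp ⊢
    obtain ⟨hm, hj⟩ := hp
    obtain ⟨hsum, hpos⟩ := mem_PFhl.mp hm
    have hjm : j ∈ m := Multiset.mem_toFinset.mp hj
    have hjle : j ≤ d := hsum ▸ Multiset.le_sum_of_mem hjm
    refine ⟨Finset.mem_Icc.mpr ⟨hpos j hjm, hjle⟩, mem_PFhl.mpr ⟨?_, ?_⟩⟩
    · have := congrArg Multiset.sum (Multiset.cons_erase hjm)
      rw [Multiset.sum_cons] at this
      omega
    · exact fun i hi => hpos i (Multiset.mem_of_mem_erase hi)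
  · rintro ⟨j, m⟩ hp
    simp only [Finset.mem_sigma] at hp ⊢
    obtain ⟨hj, hm⟩ := hp
    obtain ⟨hsum, hpos⟩ := mem_PFhl.mp hm
    rw [Finset.mem_Icc] at hj
    refine ⟨mem_PFhl.mpr ⟨?_, ?_⟩, ?_⟩
    · rw [Multiset.sum_cons]; omega
    · intro i hi
      rcases Multiset.mem_cons.mp hi with h | h
      · omega
      · exact hpos i h
    · exact Multiset.mem_toFinset.mpr (Multiset.mem_cons_self _ _)
  · rintro ⟨m, j⟩ hp
    simp only [Finset.mem_sigma] at hp
    have hjm : j ∈ m := Multiset.mem_toFinset.mp hp.2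
    simp [Multiset.cons_erase hjm]
  · rintro ⟨j, m⟩ hp
    simp [Multiset.erase_cons_head]
  · rintro ⟨m, j⟩ hp
    rfl

lemma sumIccRange (f : ℕ → ℚ) (n : ℕ) :
    ∑ i ∈ Finset.Icc 1 n, f i = ∑ i ∈ Finset.range n, f (i + 1) := by
  rw [← Finset.Ico_add_one_right_eq_Icc, Finset.sum_Ico_eq_sum_range]
  simp [add_comm]

lemma PFhl_zero : PFhl 0 = {0} := by
  ext m
  rw [mem_PFhl, Finset.mem_singleton]
  constructor
  · rintro ⟨h1, h2⟩
    rw [Multiset.eq_zero_iff_forall_notMem]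
    intro x hx
    have := h2 x hx
    have := Multiset.le_sum_of_mem hx
    omega
  · rintro rfl; simp

lemma wgt_empty (s P : ℕ) : wgtHL s P 0 = 1 := by
  simp [wgtHL, restHL]

lemma nonempty_of_mem_PFhl {d : ℕ} {m : Multiset ℕ} (hd : 1 ≤ d) (hm : m ∈ PFhl d) :
    m ≠ 0 := by
  rintro rfl
  rw [mem_PFhl] at hm
  simp at hm
  omega

lemma main_identity (s P : ℕ) : ∀ d : ℕ,
    ∑ m ∈ PFhl d, wgtHL s P m = (Nat.choose (s * P) d : ℚ) := by
  induction P with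
  | zero =>
    intro d
    match d with
    | 0 => rw [PFhl_zero]; simp [wgt_empty]
    | e + 1 =>
      rw [Finset.sum_eq_zero, mul_zero, Nat.choose_eq_zero_of_lt (by omega), Nat.cast_zero]
      intro m hm
      have hne := nonempty_of_mem_PFhl (by omega) hm
      have : 0 < Multiset.card m := Multiset.card_pos.mpr hne
      rw [wgtHL, Nat.choose_eq_zero_of_lt (by omega), Nat.cast_zero, zero_mul]
  | succ P ih =>
    intro d
    match d with
    | 0 => rw [PFhl_zero]; simp [wgt_empty]
    | e + 1 =>
      have hsplit : ∀ m ∈ PFhl (e + 1), wgtHL s (P + 1) m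
          = wgtHL s P m + (Nat.choose P (Multiset.card m - 1) : ℚ) * restHL s m := by
        intro m hm
        have hne := nonempty_of_mem_PFhl (by omega) hm
        have hc : 0 < Multiset.card m := Multiset.card_pos.mpr hne
        obtain ⟨c, hceq⟩ : ∃ c, Multiset.card m = c + 1 := ⟨Multiset.card m - 1, by omega⟩
        rw [wgtHL, wgtHL, hceq, Nat.choose_succ_succ]
        push_cast
        rw [Nat.succ_eq_add_one]
        ring
      rw [Finset.sum_congr rfl hsplit, Finset.sum_add_distrib, ih,
        Finset.sum_congr rfl (fun m hm =>
          erase_decomp s P m (nonempty_of_mem_PFhl (by omega) hm)),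
        sum_erase_reindex s P (e + 1) (by omega)]
      simp_rw [fun j => ih (e + 1 - j)]
      have hvan : (Nat.choose (s * (P + 1)) (e + 1) : ℚ)
          = (Nat.choose (s * P) (e + 1) : ℚ)
            + ∑ j ∈ Finset.Icc 1 (e + 1),
                (Nat.choose s j : ℚ) * (Nat.choose (s * P) (e + 1 - j) : ℚ) := by
        have hm : s * (P + 1) = s + s * P := by ring
        rw [hm, Nat.add_choose_eq, Nat.sum_antidiagonal_eq_sum_range_succ_mk]
        push_cast
        rw [Finset.sum_range_succ']
        rw [sumIccRange (fun j => (Nat.choose s j : ℚ) * (Nat.choose (s * P) (e + 1 - j) : ℚ)) (e + 1)]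
        simp [add_comm]
      rw [hvan]

lemma weight_eq (q r P N : ℕ) (hN : 1 ≤ N) (lam : Nat.Partition N) :
    haldaneWeight q r P N lam * multiFactor N lam = wgtHL (r - q) P (redHL lam.parts) := by
  classical
  set s := r - q with hs
  set pa := lam.parts with hpa
  have hpos : ∀ i ∈ pa, 0 < i := fun i hi => lam.parts_pos hi
  have hsum : pa.sum = N := lam.parts_sum
  set t' := Multiset.card pa with ht'
  set k1 := pa.count 1 with hk1
  set mu := redHL pa with hmu
  have hk1le : k1 ≤ t' := Multiset.count_le_card 1 pa
  have hcardmu : Multiset.card mu + k1 = t' := card_redHL pa hpos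
  have hcnt : ∀ j, 1 ≤ j → mu.count j = pa.count (j + 1) := fun j hj => count_redHL pa j hj
  have hmemparts : ∀ i ∈ pa, i ≤ N := fun i hi => hsum ▸ Multiset.le_sum_of_mem hi
  have hmumem : ∀ i ∈ mu, 1 ≤ i ∧ i + 1 ∈ pa := by
    intro i hi
    have h1 : 1 ≤ i := pos_redHL hi
    have h2 : 0 < mu.count i := Multiset.count_pos.mpr hi
    rw [hcnt i h1] at h2
    exact ⟨h1, Multiset.count_pos.mp h2⟩
  have hNsub : N - 1 + 1 = N := by omega
  set G := ∏ i ∈ Finset.range (N - 1), ((pa.count (i + 2)).factorial : ℚ) with hG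
  have hGne : G ≠ 0 := by
    rw [hG]
    apply Finset.prod_ne_zero_iff.mpr
    intro i _
    exact_mod_cast (Nat.factorial_pos _).ne'
  have hden : ∏ i ∈ Finset.Icc 1 N, ((pa.count i).factorial : ℚ)
      = (k1.factorial : ℚ) * G := by
    rw [prodIccRange (fun i => ((pa.count i).factorial : ℚ)) N, ← hNsub,
      Finset.prod_range_succ']
    rw [mul_comm]
  have hsubN : mu.toFinset ⊆ Finset.Icc 1 (N - 1) := by
    intro i hi
    obtain ⟨h1, h2⟩ := hmumem i (Multiset.mem_toFinset.mp hi)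
    have := hmemparts _ h2
    rw [Finset.mem_Icc]
    omega
  have hfmu : ∏ i ∈ mu.toFinset, ((mu.count i).factorial : ℚ) = G := by
    rw [Finset.prod_subset hsubN (fun x _ hnx => by
      have : mu.count x = 0 := by
        rw [Multiset.count_eq_zero]
        exact fun h => hnx (Multiset.mem_toFinset.mpr h)
      simp [this])]
    rw [prodIccRange (fun i => ((mu.count i).factorial : ℚ)) (N - 1), hG]
    apply Finset.prod_congr rfl
    intro i _
    rw [hcnt (i + 1) (by omega)]
  by_cases hA : ∀ i ∈ pa, i ≤ s + 1
  · -- all parts small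
    have hmule : ∀ i ∈ mu, i ≤ s := by
      intro i hi
      obtain ⟨h1, h2⟩ := hmumem i hi
      have := hA _ h2
      omega
    have hsubs : mu.toFinset ⊆ Finset.Icc 1 s := by
      intro i hi
      have h1 := pos_redHL (Multiset.mem_toFinset.mp hi)
      have h2 := hmule i (Multiset.mem_toFinset.mp hi)
      rw [Finset.mem_Icc]
      omega
    have hpow : ∏ i ∈ mu.toFinset, ((Nat.choose s i : ℚ)) ^ (mu.count i)
        = ∏ j ∈ Finset.range (s + 1), ((Nat.choose s j : ℚ)) ^ (pa.count (j + 1)) := by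
      conv_rhs => rw [Finset.prod_range_succ']
      have h0 : ((Nat.choose s 0 : ℚ)) ^ (pa.count (0 + 1)) = 1 := by simp
      rw [h0, mul_one]
      rw [Finset.prod_subset hsubs (fun x _ hnx => by
        have : mu.count x = 0 := by
          rw [Multiset.count_eq_zero]
          exact fun h => hnx (Multiset.mem_toFinset.mpr h)
        simp [this])]
      rw [prodIccRange (fun i => ((Nat.choose s i : ℚ)) ^ (mu.count i)) s]
      apply Finset.prod_congr rfl
      intro i _
      rw [hcnt (i + 1) (by omega)]
    rw [haldaneWeight, multiFactor, wgtHL, restHL, if_pos hA]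
    rw [← hs, ← hpa, ← ht', ← hk1]
    rw [hden, hfmu, hpow]
    have hcard' : Multiset.card mu = t' - k1 := by omega
    rw [hcard']
    have hch : ((t'.choose k1 : ℕ) : ℚ) * (k1.factorial : ℚ) * ((t' - k1).factorial : ℚ)
        = (t'.factorial : ℚ) := by
      exact_mod_cast congrArg (Nat.cast : ℕ → ℚ)
        (Nat.choose_mul_factorial_mul_factorial hk1le)
    have hchne : ((t'.choose k1 : ℕ) : ℚ) ≠ 0 := by
      exact_mod_cast (Nat.choose_pos hk1le).ne'
    have hk1ne : ((k1.factorial : ℕ) : ℚ) ≠ 0 := by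
      exact_mod_cast (Nat.factorial_pos _).ne'
    rw [← hch]
    field_simp
  · -- some big part: both sides vanish
    rw [haldaneWeight, if_neg hA, zero_mul]
    push_neg at hA
    obtain ⟨i, hi, hilt⟩ := hA
    have him : i - 1 ∈ mu := by
      rw [hmu, redHL]
      exact Multiset.mem_map.mpr ⟨i, Multiset.mem_filter.mpr ⟨hi, by omega⟩, rfl⟩
    have h0 : ((Nat.choose s (i - 1) : ℕ) : ℚ) ^ (mu.count (i - 1)) = 0 := by
      rw [Nat.choose_eq_zero_of_lt (by omega)]
      exact zero_pow (Multiset.count_pos.mpr him).ne'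
    have hz := Finset.prod_eq_zero (f := fun j => ((Nat.choose s j : ℕ) : ℚ) ^ (mu.count j))
      (Multiset.mem_toFinset.mpr him) h0
    rw [wgtHL, restHL, hz]
    ring

lemma vanish (q r P N t : ℕ) (hq : 1 ≤ q) (hqr : q ≤ r) (hN : N = r * P + 1)
    (ht : t ≤ N) (m : Multiset ℕ) (hm : m ∈ PFhl (N - t)) (hcard : t < Multiset.card m) :
    wgtHL (r - q) P m = 0 := by
  obtain ⟨hsum, hpos⟩ := mem_PFhl.mp hm
  by_cases hP : P < Multiset.card m
  · rw [wgtHL, Nat.choose_eq_zero_of_lt hP]; simp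
  · push_neg at hP
    by_cases hbig : ∃ i ∈ m, r - q < i
    · obtain ⟨i, him, hi⟩ := hbig
      rw [wgtHL, restHL]
      have h0 : (((r - q).choose i : ℕ) : ℚ) ^ (m.count i) = 0 := by
        rw [Nat.choose_eq_zero_of_lt hi]
        exact zero_pow (Multiset.count_pos.mpr him).ne'
      have hz := Finset.prod_eq_zero (f := fun i => (((r - q).choose i : ℕ) : ℚ) ^ (m.count i))
        (Multiset.mem_toFinset.mpr him) h0
      rw [hz]
      ring
    · push_neg at hbig
      exfalso
      have hle := Multiset.sum_le_card_nsmul m (r - q) hbig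
      rw [hsum, smul_eq_mul] at hle
      have h1 : Multiset.card m * (r - q) ≤ P * (r - q) := Nat.mul_le_mul_right _ hP
      have h2 : N ≤ P * (r - q) + t := by omega
      have h4 : P * (r - q) + P ≤ P * r := by
        have hle2 : (r - q) + 1 ≤ r := by omega
        calc P * (r - q) + P = P * ((r - q) + 1) := by ring
          _ ≤ P * r := Nat.mul_le_mul_left _ hle2
      have h5 : t < P := lt_of_lt_of_le hcard hP
      have h6 : P * r < N := by rw [hN, Nat.mul_comm]; omega
      omega


lemma sum_reduce (q r P N t : ℕ) (hN : 1 ≤ N) (ht : t ≤ N) :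
    ∑ lam ∈ Finset.univ.filter
        (fun lam : Nat.Partition N => Multiset.card lam.parts = t),
      wgtHL (r - q) P (redHL lam.parts)
      = ∑ m ∈ (PFhl (N - t)).filter (fun m => Multiset.card m ≤ t), wgtHL (r - q) P m := by
  classical
  apply Finset.sum_bij'
    (fun (lam : Nat.Partition N) (_ : lam ∈ Finset.univ.filter
        (fun lam : Nat.Partition N => Multiset.card lam.parts = t)) => redHL lam.parts)
    (fun (m : Multiset ℕ)
      (hm : m ∈ (PFhl (N - t)).filter (fun m => Multiset.card m ≤ t)) =>
      (⟨m.map (fun i => i + 1) + Multiset.replicate (t - Multiset.card m) 1,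
        by
          intro i hi
          rcases Multiset.mem_add.mp hi with h | h
          · obtain ⟨x, _, rfl⟩ := Multiset.mem_map.mp h; omega
          · rw [Multiset.eq_of_mem_replicate h]; omega,
        by
          have hm' := Finset.mem_filter.mp hm
          obtain ⟨hsum, hpos⟩ := mem_PFhl.mp hm'.1
          have hct : Multiset.card m ≤ t := hm'.2
          rw [Multiset.sum_add, sum_map_add_one, hsum, Multiset.sum_replicate, smul_eq_mul,
            mul_one]
          omega⟩ : Nat.Partition N))
  case hi =>
    intro lam hlam
    have hcard : Multiset.card lam.parts = t := (Finset.mem_filter.mp hlam).2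
    have hpos : ∀ i ∈ lam.parts, 0 < i := fun i hi => lam.parts_pos hi
    rw [Finset.mem_filter]
    constructor
    · rw [mem_PFhl]
      refine ⟨?_, fun i hi => pos_redHL hi⟩
      have := sum_redHL lam.parts hpos
      rw [lam.parts_sum, hcard] at this
      omega
    · have := card_redHL lam.parts hpos
      omega
  case hj =>
    intro m hm
    have hm' := Finset.mem_filter.mp hm
    obtain ⟨hsum, hpos⟩ := mem_PFhl.mp hm'.1
    rw [Finset.mem_filter]
    refine ⟨Finset.mem_univ _, ?_⟩
    simp only [Multiset.card_add, Multiset.card_map, Multiset.card_replicate]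
    omega
  case left_neg =>
    intro lam hlam
    have hcard : Multiset.card lam.parts = t := (Finset.mem_filter.mp hlam).2
    have hpos : ∀ i ∈ lam.parts, 0 < i := fun i hi => lam.parts_pos hi
    apply Nat.Partition.ext
    have hdec := decomp_redHL lam.parts hpos
    have hcr := card_redHL lam.parts hpos
    have h1 : t - Multiset.card (redHL lam.parts) = lam.parts.count 1 := by omega
    simp only [h1]
    exact hdec
  case right_neg =>
    intro m hm
    have hm' := Finset.mem_filter.mp hm
    obtain ⟨hsum, hpos⟩ := mem_PFhl.mp hm'.1
    simp only [redHL, Multiset.filter_add]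
    have h1 : Multiset.filter (fun i => 2 ≤ i) (Multiset.replicate (t - Multiset.card m) 1)
        = 0 := by
      rw [Multiset.filter_eq_nil]
      intro a ha
      rw [Multiset.eq_of_mem_replicate ha]
      omega
    have h2 : Multiset.filter (fun i => 2 ≤ i) (m.map (fun i => i + 1))
        = m.map (fun i => i + 1) := by
      rw [Multiset.filter_eq_self]
      intro a ha
      obtain ⟨x, hx, rfl⟩ := Multiset.mem_map.mp ha
      have := hpos x hx
      omega
    rw [h1, h2, add_zero, Multiset.map_map]
    conv_rhs => rw [← Multiset.map_id m]
    apply Multiset.map_congr rfl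
    intro x hx
    simp only [Function.comp_apply, id]
    omega
  case h =>
    intro lam hlam
    rfl


/-- For coprime `q ≤ r` and `N = rP + 1`, for every `0 ≤ t ≤ N`, the sum of
`w(λ)·M(λ)` over partitions `λ` of `N` with exactly `t` parts equals `C((r−q)P, N − t)`.
(Under the Haldane measure, the number of occupied states is hypergeometric with
parameters `K`, `K+(r−q)P` and `N`.) -/
theorem stmt2 (q r P N : ℕ) (hq : 1 ≤ q) (hqr : q ≤ r) (hcop : Nat.Coprime q r)
    (hN : N = r * P + 1) (t : ℕ) (ht : t ≤ N) :
    ∑ lam ∈ Finset.univ.filter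
        (fun lam : Nat.Partition N => Multiset.card lam.parts = t),
      haldaneWeight q r P N lam * multiFactor N lam =
        (Nat.choose ((r - q) * P) (N - t) : ℚ) := by
  have hN1 : 1 ≤ N := by omega
  rw [Finset.sum_congr rfl (fun lam _ => weight_eq q r P N hN1 lam)]
  rw [sum_reduce q r P N t hN1 ht]
  rw [Finset.sum_subset (Finset.filter_subset _ _) (fun m hm hnm => by
    apply vanish q r P N t hq hqr hN ht m hm
    by_contra hc
    exact hnm (Finset.mem_filter.mpr ⟨hm, by omega⟩))]
  exact main_identity (r - q) P (N - t)
end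

section
/- Let q, r be coprime integers with 1 ≤ q ≤ r, let P ≥ 0, N = rP+1, and K ≥ 1. Then, as an identity of rational numbers, (K + (r−q)P) · Σ_{λ ⊢ N} ℓ(λ) · w(λ) · M(λ) · C(K, ℓ(λ)) = N · K · C(K + (r−q)P, N). Equivalently, the mean number of occupied states under the Haldane probability measure is ⟨ℓ⟩ = N·K / (K + (r−q)P) whenever C(K+(r−q)P, N) ≠ 0. -/
open Finset

namespace Stmt3Aux
open Polynomial Finset


noncomputable def gP (s : ℕ) : Polynomial ℚ := Polynomial.X * ((1 + Polynomial.X) ^ s - 1)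

lemma gP_coeff_zero (s : ℕ) : (gP s).coeff 0 = 0 := by
  simp [gP]

lemma gP_coeff_succ (s i : ℕ) :
    (gP s).coeff (i + 1) = (Nat.choose s i : ℚ) - if i = 0 then 1 else 0 := by
  rw [gP, coeff_X_mul, coeff_sub, show (1 + X : ℚ[X]) = X + 1 by ring, coeff_X_add_one_pow,
    coeff_one]

lemma gP_coeff_one (s : ℕ) : (gP s).coeff 1 = 0 := by
  simpa using gP_coeff_succ s 0

lemma gP_coeff_two_le (s i : ℕ) (h : 2 ≤ i) : (gP s).coeff i = (Nat.choose s (i-1) : ℚ) := by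
  obtain ⟨j, rfl⟩ : ∃ j, i = j + 1 := ⟨i - 1, by omega⟩
  rw [gP_coeff_succ]
  have : j ≠ 0 := by omega
  simp [this]

lemma gP_coeff_large (s i : ℕ) (h : s + 1 < i) : (gP s).coeff i = 0 := by
  rw [gP_coeff_two_le s i (by omega), Nat.choose_eq_zero_of_lt (by omega)]
  simp

noncomputable def mq (S : Multiset ℕ) : ℚ :=
  (Nat.factorial (Multiset.card S) : ℚ) / ∏ i ∈ S.toFinset, (Nat.factorial (S.count i) : ℚ)

noncomputable def VW (s : ℕ) (S : Multiset ℕ) : ℚ :=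
  mq S * (S.map fun i => (gP s).coeff i).prod

lemma mq_eq_of_subset (S : Multiset ℕ) {T : Finset ℕ} (h : S.toFinset ⊆ T) :
    mq S = (Nat.factorial (Multiset.card S) : ℚ) / ∏ i ∈ T, (Nat.factorial (S.count i) : ℚ) := by
  rw [mq]
  congr 1
  refine Finset.prod_subset h ?_
  intro x _ hx
  have : S.count x = 0 := Multiset.count_eq_zero.2 (fun hm => hx (Multiset.mem_toFinset.2 hm))
  simp [this, Nat.factorial]

lemma prod_fact_ne_zero (S : Multiset ℕ) (T : Finset ℕ) :
    (∏ i ∈ T, (Nat.factorial (S.count i) : ℚ)) ≠ 0 := by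
  refine Finset.prod_ne_zero_iff.2 fun i _ => ?_
  exact_mod_cast Nat.factorial_ne_zero _



lemma mq_erase {S : Multiset ℕ} {i : ℕ} (hi : i ∈ S) :
    mq (S.erase i) = (S.count i : ℚ) / (Multiset.card S : ℚ) * mq S := by
  classical
  have hsub : (S.erase i).toFinset ⊆ S.toFinset :=
    Multiset.toFinset_subset.2 (Multiset.subset_of_le (Multiset.erase_le i S))
  have hiT : i ∈ S.toFinset := Multiset.mem_toFinset.2 hi
  have hprod : ∏ j ∈ S.toFinset, (Nat.factorial ((S.erase i).count j) : ℚ)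
      = (Nat.factorial (S.count i - 1) : ℚ) *
        ∏ j ∈ S.toFinset.erase i, (Nat.factorial (S.count j) : ℚ) := by
    rw [← Finset.mul_prod_erase _ _ hiT, Multiset.count_erase_self]
    congr 1
    refine Finset.prod_congr rfl fun j hj => ?_
    rw [Multiset.count_erase_of_ne (Finset.ne_of_mem_erase hj)]
  have hprod2 : ∏ j ∈ S.toFinset, (Nat.factorial (S.count j) : ℚ)
      = (Nat.factorial (S.count i) : ℚ) *
        ∏ j ∈ S.toFinset.erase i, (Nat.factorial (S.count j) : ℚ) :=
    (Finset.mul_prod_erase _ _ hiT).symm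
  have hcard : Multiset.card (S.erase i) = Multiset.card S - 1 :=
    Multiset.card_erase_of_mem hi
  have hcpos : 0 < Multiset.card S := Multiset.card_pos.2 (by rintro rfl; simp at hi)
  have hcnt : 0 < S.count i := Multiset.count_pos.2 hi
  have e1 : (Multiset.card S : ℚ) * (Nat.factorial (Multiset.card S - 1) : ℚ)
      = (Nat.factorial (Multiset.card S) : ℚ) := by
    exact_mod_cast congrArg (Nat.cast (R := ℚ)) (Nat.mul_factorial_pred hcpos.ne')
  have e2 : (S.count i : ℚ) * (Nat.factorial (S.count i - 1) : ℚ)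
      = (Nat.factorial (S.count i) : ℚ) := by
    exact_mod_cast congrArg (Nat.cast (R := ℚ)) (Nat.mul_factorial_pred hcnt.ne')
  rw [Stmt3Aux.mq, Stmt3Aux.mq]
  -- rewrite the erase-denominator over S.toFinset
  have : ∏ j ∈ (S.erase i).toFinset, (Nat.factorial ((S.erase i).count j) : ℚ)
      = ∏ j ∈ S.toFinset, (Nat.factorial ((S.erase i).count j) : ℚ) := by
    refine Finset.prod_subset hsub (fun x _ hx => ?_)
    have h0 : (S.erase i).count x = 0 := Multiset.count_eq_zero.2
      (fun hm => hx (Multiset.mem_toFinset.2 hm))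
    rw [h0]
    norm_num
  rw [this, hprod, hcard, hprod2]
  have hR := prod_fact_ne_zero S (S.toFinset.erase i)
  have hc0 : (Multiset.card S : ℚ) ≠ 0 := by exact_mod_cast hcpos.ne'
  have hf1 : (Nat.factorial (S.count i - 1) : ℚ) ≠ 0 := by
    exact_mod_cast Nat.factorial_ne_zero _
  field_simp
  rw [← e1, ← e2]
  ring

lemma VW_erase_sum {s : ℕ} {S : Multiset ℕ} (hS : S ≠ 0) :
    ∑ i ∈ S.toFinset, (gP s).coeff i * VW s (S.erase i) = VW s S := by
  classical
  have hcpos : 0 < Multiset.card S := Multiset.card_pos.2 hS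
  have hc0 : (Multiset.card S : ℚ) ≠ 0 := by exact_mod_cast hcpos.ne'
  have step : ∀ i ∈ S.toFinset, (gP s).coeff i * VW s (S.erase i)
      = (S.count i : ℚ) / (Multiset.card S : ℚ) * VW s S := by
    intro i hiT
    have hi : i ∈ S := Multiset.mem_toFinset.1 hiT
    rw [VW, VW, mq_erase hi]
    have : (gP s).coeff i * (Multiset.map (fun j => (gP s).coeff j) (S.erase i)).prod
        = (Multiset.map (fun j => (gP s).coeff j) S).prod := Multiset.prod_map_erase hi
    rw [← this]
    ring
  rw [Finset.sum_congr rfl step, ← Finset.sum_mul, ← Finset.sum_div]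
  have : ∑ i ∈ S.toFinset, (S.count i : ℚ) = (Multiset.card S : ℚ) := by
    rw [← Nat.cast_sum]
    exact_mod_cast congrArg (Nat.cast (R := ℚ)) (Multiset.toFinset_sum_count_eq S)
  rw [this, div_self hc0, one_mul]



def addPart {n u : ℕ} (hu : 1 ≤ u) (hun : u ≤ n) (ν : Nat.Partition (n - u)) :
    Nat.Partition n where
  parts := u ::ₘ ν.parts
  parts_pos := by
    intro i hi
    rcases Multiset.mem_cons.1 hi with rfl | h
    · exact hu
    · exact ν.parts_pos h
  parts_sum := by rw [Multiset.sum_cons, ν.parts_sum]; omega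

def removePart {n : ℕ} (lam : Nat.Partition n) {i : ℕ} (hi : i ∈ lam.parts) :
    Nat.Partition (n - i) where
  parts := lam.parts.erase i
  parts_pos := fun h => lam.parts_pos (Multiset.mem_of_mem_erase h)
  parts_sum := by
    have h1 : i + (lam.parts.erase i).sum = n := by
      rw [← Multiset.sum_cons, Multiset.cons_erase hi, lam.parts_sum]
    omega

lemma sigma_part_ext {n : ℕ} {x y : Σ u : ℕ, Nat.Partition (n - u)}
    (h1 : x.1 = y.1) (h2 : x.2.parts = y.2.parts) : x = y := by
  obtain ⟨u, ν⟩ := x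
  obtain ⟨u', ν'⟩ := y
  cases h1
  cases Nat.Partition.ext h2
  rfl

lemma sigma_part_ext2 {n : ℕ} {x y : Σ _lam : Nat.Partition n, ℕ}
    (h1 : x.1.parts = y.1.parts) (h2 : x.2 = y.2) : x = y := by
  obtain ⟨lam, i⟩ := x
  obtain ⟨lam', i'⟩ := y
  cases Nat.Partition.ext h1
  cases h2
  rfl

lemma mem_Icc_of_mem_parts {n i : ℕ} (lam : Nat.Partition n) (hi : i ∈ lam.parts) :
    i ∈ Finset.Icc 1 n := by
  refine Finset.mem_Icc.2 ⟨lam.parts_pos hi, ?_⟩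
  conv_rhs => rw [← lam.parts_sum]
  exact Multiset.single_le_sum (fun x _ => Nat.zero_le x) i hi

lemma core (s : ℕ) : ∀ m n : ℕ,
    ∑ μ ∈ Finset.univ.filter (fun μ : Nat.Partition n => Multiset.card μ.parts = m),
      VW s μ.parts = (gP s ^ m).coeff n := by
  intro m
  induction m with
  | zero =>
    intro n
    rw [pow_zero]
    rcases Nat.eq_zero_or_pos n with rfl | hn
    · rw [coeff_one]
      simp only [if_pos rfl]
      have huniv : (Finset.univ : Finset (Nat.Partition 0)) = {default} := by
        apply Finset.eq_singleton_iff_unique_mem.2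
        exact ⟨Finset.mem_univ _, fun x _ => Subsingleton.elim x default⟩
      have hd : (default : Nat.Partition 0).parts = 0 := by
        have := (default : Nat.Partition 0).parts_sum
        by_contra h
        obtain ⟨a, ha⟩ := Multiset.exists_mem_of_ne_zero h
        have := (default : Nat.Partition 0).parts_pos ha
        have hle := Multiset.single_le_sum (fun x _ => Nat.zero_le x) a ha
        omega
      rw [huniv]
      rw [Finset.filter_singleton]
      rw [if_pos (by rw [hd]; rfl)]
      rw [Finset.sum_singleton, VW, mq, hd]
      simp
    · rw [coeff_one, if_neg (by omega)]
      apply Finset.sum_eq_zero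
      intro μ hμ
      exfalso
      have hc := (Finset.mem_filter.1 hμ).2
      have h0 : μ.parts = 0 := Multiset.card_eq_zero.1 hc
      have hs := μ.parts_sum
      rw [h0, Multiset.sum_zero] at hs
      omega
  | succ m ih =>
    intro n
    have expand : (gP s ^ (m+1)).coeff n
        = ∑ u ∈ Finset.range (n+1), (gP s).coeff u * (gP s ^ m).coeff (n - u) := by
      rw [pow_succ, mul_comm, coeff_mul]
      rw [Finset.Nat.sum_antidiagonal_eq_sum_range_succ (fun a b => (gP s).coeff a * (gP s ^ m).coeff b)]
    rw [expand]
    have shrink : ∑ u ∈ Finset.range (n+1), (gP s).coeff u * (gP s ^ m).coeff (n - u)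
        = ∑ u ∈ Finset.Icc 1 n, (gP s).coeff u * (gP s ^ m).coeff (n - u) := by
      refine (Finset.sum_subset ?_ ?_).symm
      · intro u hu
        rw [Finset.mem_Icc] at hu
        exact Finset.mem_range.2 (by omega)
      · intro u hu hnot
        have : u = 0 := by
          rw [Finset.mem_range] at hu
          rw [Finset.mem_Icc] at hnot
          omega
        rw [this, gP_coeff_zero]
        ring
    rw [shrink]
    have inner : ∀ u ∈ Finset.Icc 1 n, (gP s).coeff u * (gP s ^ m).coeff (n - u)
        = ∑ ν ∈ Finset.univ.filter
            (fun ν : Nat.Partition (n - u) => Multiset.card ν.parts = m),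
            (gP s).coeff u * VW s ν.parts := by
      intro u _
      rw [← ih (n - u), Finset.mul_sum]
    rw [Finset.sum_congr rfl inner]
    rw [Finset.sum_sigma' (Finset.Icc 1 n)
      (fun u => Finset.univ.filter (fun ν : Nat.Partition (n - u) => Multiset.card ν.parts = m))
      (fun u ν => (gP s).coeff u * VW s ν.parts)]
    rw [show (∑ μ ∈ Finset.univ.filter
        (fun μ : Nat.Partition n => Multiset.card μ.parts = m + 1), VW s μ.parts)
      = ∑ μ ∈ Finset.univ.filter
        (fun μ : Nat.Partition n => Multiset.card μ.parts = m + 1),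
          ∑ i ∈ μ.parts.toFinset, (gP s).coeff i * VW s (μ.parts.erase i) from
      Finset.sum_congr rfl (fun μ hμ => (VW_erase_sum (by
        have hc := (Finset.mem_filter.1 hμ).2
        intro h0
        rw [h0] at hc
        simp at hc)).symm)]
    rw [← Finset.sum_sigma (Finset.univ.filter
        (fun μ : Nat.Partition n => Multiset.card μ.parts = m + 1))
      (fun μ => μ.parts.toFinset)
      (fun y => (gP s).coeff y.2 * VW s (y.1.parts.erase y.2))]
    symm
    refine Finset.sum_bij'
      (fun (x : Σ u : ℕ, Nat.Partition (n - u)) hx =>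
        (⟨addPart (Finset.mem_Icc.1 (Finset.mem_sigma.1 hx).1).1
            (Finset.mem_Icc.1 (Finset.mem_sigma.1 hx).1).2 x.2, x.1⟩ :
          Σ _lam : Nat.Partition n, ℕ))
      (fun (y : Σ _lam : Nat.Partition n, ℕ) hy =>
        (⟨y.2, removePart y.1 (Multiset.mem_toFinset.1 (Finset.mem_sigma.1 hy).2)⟩ :
          Σ u : ℕ, Nat.Partition (n - u)))
      ?_ ?_ ?_ ?_ ?_
    · -- hi
      intro x hx
      rw [Finset.mem_sigma]
      constructor
      · rw [Finset.mem_filter]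
        refine ⟨Finset.mem_univ _, ?_⟩
        have hc := (Finset.mem_filter.1 (Finset.mem_sigma.1 hx).2).2
        show Multiset.card (x.1 ::ₘ x.2.parts) = m + 1
        rw [Multiset.card_cons, hc]
      · exact Multiset.mem_toFinset.2 (Multiset.mem_cons_self _ _)
    · -- hj
      intro y hy
      have hmem : y.2 ∈ y.1.parts := Multiset.mem_toFinset.1 (Finset.mem_sigma.1 hy).2
      rw [Finset.mem_sigma]
      constructor
      · exact mem_Icc_of_mem_parts y.1 hmem
      · rw [Finset.mem_filter]
        refine ⟨Finset.mem_univ _, ?_⟩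
        show Multiset.card (y.1.parts.erase y.2) = m
        rw [Multiset.card_erase_of_mem hmem]
        have hc := (Finset.mem_filter.1 (Finset.mem_sigma.1 hy).1).2
        rw [hc]
        rfl
    · -- left inverse
      intro x hx
      exact sigma_part_ext rfl (Multiset.erase_cons_head _ _)
    · -- right inverse
      intro y hy
      have hmem : y.2 ∈ y.1.parts := Multiset.mem_toFinset.1 (Finset.mem_sigma.1 hy).2
      exact sigma_part_ext2 (Multiset.cons_erase hmem) rfl
    · -- values
      intro x hx
      show (gP s).coeff x.1 * VW s x.2.parts
        = (gP s).coeff x.1 * VW s ((x.1 ::ₘ x.2.parts).erase x.1)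
      rw [Multiset.erase_cons_head]

lemma card_parts_le {n : ℕ} (p : Nat.Partition n) : Multiset.card p.parts ≤ n := by
  conv_rhs => rw [← p.parts_sum]
  simpa using Multiset.card_nsmul_le_sum (fun x hx => p.parts_pos hx)

lemma grouped (s n : ℕ) (c : ℕ → ℚ) :
    ∑ μ : Nat.Partition n, c (Multiset.card μ.parts) * VW s μ.parts
      = ∑ m ∈ Finset.range (n+1), c m * (gP s ^ m).coeff n := by
  rw [← Finset.sum_fiberwise_of_maps_to
    (fun μ _ => Finset.mem_range.2 (Nat.lt_succ_of_le (card_parts_le μ)))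
    (fun μ => c (Multiset.card μ.parts) * VW s μ.parts)]
  refine Finset.sum_congr rfl fun m _ => ?_
  rw [← core s m n, Finset.mul_sum]
  refine Finset.sum_congr rfl fun μ hμ => ?_
  rw [(Finset.mem_filter.1 hμ).2]

-- the k₁-split bijection
def ones (S : Multiset ℕ) : ℕ := S.count 1
def big (S : Multiset ℕ) : Multiset ℕ := S.filter (fun x => x ≠ 1)

lemma big_count_ne {S : Multiset ℕ} {j : ℕ} (h : j ≠ 1) : (big S).count j = S.count j := by
  rw [big, Multiset.count_filter, if_pos h]
lemma big_count_one (S : Multiset ℕ) : (big S).count 1 = 0 := by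
  rw [big, Multiset.count_filter]; simp
lemma big_add (S : Multiset ℕ) : big S + Multiset.replicate (ones S) 1 = S := by
  rw [big, ones, ← Multiset.filter_eq' S 1,
    show Multiset.filter (fun x => x = 1) S = Multiset.filter (fun a => ¬ a ≠ 1) S from
      Multiset.filter_congr (fun x _ => by simp)]
  exact Multiset.filter_add_not _ S
lemma big_card (S : Multiset ℕ) : Multiset.card (big S) = Multiset.card S - ones S := by
  have := congrArg (Multiset.card) (big_add S)
  rw [Multiset.card_add, Multiset.card_replicate] at this
  omega
lemma big_sum (S : Multiset ℕ) : (big S).sum = S.sum - ones S := by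
  have := congrArg (Multiset.sum) (big_add S)
  rw [Multiset.sum_add, Multiset.sum_replicate, smul_eq_mul, mul_one] at this
  omega
lemma ones_le_card (S : Multiset ℕ) : ones S ≤ Multiset.card S := Multiset.count_le_card _ _

def bigPartition {N : ℕ} (lam : Nat.Partition N) : Nat.Partition (N - ones lam.parts) where
  parts := big lam.parts
  parts_pos := fun h => lam.parts_pos (Multiset.mem_of_mem_filter h)
  parts_sum := by rw [big_sum, lam.parts_sum]

lemma ones_le_sum {N : ℕ} (lam : Nat.Partition N) : ones lam.parts ≤ N := by
  calc ones lam.parts ≤ Multiset.card lam.parts := ones_le_card _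
  _ ≤ N := card_parts_le lam

def combinePartition {N k : ℕ} (hk : k ≤ N) (μ : Nat.Partition (N - k)) : Nat.Partition N where
  parts := μ.parts + Multiset.replicate k 1
  parts_pos := by
    intro i hi
    rcases Multiset.mem_add.1 hi with h | h
    · exact μ.parts_pos h
    · rw [Multiset.eq_of_mem_replicate h]; omega
  parts_sum := by
    rw [Multiset.sum_add, Multiset.sum_replicate, smul_eq_mul, mul_one, μ.parts_sum]
    omega

lemma split_bij {N : ℕ} (hN : 1 ≤ N) (F : ℕ → Multiset ℕ → ℚ)
    (hF0 : ∀ k (S : Multiset ℕ), S.count 1 ≠ 0 → F k S = 0) :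
    ∑ lam : Nat.Partition N, F (ones lam.parts) (big lam.parts)
      = ∑ k ∈ Finset.range (N + 1), ∑ μ : Nat.Partition (N - k), F k μ.parts := by
  rw [Finset.sum_sigma' (Finset.range (N+1))
    (fun k => (Finset.univ : Finset (Nat.Partition (N - k))))
    (fun k μ => F k μ.parts)]
  symm
  refine Finset.sum_bij_ne_zero
    (fun (x : Σ _k : ℕ, Nat.Partition (N - _k)) hx hne =>
      combinePartition (Nat.lt_succ_iff.1 (Finset.mem_range.1 (Finset.mem_sigma.1 hx).1)) x.2)
    ?_ ?_ ?_ ?_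
  · intro x hx hne
    exact Finset.mem_univ _
  · -- injectivity
    intro x1 h11 h12 x2 h21 h22 heq
    have hk1 : x1.2.parts.count 1 = 0 := by
      by_contra hc
      exact h12 (hF0 _ _ hc)
    have hk2 : x2.2.parts.count 1 = 0 := by
      by_contra hc
      exact h22 (hF0 _ _ hc)
    have hparts := congrArg (fun lam : Nat.Partition N => lam.parts) heq
    simp only [combinePartition] at hparts
    -- counts of 1 determine k
    have hcount := congrArg (Multiset.count 1) hparts
    rw [Multiset.count_add, Multiset.count_add, Multiset.count_replicate,
      Multiset.count_replicate, hk1, hk2] at hcount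
    simp at hcount
    obtain ⟨k1, μ1⟩ := x1
    obtain ⟨k2, μ2⟩ := x2
    simp only at hcount hparts
    cases hcount
    have : μ1.parts = μ2.parts := add_right_cancel hparts
    cases Nat.Partition.ext this
    rfl
  · -- surjectivity
    intro lam _ hne
    refine ⟨⟨ones lam.parts, bigPartition lam⟩, ?_, ?_, ?_⟩
    · rw [Finset.mem_sigma]
      exact ⟨Finset.mem_range.2 (Nat.lt_succ_of_le (ones_le_sum lam)), Finset.mem_univ _⟩
    · -- value nonzero
      show F (ones lam.parts) (bigPartition lam).parts ≠ 0
      exact hne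
    · -- maps back to lam
      apply Nat.Partition.ext
      show (bigPartition lam).parts + Multiset.replicate (ones lam.parts) 1 = lam.parts
      exact big_add lam.parts
  · -- values agree
    intro x hx hne
    show F x.1 x.2.parts = F (ones (combinePartition _ x.2).parts) (big (combinePartition _ x.2).parts)
    have hk : x.2.parts.count 1 = 0 := by
      by_contra hc
      exact hne (hF0 _ _ hc)
    have h1 : ones (combinePartition (Nat.lt_succ_iff.1 (Finset.mem_range.1 (Finset.mem_sigma.1 hx).1)) x.2).parts = x.1 := by
      show (x.2.parts + Multiset.replicate x.1 1).count 1 = x.1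
      rw [Multiset.count_add, Multiset.count_replicate, hk]
      simp
    have h2 : big (combinePartition (Nat.lt_succ_iff.1 (Finset.mem_range.1 (Finset.mem_sigma.1 hx).1)) x.2).parts = x.2.parts := by
      show (x.2.parts + Multiset.replicate x.1 1).filter (fun x => x ≠ 1) = x.2.parts
      rw [Multiset.filter_add]
      rw [Multiset.filter_eq_self.2 (fun a ha => by
        intro h1'
        rw [h1'] at ha
        exact absurd (Multiset.count_pos.2 ha) (by omega))]
      rw [Multiset.filter_eq_nil.2 (fun a ha => by
        rw [Multiset.eq_of_mem_replicate ha]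
        simp)]
      simp
    rw [h1, h2]

def cc (P K k m : ℕ) : ℚ :=
  ((k + m : ℕ) : ℚ) * (Nat.choose P m : ℚ) * (Nat.choose K (k + m) : ℚ)

lemma step1 (q r P K N : ℕ) (hN : 1 ≤ N) (lam : Nat.Partition N) :
    (Multiset.card lam.parts : ℚ) * haldaneWeight q r P N lam * multiFactor N lam *
      (Nat.choose K (Multiset.card lam.parts) : ℚ)
    = cc P K (ones lam.parts) (Multiset.card lam.parts - ones lam.parts) *
      VW (r - q) (big lam.parts) := by
  classical
  set s := r - q with hs
  by_cases h : ∀ i ∈ lam.parts, i ≤ s + 1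
  · rw [haldaneWeight, if_pos h, multiFactor, cc, VW]
    simp only [ones]
    set L := Multiset.card lam.parts with hL
    set k := lam.parts.count 1 with hk
    have hkL : k ≤ L := Multiset.count_le_card _ _
    set m := L - k with hm
    -- product identity
    have hbigsub : (big lam.parts).toFinset ⊆ Finset.Icc 1 (s+1) := by
      intro i hi
      rw [Multiset.mem_toFinset] at hi
      have hmem : i ∈ lam.parts := Multiset.mem_of_mem_filter hi
      exact Finset.mem_Icc.2 ⟨lam.parts_pos hmem, h i hmem⟩
    have prodA : ((big lam.parts).map fun i => (gP s).coeff i).prod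
        = ∏ j ∈ Finset.range (s + 1), ((Nat.choose s j : ℚ)) ^ (lam.parts.count (j + 1)) := by
      rw [Finset.prod_multiset_map_count]
      rw [Finset.prod_subset hbigsub (fun x _ hx => by
        have h0 : (big lam.parts).count x = 0 := Multiset.count_eq_zero.2
          (fun hm' => hx (Multiset.mem_toFinset.2 hm'))
        rw [h0, pow_zero])]
      rw [show Finset.Icc 1 (s+1) = Finset.Ico 1 (s+2) from (Finset.Ico_add_one_right_eq_Icc 1 (s+1)).symm]
      rw [Finset.prod_Ico_eq_prod_range]
      refine Finset.prod_congr (by norm_num) fun j _ => ?_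
      rcases Nat.eq_zero_or_pos j with rfl | hj
      · rw [big_count_one]
        simp
      · rw [show 1 + j = j + 1 by omega, big_count_ne (by omega),
          gP_coeff_two_le s (j+1) (by omega)]
        simp
    rw [prodA]
    -- factorial identity
    have hfact : ∏ i ∈ Finset.Icc 1 N, (Nat.factorial (lam.parts.count i) : ℚ)
        = (Nat.factorial k : ℚ) *
          ∏ i ∈ Finset.Icc 1 N, (Nat.factorial ((big lam.parts).count i) : ℚ) := by
      have h1N : (1 : ℕ) ∈ Finset.Icc 1 N := Finset.mem_Icc.2 ⟨le_refl 1, hN⟩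
      rw [← Finset.mul_prod_erase _ _ h1N, ← Finset.mul_prod_erase _ (fun i => (Nat.factorial ((big lam.parts).count i) : ℚ)) h1N]
      rw [big_count_one, Nat.factorial_zero, Nat.cast_one, one_mul]
      congr 1
      refine Finset.prod_congr rfl fun i hi => ?_
      rw [big_count_ne (Finset.ne_of_mem_erase hi)]
    rw [hfact]
    have hbigsub2 : (big lam.parts).toFinset ⊆ Finset.Icc 1 N := by
      intro i hi
      rw [Multiset.mem_toFinset] at hi
      have hmem : i ∈ lam.parts := Multiset.mem_of_mem_filter hi
      refine Finset.mem_Icc.2 ⟨lam.parts_pos hmem, ?_⟩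
      conv_rhs => rw [← lam.parts_sum]
      exact Multiset.single_le_sum (fun x _ => Nat.zero_le x) i hmem
    have hmq : mq (big lam.parts) = (Nat.factorial m : ℚ) /
        ∏ i ∈ Finset.Icc 1 N, (Nat.factorial ((big lam.parts).count i) : ℚ) := by
      rw [mq_eq_of_subset _ hbigsub2, big_card]
      simp only [ones]
      rfl
    rw [hmq]
    have hkm : k + m = L := by omega
    rw [hkm]
    rw [Nat.cast_choose ℚ hkL, ← hm]
    have hA := prod_fact_ne_zero (big lam.parts) (Finset.Icc 1 N)
    have hk0 : (Nat.factorial k : ℚ) ≠ 0 := by exact_mod_cast Nat.factorial_ne_zero _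
    have hm0 : (Nat.factorial m : ℚ) ≠ 0 := by exact_mod_cast Nat.factorial_ne_zero _
    have hL0 : (Nat.factorial L : ℚ) ≠ 0 := by exact_mod_cast Nat.factorial_ne_zero _
    field_simp
    ring
  · rw [haldaneWeight, if_neg h]
    push_neg at h
    obtain ⟨p, hp, hps⟩ := h
    have hp1 : p ≠ 1 := by omega
    have hpbig : p ∈ big lam.parts := Multiset.mem_filter.2 ⟨hp, hp1⟩
    have hz : ((big lam.parts).map fun i => (gP s).coeff i).prod = 0 := by
      apply Multiset.prod_eq_zero
      rw [← gP_coeff_large s p hps]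
      exact Multiset.mem_map_of_mem _ hpbig
    rw [VW, hz]
    ring

lemma gPow_coeff (s m j : ℕ) :
    (gP s ^ m).coeff j
      = if m ≤ j then (((1 + Polynomial.X : ℚ[X]) ^ s - 1) ^ m).coeff (j - m) else 0 := by
  rw [gP, mul_pow, mul_comm, Polynomial.coeff_mul_X_pow']

lemma e_natDegree (s : ℕ) : ((1 + Polynomial.X : ℚ[X]) ^ s - 1).natDegree ≤ s := by
  refine (Polynomial.natDegree_sub_le _ _).trans ?_
  have h2 : (1 + Polynomial.X : ℚ[X]).natDegree ≤ 1 := by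
    refine (Polynomial.natDegree_add_le _ _).trans ?_
    simp
  have h1 : ((1 + Polynomial.X : ℚ[X]) ^ s).natDegree ≤ s := by
    calc ((1 + Polynomial.X : ℚ[X]) ^ s).natDegree
        ≤ s * (1 + Polynomial.X : ℚ[X]).natDegree := Polynomial.natDegree_pow_le
      _ ≤ s * 1 := Nat.mul_le_mul_left s h2
      _ = s := Nat.mul_one s
  exact max_le h1 (by simp)

lemma epow_coeff_zero {s P N m v : ℕ} (hsP : (s+1)*P < N) (hm : m ≤ P) (hv : N - m < v) :
    (((1 + Polynomial.X : ℚ[X]) ^ s - 1) ^ m).coeff v = 0 := by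
  refine Polynomial.coeff_eq_zero_of_natDegree_lt ?_
  have h1 : (((1 + Polynomial.X : ℚ[X]) ^ s - 1) ^ m).natDegree ≤ m * s :=
    (Polynomial.natDegree_pow_le).trans (Nat.mul_le_mul_left m (e_natDegree s))
  have h2 : m * s ≤ P * s := Nat.mul_le_mul_right s hm
  have h3 : P * s + P < N := by
    have : (s+1)*P = P * s + P := by ring
    omega
  omega

lemma choose_shift {K t : ℕ} (hK : 1 ≤ K) :
    ((t + 1 : ℕ) : ℚ) * (Nat.choose K (t+1) : ℚ) = (K : ℚ) * (Nat.choose (K-1) t : ℚ) := by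
  have h := Nat.add_one_mul_choose_eq (K-1) t
  rw [show K - 1 + 1 = K by omega] at h
  have h2 := congrArg (Nat.cast (R := ℚ)) h
  push_cast at h2 ⊢
  linear_combination -h2

lemma analytic (s P K N : ℕ) (hK : 1 ≤ K) (hN1 : 1 ≤ N) (hsP : (s+1)*P < N) :
    ((K : ℚ) + ((s * P : ℕ) : ℚ)) *
      ∑ k ∈ Finset.range (N+1), ∑ m ∈ Finset.range (N+1),
        cc P K k m * ((gP s ^ m).coeff (N - k))
    = (N : ℚ) * (K : ℚ) * (Nat.choose (K + s * P) N : ℚ) := by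
  set e : ℚ[X] := (1 + Polynomial.X) ^ s - 1 with he
  have hPN : P < N := by nlinarith
  -- Step A: extract K
  have stepA : ∀ k ∈ Finset.range (N+1), ∀ m ∈ Finset.range (N+1),
      cc P K k m * ((gP s ^ m).coeff (N - k))
      = (K : ℚ) * ((Nat.choose P m : ℚ) * (Nat.choose (K-1) (k+m-1) : ℚ)
          * ((gP s ^ m).coeff (N - k))) := by
    intro k _ m _
    by_cases hkm : k + m = 0
    · obtain ⟨rfl, rfl⟩ : k = 0 ∧ m = 0 := by omega
      have : (gP s ^ 0).coeff (N - 0) = 0 := by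
        rw [pow_zero, Polynomial.coeff_one, if_neg (by omega)]
      rw [this]
      ring
    · obtain ⟨t, ht⟩ : ∃ t, k + m = t + 1 := ⟨k + m - 1, by omega⟩
      rw [cc, ht]
      simp only [Nat.add_sub_cancel]
      have key := choose_shift (K := K) (t := t) hK
      linear_combination ((Nat.choose P m : ℚ) * ((gP s ^ m).coeff (N - k))) * key
  rw [Finset.sum_congr rfl (fun k hk => Finset.sum_congr rfl (fun m hm => stepA k hk m hm))]
  simp only [← Finset.mul_sum]
  -- swap sums
  rw [Finset.sum_comm]
  -- Step C : inner sums
  have stepC : ∀ m ∈ Finset.range (N+1),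
      ∑ k ∈ Finset.range (N+1), (Nat.choose P m : ℚ) * (Nat.choose (K-1) (k+m-1) : ℚ)
        * ((gP s ^ m).coeff (N - k))
      = (Nat.choose P m : ℚ) * ((e ^ m * (1 + Polynomial.X) ^ (K-1)).coeff (N-1)) := by
    intro m _
    by_cases hmP : P < m
    · rw [Nat.choose_eq_zero_of_lt hmP]
      push_cast
      rw [Finset.sum_eq_zero (fun k _ => by ring)]
      ring
    push_neg at hmP
    have hmN : m ≤ N := by omega
    simp only [mul_assoc]
    rw [← Finset.mul_sum]
    congr 1
    -- I_m = J_m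
    have reflect := Finset.sum_range_reflect
      (fun k => (Nat.choose (K-1) (k+m-1) : ℚ) * ((gP s ^ m).coeff (N - k))) (N+1)
    simp only [Nat.add_sub_cancel] at reflect
    rw [← reflect]
    -- now summand at j is C(K-1, (N-j)+m-1) * coeff (N - (N-j))
    have e1 : ∀ j ∈ Finset.range (N+1),
        (Nat.choose (K-1) ((N-j)+m-1) : ℚ) * ((gP s ^ m).coeff (N - (N-j)))
        = if m ≤ j then ((e^m).coeff (j-m)) * (Nat.choose (K-1) (N-1-(j-m)) : ℚ) else 0 := by
      intro j hj
      have hjN : j ≤ N := by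
        rw [Finset.mem_range] at hj; omega
      rw [show N - (N - j) = j by omega]
      rw [gPow_coeff]
      by_cases hmj : m ≤ j
      · rw [if_pos hmj, if_pos hmj]
        rw [show (N-j)+m-1 = N-1-(j-m) by omega]
        rw [← he]
        ring
      · rw [if_neg hmj, if_neg hmj]
        ring
    rw [Finset.sum_congr rfl e1]
    rw [← Finset.sum_filter]
    rw [show (Finset.range (N+1)).filter (fun j => m ≤ j) = Finset.Ico m (N+1) by
      ext j
      simp only [Finset.mem_filter, Finset.mem_range, Finset.mem_Ico]
      omega]
    rw [Finset.sum_Ico_eq_sum_range]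
    simp only [Nat.add_sub_cancel_left]
    -- now LHS : ∑ v ∈ range (N+1-m), (e^m).coeff v * C(K-1, N-1-v)
    -- RHS : (e^m * (1+X)^(K-1)).coeff (N-1)
    rw [Polynomial.coeff_mul]
    rw [Finset.Nat.sum_antidiagonal_eq_sum_range_succ
      (fun a b => (e^m).coeff a * ((1 + Polynomial.X : ℚ[X]) ^ (K-1)).coeff b)]
    simp only [Nat.succ_eq_add_one]
    rw [show N - 1 + 1 = N by omega]
    have hcXp : ∀ v, ((1 + Polynomial.X : ℚ[X]) ^ (K-1)).coeff (N-1-v)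
        = (Nat.choose (K-1) (N-1-v) : ℚ) := by
      intro v
      rw [show (1 + Polynomial.X : ℚ[X]) = Polynomial.X + 1 from by ring,
        Polynomial.coeff_X_add_one_pow]
    simp only [hcXp]
    rcases Nat.eq_zero_or_pos m with rfl | hm1
    · rw [show N + 1 - 0 = N + 1 by omega, Finset.sum_range_succ]
      have : (e^0).coeff N = 0 := by
        rw [pow_zero, Polynomial.coeff_one, if_neg (by omega)]
      rw [this]
      simp
    · refine Finset.sum_subset ?_ ?_
      · intro v hv
        rw [Finset.mem_range] at *
        omega
      · intro v hv hnot
        rw [Finset.mem_range] at *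
        have : N - m < v := by omega
        rw [epow_coeff_zero hsP hmP this]
        ring
  rw [Finset.sum_congr rfl stepC]
  -- Step D : recombine as a single coefficient
  have stepD : ∑ m ∈ Finset.range (N+1),
      (Nat.choose P m : ℚ) * ((e ^ m * (1 + Polynomial.X) ^ (K-1)).coeff (N-1))
      = (Nat.choose (s*P + (K-1)) (N-1) : ℚ) := by
    have hD1 : ∑ m ∈ Finset.range (N+1),
        (Nat.choose P m : ℚ) * ((e ^ m * (1 + Polynomial.X) ^ (K-1)).coeff (N-1))
        = ((∑ m ∈ Finset.range (N+1),
            (Nat.choose P m : ℚ) • (e ^ m)) * (1 + Polynomial.X) ^ (K-1)).coeff (N-1) := by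
      rw [Finset.sum_mul]
      rw [Polynomial.finset_sum_coeff]
      refine Finset.sum_congr rfl fun m _ => ?_
      rw [smul_mul_assoc, Polynomial.coeff_smul, smul_eq_mul]
    rw [hD1]
    have hD2 : ∑ m ∈ Finset.range (N+1), (Nat.choose P m : ℚ) • (e ^ m)
        = ∑ m ∈ Finset.range (P+1), (Nat.choose P m : ℚ) • (e ^ m) := by
      refine (Finset.sum_subset ?_ ?_).symm
      · intro v hv
        rw [Finset.mem_range] at *
        omega
      · intro v _ hnot
        rw [Finset.mem_range] at hnot
        rw [Nat.choose_eq_zero_of_lt (by omega)]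
        simp
    rw [hD2]
    have hD3 : ∑ m ∈ Finset.range (P+1), (Nat.choose P m : ℚ) • (e ^ m) = (e + 1)^P := by
      rw [add_pow]
      refine Finset.sum_congr rfl fun m _ => ?_
      rw [one_pow, mul_one, mul_comm, ← Polynomial.C_eq_natCast, ← Polynomial.smul_eq_C_mul]
    rw [hD3, show e + 1 = (1 + Polynomial.X : ℚ[X])^s from by rw [he]; ring,
      ← pow_mul, ← pow_add]
    rw [show (1 + Polynomial.X : ℚ[X]) = Polynomial.X + 1 from by ring,
      Polynomial.coeff_X_add_one_pow]
  rw [stepD]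
  -- Step E : numerics
  have hnat : (K + s*P) * Nat.choose (s*P + (K-1)) (N-1) = N * Nat.choose (K + s*P) N := by
    have h := Nat.add_one_mul_choose_eq (K + s*P - 1) (N-1)
    rw [show K + s*P - 1 + 1 = K + s*P by omega, show N - 1 + 1 = N by omega] at h
    rw [show s*P + (K-1) = K + s*P - 1 by omega]
    rw [h]
    ring
  have : ((K + s*P) * Nat.choose (s*P + (K-1)) (N-1) : ℚ)
      = (N * Nat.choose (K + s*P) N : ℚ) := by exact_mod_cast congrArg (Nat.cast (R := ℚ)) hnat
  push_cast at this ⊢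
  linear_combination (K : ℚ) * this

end Stmt3Aux

/-- For coprime `q ≤ r`, `N = rP + 1` and `K ≥ 1`, as rational numbers:
`(K + (r−q)P) · Σ_{λ ⊢ N} ℓ(λ)·w(λ)·M(λ)·C(K, ℓ(λ)) = N·K·C(K + (r−q)P, N)`;
i.e. the Haldane-measure mean number of occupied states is `N·K / (K + (r−q)P)`. -/
theorem stmt3 (q r P K N : ℕ) (hq : 1 ≤ q) (hqr : q ≤ r) (hcop : Nat.Coprime q r)
    (hK : 1 ≤ K) (hN : N = r * P + 1) :
    ((K : ℚ) + ((r - q) * P : ℕ)) *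
        ∑ lam : Nat.Partition N,
          (Multiset.card lam.parts : ℚ) * haldaneWeight q r P N lam * multiFactor N lam *
            (Nat.choose K (Multiset.card lam.parts) : ℚ) =
      (N : ℚ) * (K : ℚ) * (Nat.choose (K + (r - q) * P) N : ℚ) := by
  have hN1 : 1 ≤ N := by omega
  have hsP : (r - q + 1) * P < N := by
    have h1 : (r - q + 1) * P ≤ r * P := Nat.mul_le_mul_right P (by omega)
    omega
  have h1 : ∀ lam : Nat.Partition N,
      (Multiset.card lam.parts : ℚ) * haldaneWeight q r P N lam * multiFactor N lam *
        (Nat.choose K (Multiset.card lam.parts) : ℚ)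
      = Stmt3Aux.cc P K (Stmt3Aux.ones lam.parts)
          (Multiset.card (Stmt3Aux.big lam.parts)) *
        Stmt3Aux.VW (r - q) (Stmt3Aux.big lam.parts) := by
    intro lam
    rw [Stmt3Aux.step1 q r P K N hN1 lam, ← Stmt3Aux.big_card]
  rw [Finset.sum_congr rfl (fun lam _ => h1 lam)]
  have hF0 : ∀ (k : ℕ) (S : Multiset ℕ), S.count 1 ≠ 0 →
      Stmt3Aux.cc P K k (Multiset.card S) * Stmt3Aux.VW (r - q) S = 0 := by
    intro k S hc
    have h1S : (1 : ℕ) ∈ S := by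
      rw [← Multiset.count_pos]
      omega
    have hz : (S.map fun i => (Stmt3Aux.gP (r - q)).coeff i).prod = 0 := by
      apply Multiset.prod_eq_zero
      rw [← Stmt3Aux.gP_coeff_one (r - q)]
      exact Multiset.mem_map_of_mem _ h1S
    rw [Stmt3Aux.VW, hz]
    ring
  rw [Stmt3Aux.split_bij hN1
    (fun k S => Stmt3Aux.cc P K k (Multiset.card S) * Stmt3Aux.VW (r - q) S) hF0]
  have h2 : ∀ k ∈ Finset.range (N + 1),
      ∑ mu : Nat.Partition (N - k),
        Stmt3Aux.cc P K k (Multiset.card mu.parts) * Stmt3Aux.VW (r - q) mu.parts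
      = ∑ m ∈ Finset.range (N + 1),
          Stmt3Aux.cc P K k m * ((Stmt3Aux.gP (r - q) ^ m).coeff (N - k)) := by
    intro k hk
    rw [Stmt3Aux.grouped (r - q) (N - k) (Stmt3Aux.cc P K k)]
    refine Finset.sum_subset ?_ ?_
    · intro m hm
      rw [Finset.mem_range] at *
      omega
    · intro m _ hnot
      rw [Finset.mem_range] at hnot
      rw [Stmt3Aux.gPow_coeff, if_neg (by omega)]
      ring
  rw [Finset.sum_congr rfl h2]
  exact Stmt3Aux.analytic (r - q) P K N hK hN1 hsP
end

section
/- Let q, r be coprime integers with 1 ≤ q ≤ r and let ρ be a real number with 0 < ρ < 1/q. For all sequences of positive integers (K_n), (P_n) with K_n → ∞ and P_n/K_n → ρ, setting N_n = rP_n + 1, the normalized mean number of occupied states under the Haldane probability measure with parameters (K_n, N_n) converges: (1/K_n) · Σ_{λ ⊢ N_n} ℓ(λ) ℙ_n(λ) → rρ / (1 + (r−q)ρ). -/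
open Finset

/-- The Haldane probability of a partition `λ` of `N`:
`ℙ(λ) = w(λ)·M(λ)·C(K, ℓ(λ)) / C(K+(r−q)P, N)`. -/
def haldaneProb (q r P K N : ℕ) (lam : Nat.Partition N) : ℚ :=
  haldaneWeight q r P N lam * multiFactor N lam *
      (Nat.choose K (Multiset.card lam.parts) : ℚ) /
    (Nat.choose (K + (r - q) * P) N : ℚ)


section Aux
open Polynomial


lemma gexp (s : ℕ) :
    ((1 + X : ℚ[X]))^s = 1 + ∑ j ∈ Icc 1 s, X^j * (Nat.choose s j : ℚ[X]) := by
  rw [add_comm (1 : ℚ[X]) X, add_pow]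
  have h0 : Finset.range (s+1) = insert 0 (Icc 1 s) := by
    ext x; simp [Finset.mem_range, Finset.mem_Icc]; omega
  rw [h0, Finset.sum_insert (by simp)]
  simp [one_pow]

lemma gm (s m : ℕ) :
    (∑ j ∈ Icc 1 s, X^j * (Nat.choose s j : ℚ[X]))^m =
    ∑ k ∈ piAntidiag (Icc 1 s) m,
      (Nat.multinomial (Icc 1 s) k : ℚ[X]) * (∏ j ∈ Icc 1 s, (Nat.choose s j : ℚ[X])^(k j)) *
        X^(∑ j ∈ Icc 1 s, j * k j) := by
  rw [Finset.sum_pow_eq_sum_piAntidiag]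
  refine Finset.sum_congr rfl fun k hk => ?_
  rw [mul_assoc]
  congr 1
  rw [Finset.prod_congr rfl (fun j (_ : j ∈ Icc 1 s) => by
        rw [mul_pow, ← pow_mul] : ∀ j ∈ Icc 1 s, (X^j * (Nat.choose s j : ℚ[X]))^(k j) = X^(j * k j) * (Nat.choose s j : ℚ[X])^(k j)),
      Finset.prod_mul_distrib, Finset.prod_pow_eq_pow_sum]
  ring

lemma keyPoly (s P K N : ℕ) (hsP : s * P + 1 ≤ N) (hN : 1 ≤ N) :
    ∑ m ∈ range (P+1), ∑ k ∈ piAntidiag (Icc 1 s) m,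
      ((Nat.choose P m : ℚ) * (Nat.multinomial (Icc 1 s) k : ℚ) *
        (∏ j ∈ Icc 1 s, (Nat.choose s j : ℚ)^(k j)) *
        (Nat.choose (K-1) (N - 1 - ∑ j ∈ Icc 1 s, j * k j) : ℚ))
    = (Nat.choose (s*P + (K-1)) (N-1) : ℚ) := by
  have main : ((1 + X : ℚ[X]))^(s*P + (K-1)) =
      ∑ m ∈ range (P+1), ∑ k ∈ piAntidiag (Icc 1 s) m,
        (Nat.choose P m : ℚ[X]) * (Nat.multinomial (Icc 1 s) k : ℚ[X]) *
          (∏ j ∈ Icc 1 s, (Nat.choose s j : ℚ[X])^(k j)) *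
          (X^(∑ j ∈ Icc 1 s, j * k j) * (1+X)^(K-1)) := by
    rw [pow_add, pow_mul, gexp,
      add_comm (1:ℚ[X]) (∑ j ∈ Icc 1 s, X^j * (Nat.choose s j : ℚ[X])), add_pow]
    rw [Finset.sum_mul]
    refine Finset.sum_congr rfl fun m hm => ?_
    rw [gm]
    simp only [Finset.sum_mul]
    refine Finset.sum_congr rfl fun k hk => ?_
    ring
  have hcoeff := congrArg (fun p => Polynomial.coeff p (N-1)) main
  simp only [coeff_one_add_X_pow] at hcoeff
  rw [eq_comm, hcoeff]
  rw [Polynomial.finset_sum_coeff]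
  refine Finset.sum_congr rfl fun m hm => ?_
  rw [Polynomial.finset_sum_coeff]
  refine Finset.sum_congr rfl fun k hk => ?_
  have hkm : ∑ j ∈ Icc 1 s, k j = m := (Finset.mem_piAntidiag.mp hk).1
  have ht : (∑ j ∈ Icc 1 s, j * k j) ≤ N - 1 := by
    have h1 : (∑ j ∈ Icc 1 s, j * k j) ≤ ∑ j ∈ Icc 1 s, s * k j := by
      refine Finset.sum_le_sum fun j hj => Nat.mul_le_mul_right _ (Finset.mem_Icc.mp hj).2
    rw [← Finset.mul_sum, hkm] at h1
    have hmP : m ≤ P := by have := Finset.mem_range.mp hm; omega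
    have h2 : s * m ≤ s * P := Nat.mul_le_mul_left _ hmP
    omega
  have ha : ((Nat.choose P m : ℚ[X]) * (Nat.multinomial (Icc 1 s) k : ℚ[X]) *
      (∏ j ∈ Icc 1 s, (Nat.choose s j : ℚ[X])^(k j))) =
      Polynomial.C ((Nat.choose P m : ℚ) * (Nat.multinomial (Icc 1 s) k : ℚ) *
        (∏ j ∈ Icc 1 s, (Nat.choose s j : ℚ)^(k j))) := by
    simp [map_mul, map_prod, map_pow, Polynomial.C_eq_natCast]
  rw [ha, Polynomial.coeff_C_mul]
  have hsplit : N - 1 = (N - 1 - (∑ j ∈ Icc 1 s, j * k j)) + (∑ j ∈ Icc 1 s, j * k j) := by omega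
  rw [hsplit, Polynomial.coeff_X_pow_mul, coeff_one_add_X_pow, Nat.add_sub_cancel]


lemma icc_split (s : ℕ) : Icc 1 (s+1) = insert 1 (Icc 2 (s+1)) := by
  ext x; simp [mem_Icc, mem_insert]; omega

lemma icc_shift_prod {M : Type*} [CommMonoid M] (s : ℕ) (f : ℕ → M) :
    ∏ a ∈ Icc 2 (s+1), f a = ∏ j ∈ Icc 1 s, f (j+1) := by
  have h2 : Icc 2 (s+1) = Finset.image (· + 1) (Icc 1 s) := by
    ext x; simp only [mem_Icc, Finset.mem_image]
    constructor
    · intro hx; exact ⟨x - 1, by omega, by omega⟩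
    · rintro ⟨y, hy, rfl⟩; omega
  rw [h2, Finset.prod_image (by intros a _ b _ h; dsimp only at h; omega)]

lemma icc_shift_sum {M : Type*} [AddCommMonoid M] (s : ℕ) (f : ℕ → M) :
    ∑ a ∈ Icc 2 (s+1), f a = ∑ j ∈ Icc 1 s, f (j+1) := by
  have h2 : Icc 2 (s+1) = Finset.image (· + 1) (Icc 1 s) := by
    ext x; simp only [mem_Icc, Finset.mem_image]
    constructor
    · intro hx; exact ⟨x - 1, by omega, by omega⟩
    · rintro ⟨y, hy, rfl⟩; omega
  rw [h2, Finset.sum_image (by intros a _ b _ h; dsimp only at h; omega)]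

lemma multiset_sum_count (T : Finset ℕ) (μ : Multiset ℕ) (h : ∀ a ∈ μ, a ∈ T) :
    μ.sum = ∑ a ∈ T, μ.count a * a := by
  induction μ using Multiset.induction_on with
  | empty => simp
  | cons a t ih =>
    have ha : a ∈ T := h a (Multiset.mem_cons_self a t)
    rw [Multiset.sum_cons, ih (fun x hx => h x (Multiset.mem_cons_of_mem hx))]
    simp only [Multiset.count_cons, add_mul, Finset.sum_add_distrib]
    rw [add_comm]
    congr 1
    rw [Finset.sum_congr rfl (fun x _ => by
      rw [ite_mul, one_mul, zero_mul] :
      ∀ x ∈ T, (if x = a then 1 else 0) * x = if x = a then x else 0)]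
    rw [Finset.sum_ite_eq' T a (fun x => x)]
    simp [ha]

lemma termA (q r P K N : ℕ) (hK : 1 ≤ K) (hsN : (r-q) + 1 ≤ N) (hN : 1 ≤ N)
    (lam : Nat.Partition N) (hparts : ∀ i ∈ lam.parts, i ≤ (r - q) + 1) :
    (Multiset.card lam.parts : ℚ) * (haldaneWeight q r P N lam * multiFactor N lam *
      (Nat.choose K (Multiset.card lam.parts) : ℚ)) =
    (K : ℚ) * ((Nat.choose P (∑ j ∈ Icc 1 (r-q), lam.parts.count (j+1)) : ℚ) *
      (Nat.multinomial (Icc 1 (r-q)) (fun j => lam.parts.count (j+1)) : ℚ) *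
      (∏ j ∈ Icc 1 (r-q), (Nat.choose (r-q) j : ℚ) ^ (lam.parts.count (j+1))) *
      (Nat.choose (K-1) (N - 1 - ∑ j ∈ Icc 1 (r-q), j * lam.parts.count (j+1)) : ℚ)) := by
  set s := r - q with hs
  set c1 := lam.parts.count 1 with hc1
  set m := ∑ j ∈ Icc 1 s, lam.parts.count (j+1) with hm
  set t := ∑ j ∈ Icc 1 s, j * lam.parts.count (j+1) with ht
  set ℓ := Multiset.card lam.parts with hℓ
  have hmemT : ∀ a ∈ lam.parts, a ∈ Icc 1 (s+1) := fun a ha =>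
    Finset.mem_Icc.mpr ⟨lam.parts_pos ha, hparts a ha⟩
  -- card = c1 + m
  have hcard : ℓ = c1 + m := by
    rw [hℓ, ← Multiset.sum_count_eq_card hmemT, icc_split, Finset.sum_insert (by simp),
      icc_shift_sum]
  -- N = c1 + m + t
  have hNsum : N = c1 + m + t := by
    have h0 := lam.parts_sum
    rw [multiset_sum_count (Icc 1 (s+1)) lam.parts hmemT, icc_split,
      Finset.sum_insert (by simp), icc_shift_sum] at h0
    rw [← h0, mul_one, hm, ht]
    rw [Finset.sum_congr rfl (fun j _ => by ring :
      ∀ j ∈ Icc 1 s, lam.parts.count (j+1) * (j+1) = lam.parts.count (j+1) + j * lam.parts.count (j+1))]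
    rw [Finset.sum_add_distrib]
    ring
  have hℓ1 : 1 ≤ ℓ := by
    by_contra h
    have : ℓ = 0 := by omega
    have hp0 : lam.parts = 0 := by
      rwa [hℓ, Multiset.card_eq_zero] at this
    have := lam.parts_sum
    rw [hp0] at this
    simp at this
    omega
  have hc1ℓ : c1 ≤ ℓ := by rw [hc1, hℓ]; exact Multiset.count_le_card 1 lam.parts
  -- unfold definitions
  simp only [haldaneWeight, multiFactor, if_pos hparts, ← hs, ← hc1, ← hℓ]
  have hm2 : ℓ - c1 = m := by omega
  have hPi : ∏ j ∈ range (s+1), ((s.choose j : ℚ)) ^ (Multiset.count (j+1) lam.parts)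
      = ∏ j ∈ Icc 1 s, ((s.choose j : ℚ)) ^ (Multiset.count (j+1) lam.parts) := by
    have h0 : range (s+1) = insert 0 (Icc 1 s) := by
      ext x; simp [Finset.mem_range, mem_Icc]; omega
    rw [h0, Finset.prod_insert (by simp)]
    simp
  have hprodQ : ∏ i ∈ Icc 1 N, (Nat.factorial (Multiset.count i lam.parts) : ℚ)
      = (Nat.factorial c1 : ℚ) * ∏ j ∈ Icc 1 s, (Nat.factorial (Multiset.count (j+1) lam.parts) : ℚ) := by
    have h1 : Icc 1 N = insert 1 (Icc 2 N) := by
      ext x; simp [mem_Icc, mem_insert]; omega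
    rw [h1, Finset.prod_insert (by simp)]
    congr 1
    rw [← icc_shift_prod s (fun a => (Nat.factorial (Multiset.count a lam.parts) : ℚ))]
    refine (Finset.prod_subset (Finset.Icc_subset_Icc_right hsN) fun x hx hx' => ?_).symm
    have hx1 : x ∈ Icc 2 N := hx
    have : Multiset.count x lam.parts = 0 := by
      rw [Multiset.count_eq_zero]
      intro hmem
      have := hparts x hmem
      simp [mem_Icc] at hx1 hx'
      omega
    rw [this]
    simp
  rw [hm2, hPi, hprodQ]
  have hBne : ((ℓ.choose c1 : ℕ) : ℚ) ≠ 0 := Nat.cast_ne_zero.mpr (Nat.choose_pos hc1ℓ).ne'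
  have hc1f : (Nat.factorial c1 : ℚ) ≠ 0 := Nat.cast_ne_zero.mpr (Nat.factorial_ne_zero c1)
  have hPne : (∏ j ∈ Icc 1 s, (Nat.factorial (Multiset.count (j+1) lam.parts) : ℚ)) ≠ 0 := by
    refine Finset.prod_ne_zero_iff.mpr fun j _ => ?_
    exact Nat.cast_ne_zero.mpr (Nat.factorial_ne_zero _)
  have fact1 : (ℓ : ℚ) * (K.choose ℓ : ℚ) = (K : ℚ) * ((K-1).choose (N-1-t) : ℚ) := by
    obtain ⟨K', rfl⟩ : ∃ K', K = K' + 1 := ⟨K - 1, by omega⟩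
    obtain ⟨ℓ', hℓ'⟩ : ∃ ℓ', ℓ = ℓ' + 1 := ⟨ℓ - 1, by omega⟩
    have hidx : (K' + 1) - 1 = K' := by omega
    have hidx2 : N - 1 - t = ℓ' := by omega
    rw [hidx, hidx2, hℓ']
    have := Nat.add_one_mul_choose_eq K' ℓ'
    push_cast
    have hQ : ((K' + 1 : ℕ) : ℚ) * ((Nat.choose K' ℓ' : ℕ) : ℚ)
        = ((Nat.choose (K'+1) (ℓ'+1) : ℕ) : ℚ) * ((ℓ' + 1 : ℕ) : ℚ) := by
      exact_mod_cast congrArg (Nat.cast : ℕ → ℚ) this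
    push_cast at hQ
    linarith [hQ]
  have fact2 : (Nat.factorial ℓ : ℚ) / ((ℓ.choose c1 : ℚ) * ((Nat.factorial c1 : ℚ) *
      ∏ j ∈ Icc 1 s, (Nat.factorial (Multiset.count (j+1) lam.parts) : ℚ)))
      = (Nat.multinomial (Icc 1 s) (fun j => Multiset.count (j+1) lam.parts) : ℚ) := by
    rw [div_eq_iff (by positivity)]
    have hnat : Nat.factorial ℓ = Nat.multinomial (Icc 1 s) (fun j => Multiset.count (j+1) lam.parts) *
        (ℓ.choose c1 * (Nat.factorial c1 * ∏ j ∈ Icc 1 s, Nat.factorial (Multiset.count (j+1) lam.parts))) := by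
      have h1 : ℓ.choose c1 * Nat.factorial c1 * Nat.factorial (ℓ - c1) = Nat.factorial ℓ :=
        Nat.choose_mul_factorial_mul_factorial hc1ℓ
      have h2 : (∏ j ∈ Icc 1 s, Nat.factorial (Multiset.count (j+1) lam.parts)) *
          Nat.multinomial (Icc 1 s) (fun j => Multiset.count (j+1) lam.parts)
          = Nat.factorial (∑ j ∈ Icc 1 s, Multiset.count (j+1) lam.parts) :=
        Nat.multinomial_spec _ _
      rw [← hm] at h2
      rw [← h1, hm2, ← h2]
      ring
    calc (Nat.factorial ℓ : ℚ) = ((Nat.multinomial (Icc 1 s) (fun j => Multiset.count (j+1) lam.parts) *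
          (ℓ.choose c1 * (Nat.factorial c1 * ∏ j ∈ Icc 1 s, Nat.factorial (Multiset.count (j+1) lam.parts))) : ℕ) : ℚ) := by
          exact_mod_cast congrArg (Nat.cast : ℕ → ℚ) hnat
      _ = _ := by push_cast; ring
  trans (((ℓ : ℚ) * (K.choose ℓ : ℚ)) * (Nat.choose P m : ℚ) *
      (∏ j ∈ Icc 1 s, ((s.choose j : ℚ)) ^ (Multiset.count (j+1) lam.parts)) *
      ((Nat.factorial ℓ : ℚ) / ((ℓ.choose c1 : ℚ) * ((Nat.factorial c1 : ℚ) *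
        ∏ j ∈ Icc 1 s, (Nat.factorial (Multiset.count (j+1) lam.parts) : ℚ)))))
  · field_simp
  rw [fact1, fact2]
  ring

def buildPart (s N : ℕ) (k : ℕ → ℕ) : Nat.Partition N :=
  if h : (∑ j ∈ Icc 1 s, (j+1) * k j) ≤ N then
    { parts := Multiset.replicate (N - ∑ j ∈ Icc 1 s, (j+1) * k j) 1 +
        ∑ j ∈ Icc 1 s, Multiset.replicate (k j) (j+1),
      parts_pos := by
        intro i hi
        rw [Multiset.mem_add] at hi
        rcases hi with hi | hi
        · rw [Multiset.eq_of_mem_replicate hi]; norm_num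
        · rw [Multiset.mem_sum] at hi
          obtain ⟨j, _, hj⟩ := hi
          rw [Multiset.eq_of_mem_replicate hj]; omega
      parts_sum := by
        rw [Multiset.sum_add, Multiset.sum_replicate, smul_eq_mul, mul_one]
        have h2 : (∑ j ∈ Icc 1 s, Multiset.replicate (k j) (j+1)).sum
            = ∑ j ∈ Icc 1 s, (j+1) * k j := by
          have h3 := map_sum Multiset.sumAddMonoidHom
            (fun j => Multiset.replicate (k j) (j+1)) (Icc 1 s)
          simp only [Multiset.coe_sumAddMonoidHom] at h3
          rw [h3]
          refine Finset.sum_congr rfl fun j _ => ?_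
          rw [Multiset.sum_replicate, smul_eq_mul, mul_comm]
        rw [h2]
        omega }
  else
    { parts := Multiset.replicate N 1,
      parts_pos := by
        intro i hi; rw [Multiset.eq_of_mem_replicate hi]; norm_num
      parts_sum := by rw [Multiset.sum_replicate, smul_eq_mul, mul_one] }

lemma buildPart_count (s N : ℕ) (k : ℕ → ℕ) (h : (∑ j ∈ Icc 1 s, (j+1) * k j) ≤ N) (a : ℕ) :
    Multiset.count a (buildPart s N k).parts =
      (if a = 1 then N - ∑ j ∈ Icc 1 s, (j+1) * k j else 0) +
        ∑ j ∈ Icc 1 s, (if a = j + 1 then k j else 0) := by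
  rw [buildPart, dif_pos h]
  simp only [Multiset.count_add, Multiset.count_replicate, Multiset.count_sum']
  congr 1
  · simp only [eq_comm]
  · refine Finset.sum_congr rfl fun j _ => ?_
    simp only [eq_comm]

lemma card_count (s : ℕ) (μ : Multiset ℕ) (hpos : ∀ a ∈ μ, 0 < a) (hb : ∀ a ∈ μ, a ≤ s+1) :
    Multiset.card μ = μ.count 1 + ∑ j ∈ Icc 1 s, μ.count (j+1) := by
  rw [← Multiset.sum_count_eq_card (fun a ha => Finset.mem_Icc.mpr ⟨hpos a ha, hb a ha⟩),
    icc_split, Finset.sum_insert (by simp), icc_shift_sum]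

lemma sum_count_N (s : ℕ) (μ : Multiset ℕ) (hpos : ∀ a ∈ μ, 0 < a) (hb : ∀ a ∈ μ, a ≤ s+1) :
    μ.sum = μ.count 1 + ∑ j ∈ Icc 1 s, (j+1) * μ.count (j+1) := by
  rw [multiset_sum_count (Icc 1 (s+1)) μ (fun a ha => Finset.mem_Icc.mpr ⟨hpos a ha, hb a ha⟩),
    icc_split, Finset.sum_insert (by simp), icc_shift_sum, mul_one]
  congr 1
  exact Finset.sum_congr rfl fun j _ => mul_comm _ _

lemma buildPart_count_one (s N : ℕ) (k : ℕ → ℕ) (h : (∑ j ∈ Icc 1 s, (j+1) * k j) ≤ N) :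
    Multiset.count 1 (buildPart s N k).parts = N - ∑ j ∈ Icc 1 s, (j+1) * k j := by
  have hz : ∑ j ∈ Icc 1 s, (if (1:ℕ) = j + 1 then k j else 0) = 0 := by
    refine Finset.sum_eq_zero fun j hj => ?_
    have := (Finset.mem_Icc.mp hj).1
    rw [if_neg (by omega)]
  rw [buildPart_count s N k h 1, if_pos rfl, hz, add_zero]

lemma buildPart_count_shift (s N : ℕ) (k : ℕ → ℕ) (h : (∑ j ∈ Icc 1 s, (j+1) * k j) ≤ N)
    (j0 : ℕ) (hj0 : j0 ∈ Icc 1 s) :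
    Multiset.count (j0+1) (buildPart s N k).parts = k j0 := by
  rw [buildPart_count s N k h (j0+1), if_neg (by have := (Finset.mem_Icc.mp hj0).1; omega),
    zero_add, Finset.sum_eq_single j0 (fun j _ hne => by rw [if_neg (by omega)])
      (fun hj => absurd hj0 hj), if_pos rfl]

lemma buildPart_le (s N : ℕ) (k : ℕ → ℕ) (h : (∑ j ∈ Icc 1 s, (j+1) * k j) ≤ N) :
    ∀ i ∈ (buildPart s N k).parts, i ≤ s + 1 := by
  intro i hi
  by_contra hgt
  have hc : Multiset.count i (buildPart s N k).parts ≠ 0 := by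
    rw [Multiset.count_ne_zero]; exact hi
  apply hc
  have hz : ∑ j ∈ Icc 1 s, (if i = j + 1 then k j else 0) = 0 := by
    refine Finset.sum_eq_zero fun j hj => ?_
    have := (Finset.mem_Icc.mp hj).2
    rw [if_neg (by omega)]
  rw [buildPart_count s N k h i, if_neg (by omega), hz, add_zero]

lemma sumB (q r P K N : ℕ) (hq : 1 ≤ q) (hqr : q ≤ r) (hP : 1 ≤ P) (hK : 1 ≤ K)
    (hN : N = r * P + 1) :
    ∑ lam : Nat.Partition N, (Multiset.card lam.parts : ℚ) *
      (haldaneWeight q r P N lam * multiFactor N lam *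
        (Nat.choose K (Multiset.card lam.parts) : ℚ))
    = (K:ℚ) * ∑ m ∈ range (P+1), ∑ k ∈ piAntidiag (Icc 1 (r-q)) m,
        ((Nat.choose P m : ℚ) * (Nat.multinomial (Icc 1 (r-q)) k : ℚ) *
          (∏ j ∈ Icc 1 (r-q), (Nat.choose (r-q) j : ℚ)^(k j)) *
          (Nat.choose (K-1) (N - 1 - ∑ j ∈ Icc 1 (r-q), j * k j) : ℚ)) := by
  classical
  have hrle : r ≤ r * P := Nat.le_mul_of_pos_right r hP
  have hsr : (r - q) + 1 ≤ r := by omega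
  have hsN : (r - q) + 1 ≤ N := by omega
  have hN1 : 1 ≤ N := by omega
  set s := r - q with hs
  -- step 1 : restrict
  rw [show (∑ lam : Nat.Partition N, (Multiset.card lam.parts : ℚ) *
      (haldaneWeight q r P N lam * multiFactor N lam *
        (Nat.choose K (Multiset.card lam.parts) : ℚ)))
      = ∑ lam ∈ Finset.univ.filter (fun lam : Nat.Partition N =>
          (∀ i ∈ lam.parts, i ≤ s + 1) ∧ Multiset.card lam.parts - lam.parts.count 1 ≤ P),
          (Multiset.card lam.parts : ℚ) * (haldaneWeight q r P N lam * multiFactor N lam *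
            (Nat.choose K (Multiset.card lam.parts) : ℚ)) from by
    refine (Finset.sum_filter_of_ne fun lam _ hne => ?_).symm
    rcases Classical.em (∀ i ∈ lam.parts, i ≤ s + 1) with hA | hA
    · refine ⟨hA, ?_⟩
      by_contra hB
      apply hne
      simp only [haldaneWeight, multiFactor, ← hs]
      rw [if_pos hA, Nat.choose_eq_zero_of_lt (by omega)]
      norm_num
    · exfalso
      apply hne
      simp only [haldaneWeight, ← hs]
      rw [if_neg hA]
      norm_num]
  -- step 2 : termA
  rw [Finset.sum_congr rfl (fun lam hlam => termA q r P K N hK (by omega) hN1 lam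
    ((Finset.mem_filter.mp hlam).2).1)]
  rw [← Finset.mul_sum]
  congr 1
  rw [Finset.sum_sigma' (range (P+1)) (fun m => piAntidiag (Icc 1 s) m)
    (fun m k => ((Nat.choose P m : ℚ) * (Nat.multinomial (Icc 1 s) k : ℚ) *
          (∏ j ∈ Icc 1 s, (Nat.choose s j : ℚ)^(k j)) *
          (Nat.choose (K-1) (N - 1 - ∑ j ∈ Icc 1 s, j * k j) : ℚ)))]
  refine Finset.sum_nbij'
    (fun lam => ⟨Multiset.card lam.parts - Multiset.count 1 lam.parts,
      fun j => if j ∈ Icc 1 s then Multiset.count (j+1) lam.parts else 0⟩)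
    (fun p => buildPart s N p.2) ?_ ?_ ?_ ?_ ?_
  · -- hi
    intro lam hlam
    obtain ⟨-, hparts, hmP⟩ := Finset.mem_filter.mp hlam
    have hcard := card_count s lam.parts (fun a ha => lam.parts_pos ha) hparts
    refine Finset.mem_sigma.mpr ⟨?_, ?_⟩
    · show (Multiset.card lam.parts - Multiset.count 1 lam.parts) ∈ range (P+1)
      exact Finset.mem_range.mpr (by omega)
    · show (fun j => if j ∈ Icc 1 s then Multiset.count (j+1) lam.parts else 0)
        ∈ piAntidiag (Icc 1 s) (Multiset.card lam.parts - Multiset.count 1 lam.parts)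
      refine Finset.mem_piAntidiag.mpr ⟨?_, ?_⟩
      · rw [Finset.sum_congr rfl (fun j hj => if_pos hj)]
        omega
      · intro j hj
        by_contra hnot
        rw [if_neg hnot] at hj
        exact hj rfl
  · -- hj
    rintro ⟨m, k⟩ hp
    obtain ⟨hm, hk⟩ := Finset.mem_sigma.mp hp
    change m ∈ range (P+1) at hm
    change k ∈ piAntidiag (Icc 1 s) m at hk
    obtain ⟨hksum, hksupp⟩ := Finset.mem_piAntidiag.mp hk
    have hmP : m ≤ P := by have := Finset.mem_range.mp hm; omega
    have htot : (∑ j ∈ Icc 1 s, (j+1) * k j) ≤ N := by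
      calc (∑ j ∈ Icc 1 s, (j+1) * k j) ≤ ∑ j ∈ Icc 1 s, (s+1) * k j := by
            refine Finset.sum_le_sum fun j hj => ?_
            exact Nat.mul_le_mul_right _ (by have := (Finset.mem_Icc.mp hj).2; omega)
        _ = (s+1) * m := by rw [← Finset.mul_sum, hksum]
        _ ≤ r * P := Nat.mul_le_mul hsr hmP
        _ ≤ N := by omega
    have hple := buildPart_le s N k htot
    have hcard := card_count s (buildPart s N k).parts
      (fun a ha => (buildPart s N k).parts_pos ha) hple
    have h1 := buildPart_count_one s N k htot
    have hsh : ∑ j ∈ Icc 1 s, Multiset.count (j+1) (buildPart s N k).parts = m := by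
      rw [Finset.sum_congr rfl (fun j hj => buildPart_count_shift s N k htot j hj), hksum]
    refine Finset.mem_filter.mpr ⟨Finset.mem_univ _, hple, ?_⟩
    dsimp only
    omega
  · -- left_inv
    intro lam hlam
    obtain ⟨-, hparts, hmP⟩ := Finset.mem_filter.mp hlam
    have hpos : ∀ a ∈ lam.parts, 0 < a := fun a ha => lam.parts_pos ha
    have hNsum := sum_count_N s lam.parts hpos hparts
    rw [lam.parts_sum] at hNsum
    set k : ℕ → ℕ := fun j => if j ∈ Icc 1 s then Multiset.count (j+1) lam.parts else 0 with hkdef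
    have hteq : ∑ j ∈ Icc 1 s, (j+1) * k j = ∑ j ∈ Icc 1 s, (j+1) * Multiset.count (j+1) lam.parts :=
      Finset.sum_congr rfl fun j hj => by rw [hkdef]; simp only [if_pos hj]
    have htot : (∑ j ∈ Icc 1 s, (j+1) * k j) ≤ N := by omega
    apply Nat.Partition.ext
    ext a
    rw [buildPart_count s N k htot a]
    by_cases ha1 : a = 1
    · subst ha1
      have hz : ∑ j ∈ Icc 1 s, (if (1:ℕ) = j + 1 then k j else 0) = 0 := by
        refine Finset.sum_eq_zero fun j hj => ?_
        have := (Finset.mem_Icc.mp hj).1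
        rw [if_neg (by omega)]
      rw [if_pos rfl, hz, add_zero]
      omega
    · rw [if_neg ha1, zero_add]
      by_cases ha2 : 2 ≤ a ∧ a ≤ s + 1
      · have hmem : a - 1 ∈ Icc 1 s := Finset.mem_Icc.mpr (by omega)
        rw [Finset.sum_eq_single (a-1) (fun j _ hne => by rw [if_neg (by omega)])
          (fun hj => absurd hmem hj), if_pos (by omega)]
        rw [hkdef]
        simp only [if_pos hmem]
        congr 1
        omega
      · have hz : ∑ j ∈ Icc 1 s, (if a = j + 1 then k j else 0) = 0 := by
          refine Finset.sum_eq_zero fun j hj => ?_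
          obtain ⟨h1, h2⟩ := Finset.mem_Icc.mp hj
          rw [if_neg (by omega)]
        rw [hz, eq_comm, Multiset.count_eq_zero]
        intro hmem
        have := hpos a hmem
        have := hparts a hmem
        omega
  · -- right_inv
    rintro ⟨m, k⟩ hp
    obtain ⟨hm, hk⟩ := Finset.mem_sigma.mp hp
    change m ∈ range (P+1) at hm
    change k ∈ piAntidiag (Icc 1 s) m at hk
    obtain ⟨hksum, hksupp⟩ := Finset.mem_piAntidiag.mp hk
    have hmP : m ≤ P := by have := Finset.mem_range.mp hm; omega
    have htot : (∑ j ∈ Icc 1 s, (j+1) * k j) ≤ N := by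
      calc (∑ j ∈ Icc 1 s, (j+1) * k j) ≤ ∑ j ∈ Icc 1 s, (s+1) * k j := by
            refine Finset.sum_le_sum fun j hj => ?_
            exact Nat.mul_le_mul_right _ (by have := (Finset.mem_Icc.mp hj).2; omega)
        _ = (s+1) * m := by rw [← Finset.mul_sum, hksum]
        _ ≤ r * P := Nat.mul_le_mul hsr hmP
        _ ≤ N := by omega
    have hple := buildPart_le s N k htot
    have hcard := card_count s (buildPart s N k).parts
      (fun a ha => (buildPart s N k).parts_pos ha) hple
    have h1 := buildPart_count_one s N k htot
    have hsh : ∑ j ∈ Icc 1 s, Multiset.count (j+1) (buildPart s N k).parts = m := by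
      rw [Finset.sum_congr rfl (fun j hj => buildPart_count_shift s N k htot j hj), hksum]
    refine Sigma.ext (by dsimp only; omega) (heq_of_eq ?_)
    dsimp only
    funext j
    by_cases hj : j ∈ Icc 1 s
    · rw [if_pos hj, buildPart_count_shift s N k htot j hj]
    · rw [if_neg hj, eq_comm]
      by_contra hne
      exact hj (hksupp j hne)
  · -- term equality
    intro lam hlam
    obtain ⟨-, hparts, hmP⟩ := Finset.mem_filter.mp hlam
    have hcard := card_count s lam.parts (fun a ha => lam.parts_pos ha) hparts
    dsimp only
    have e1 : Multiset.card lam.parts - Multiset.count 1 lam.parts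
        = ∑ j ∈ Icc 1 s, Multiset.count (j+1) lam.parts := by omega
    have e2 : (Nat.multinomial (Icc 1 s) fun j =>
          if j ∈ Icc 1 s then Multiset.count (j + 1) lam.parts else 0)
        = Nat.multinomial (Icc 1 s) (fun j => Multiset.count (j+1) lam.parts) :=
      Nat.multinomial_congr fun j hj => if_pos hj
    have e3 : (∏ x ∈ Icc 1 s, (Nat.choose s x : ℚ) ^
          (if x ∈ Icc 1 s then Multiset.count (x + 1) lam.parts else 0))
        = ∏ j ∈ Icc 1 s, (Nat.choose s j : ℚ) ^ Multiset.count (j + 1) lam.parts :=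
      Finset.prod_congr rfl fun j hj => by rw [if_pos hj]
    have e4 : (∑ x ∈ Icc 1 s, x * if x ∈ Icc 1 s then Multiset.count (x + 1) lam.parts else 0)
        = ∑ j ∈ Icc 1 s, j * Multiset.count (j + 1) lam.parts :=
      Finset.sum_congr rfl fun j hj => by rw [if_pos hj]
    rw [e1, e2, e3, e4]

lemma mainIdentity (q r P K : ℕ) (hq : 1 ≤ q) (hqr : q ≤ r) (hP : 1 ≤ P) (hK : 1 ≤ K) :
    ∑ lam : Nat.Partition (r*P+1), (Multiset.card lam.parts : ℚ) *
      (haldaneWeight q r P (r*P+1) lam * multiFactor (r*P+1) lam *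
        (Nat.choose K (Multiset.card lam.parts) : ℚ))
    = (K:ℚ) * (Nat.choose ((r-q)*P + (K-1)) (r*P) : ℚ) := by
  rw [sumB q r P K (r*P+1) hq hqr hP hK rfl]
  congr 1
  have hrle : r ≤ r * P := Nat.le_mul_of_pos_right r hP
  have h1 : (r-q) * P + 1 ≤ r * P + 1 := by
    have : (r-q) * P ≤ r * P := Nat.mul_le_mul_right P (by omega)
    omega
  have hkp := keyPoly (r-q) P K (r*P+1) h1 (by omega)
  simp only [Nat.add_sub_cancel] at hkp ⊢
  exact hkp

lemma prob_mean (q r P K : ℕ) (hq : 1 ≤ q) (hqr : q ≤ r) (hP : 1 ≤ P) (hK : q*P + 1 ≤ K) :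
    ∑ lam : Nat.Partition (r*P+1),
      (Multiset.card lam.parts : ℚ) * haldaneProb q r P K (r*P+1) lam
    = (K : ℚ) * ((r*P+1 : ℕ) : ℚ) / ((K + (r-q)*P : ℕ) : ℚ) := by
  have hK1 : 1 ≤ K := by omega
  have hsplit : (r-q)*P + q*P = r*P := by
    have : (r-q) + q = r := by omega
    rw [← Nat.add_mul, this]
  have hNM : r*P+1 ≤ K + (r-q)*P := by omega
  have hD : ((Nat.choose (K + (r-q)*P) (r*P+1) : ℕ) : ℚ) ≠ 0 :=
    Nat.cast_ne_zero.mpr (Nat.choose_pos hNM).ne'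
  have step : ∑ lam : Nat.Partition (r*P+1),
      (Multiset.card lam.parts : ℚ) * haldaneProb q r P K (r*P+1) lam
      = ((K:ℚ) * (Nat.choose ((r-q)*P + (K-1)) (r*P) : ℚ)) /
        ((Nat.choose (K + (r-q)*P) (r*P+1) : ℕ) : ℚ) := by
    rw [← mainIdentity q r P K hq hqr hP hK1, Finset.sum_div]
    refine Finset.sum_congr rfl fun lam _ => ?_
    rw [haldaneProb]
    ring
  rw [step]
  rw [div_eq_div_iff hD (by exact_mod_cast Nat.cast_ne_zero.mpr (by omega : (K + (r-q)*P) ≠ 0))]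
  have hnat : (K + (r-q)*P) * Nat.choose ((r-q)*P + (K-1)) (r*P) =
      (r*P+1) * Nat.choose (K + (r-q)*P) (r*P+1) := by
    have h2 : (r-q)*P + (K-1) = (K + (r-q)*P) - 1 := by omega
    rw [h2]
    obtain ⟨M', hM'⟩ : ∃ M', K + (r-q)*P = M' + 1 := ⟨K + (r-q)*P - 1, by omega⟩
    rw [hM']
    simp only [Nat.add_sub_cancel]
    have hs := Nat.add_one_mul_choose_eq M' (r*P)
    rw [hs, mul_comm]
  have hnatQ : ((K + (r-q)*P : ℕ) : ℚ) * (Nat.choose ((r-q)*P + (K-1)) (r*P) : ℚ) =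
      ((r*P+1 : ℕ) : ℚ) * (Nat.choose (K + (r-q)*P) (r*P+1) : ℚ) := by
    exact_mod_cast congrArg (Nat.cast : ℕ → ℚ) hnat
  push_cast at hnatQ ⊢
  linear_combination (K:ℚ) * hnatQ

end Aux

/-- For coprime `q ≤ r` and `0 < ρ < 1/q`, for all sequences of positive
integers `(Kₙ)`, `(Pₙ)` with `Kₙ → ∞` and `Pₙ/Kₙ → ρ`, setting `Nₙ = r·Pₙ + 1`, the
normalized mean number of occupied states under the Haldane measure with parameters
`(Kₙ, Nₙ)` converges to `rρ / (1 + (r−q)ρ)`. -/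
theorem stmt4 (q r : ℕ) (hq : 1 ≤ q) (hqr : q ≤ r) (hcop : Nat.Coprime q r)
    (ρ : ℝ) (hρ0 : 0 < ρ) (hρ1 : ρ < 1 / q)
    (K P : ℕ → ℕ) (hKpos : ∀ n, 0 < K n) (hPpos : ∀ n, 0 < P n)
    (hK : Filter.Tendsto K Filter.atTop Filter.atTop)
    (hPK : Filter.Tendsto (fun n => (P n : ℝ) / (K n : ℝ)) Filter.atTop (nhds ρ)) :
    Filter.Tendsto
      (fun n => (1 / (K n : ℝ)) *
        ∑ lam : Nat.Partition (r * P n + 1),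
          (Multiset.card lam.parts : ℝ) *
            ((haldaneProb q r (P n) (K n) (r * P n + 1) lam : ℚ) : ℝ))
      Filter.atTop
      (nhds ((r : ℝ) * ρ / (1 + ((r : ℝ) - (q : ℝ)) * ρ))) := by
  have hq0 : (0:ℝ) < (q:ℝ) := by exact_mod_cast hq
  have hsR : ((r - q : ℕ) : ℝ) = (r : ℝ) - (q : ℝ) := Nat.cast_sub hqr
  -- eventually q * P n + 1 ≤ K n
  have hc1 : ρ < (ρ + 1/(q:ℝ))/2 := by linarith
  have hc2 : (q:ℝ) * ((ρ + 1/(q:ℝ))/2) < 1 := by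
    rw [lt_div_iff₀ hq0] at hρ1
    have he : (q:ℝ) * ((ρ + 1/(q:ℝ))/2) = (ρ * (q:ℝ) + 1)/2 := by
      field_simp
    rw [he]
    linarith
  have hEv : ∀ᶠ n in Filter.atTop, q * P n + 1 ≤ K n := by
    filter_upwards [hPK.eventually_lt_const hc1] with n hn
    have hKn : (0:ℝ) < (K n : ℝ) := by exact_mod_cast hKpos n
    rw [div_lt_iff₀ hKn] at hn
    have h2 : (q:ℝ) * (P n : ℝ) < K n := by nlinarith [(hPpos n).le]
    have h3 : q * P n < K n := by exact_mod_cast h2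
    omega
  -- the explicit value
  have hEq : ∀ᶠ n in Filter.atTop,
      (1 / (K n : ℝ)) * ∑ lam : Nat.Partition (r * P n + 1),
          (Multiset.card lam.parts : ℝ) *
            ((haldaneProb q r (P n) (K n) (r * P n + 1) lam : ℚ) : ℝ)
      = ((r * P n + 1 : ℕ) : ℝ) / ((K n + (r - q) * P n : ℕ) : ℝ) := by
    filter_upwards [hEv] with n hn
    have hKn : ((K n : ℕ) : ℝ) ≠ 0 := by
      exact_mod_cast (hKpos n).ne'
    have hsum : ∑ lam : Nat.Partition (r * P n + 1),
        (Multiset.card lam.parts : ℝ) *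
          ((haldaneProb q r (P n) (K n) (r * P n + 1) lam : ℚ) : ℝ)
        = ((∑ lam : Nat.Partition (r * P n + 1),
            (Multiset.card lam.parts : ℚ) * haldaneProb q r (P n) (K n) (r * P n + 1) lam : ℚ) : ℝ) := by
      push_cast
      rfl
    rw [hsum, prob_mean q r (P n) (K n) hq hqr (hPpos n) hn]
    have hden : ((K n + (r - q) * P n : ℕ) : ℝ) ≠ 0 := by
      have : 0 < K n + (r - q) * P n := by have := hKpos n; omega
      exact_mod_cast this.ne'
    push_cast
    field_simp
  -- limit of the explicit value
  have hKR : Filter.Tendsto (fun n => (K n : ℝ)) Filter.atTop Filter.atTop :=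
    Filter.Tendsto.comp tendsto_natCast_atTop_atTop hK
  have hinv : Filter.Tendsto (fun n => (K n : ℝ)⁻¹) Filter.atTop (nhds 0) :=
    hKR.inv_tendsto_atTop
  have hnum : Filter.Tendsto (fun n => (r:ℝ) * ((P n : ℝ)/(K n : ℝ)) + (K n : ℝ)⁻¹)
      Filter.atTop (nhds ((r:ℝ) * ρ)) := by
    have := (hPK.const_mul (r:ℝ)).add hinv
    simpa using this
  have hden : Filter.Tendsto (fun n => 1 + ((r:ℝ) - (q:ℝ)) * ((P n : ℝ)/(K n : ℝ)))
      Filter.atTop (nhds (1 + ((r:ℝ) - (q:ℝ)) * ρ)) :=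
    tendsto_const_nhds.add (hPK.const_mul _)
  have hrq0 : (0:ℝ) ≤ (r:ℝ) - (q:ℝ) := by
    have : (q:ℝ) ≤ (r:ℝ) := by exact_mod_cast hqr
    linarith
  have hdenne : (1 + ((r:ℝ) - (q:ℝ)) * ρ) ≠ 0 := by nlinarith
  have hg : Filter.Tendsto (fun n => ((r * P n + 1 : ℕ) : ℝ) / ((K n + (r - q) * P n : ℕ) : ℝ))
      Filter.atTop (nhds ((r : ℝ) * ρ / (1 + ((r : ℝ) - (q : ℝ)) * ρ))) := by
    refine (hnum.div hden hdenne).congr fun n => ?_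
    have hKn : ((K n : ℕ) : ℝ) ≠ 0 := by exact_mod_cast (hKpos n).ne'
    simp only [Pi.div_apply]
    push_cast [hsR]
    field_simp
    try ring
  exact hg.congr' (hEq.mono fun n hn => hn.symm)
end

section
/- Let q, r be coprime integers with 1 ≤ q ≤ r, let P ≥ 0, N = rP+1, K ≥ 1, and set G = r−q+1. Then the Haldane statistical weight is majorized by the Gentile one: C(K + (r−q)P, N) ≤ W_G(K, N), where W_G(K,N) is the coefficient of z^N in (1+z+⋯+z^G)^K. -/
open Finset

/-- `gentileWeight G K N` is the coefficient of `z^N` in `(1 + z + z² + ⋯ + z^G)^K`. -/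
noncomputable def gentileWeight (G K N : ℕ) : ℕ :=
  ((∑ j ∈ Finset.range (G + 1), (Polynomial.X : Polynomial ℕ) ^ j) ^ K).coeff N

namespace Stmt8Aux

/-- The fractional exclusion count `⌊s(n-1)/r⌋`. -/
def m (s r n : ℕ) : ℕ := s * (n - 1) / r

lemma m_mono (s r : ℕ) {a b : ℕ} (h : a ≤ b) : m s r a ≤ m s r b :=
  Nat.div_le_div_right (Nat.mul_le_mul_left _ (Nat.sub_le_sub_right h 1))

lemma m_le (s r n : ℕ) (hsr : s + 1 ≤ r) : m s r n ≤ n - 1 := by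
  have hr : 0 < r := by omega
  calc m s r n = s * (n-1) / r := rfl
    _ ≤ r * (n-1) / r := Nat.div_le_div_right (Nat.mul_le_mul_right _ (by omega))
    _ = n - 1 := Nat.mul_div_cancel_left _ hr

lemma m_succ_le (s r n : ℕ) (hsr : s + 1 ≤ r) : m s r (n+1) ≤ m s r n + 1 := by
  have hr : 0 < r := by omega
  have h1 : s * ((n+1) - 1) ≤ s * (n - 1) + r := by
    have hn : n ≤ (n-1) + 1 := by omega
    calc s * ((n+1) - 1) = s * n := by simp
      _ ≤ s * ((n-1)+1) := Nat.mul_le_mul_left _ hn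
      _ = s * (n-1) + s := by ring
      _ ≤ s * (n-1) + r := by omega
  calc m s r (n+1) ≤ (s * (n-1) + r) / r := Nat.div_le_div_right h1
    _ = s * (n-1) / r + 1 := Nat.add_div_right _ hr
    _ = m s r n + 1 := rfl

/-- Over any window of length `s+1`, `m` increases by at most `s`. -/
lemma m_window (s r n : ℕ) (hsr : s + 1 ≤ r) :
    m s r n ≤ m s r (n - (s+1)) + s := by
  have hr : 0 < r := by omega
  have h1 : s * (n - 1) ≤ s * ((n - (s+1)) - 1) + r * s := by
    have h2 : n - 1 ≤ ((n - (s+1)) - 1) + (s+1) := by omega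
    calc s * (n-1) ≤ s * (((n - (s+1)) - 1) + (s+1)) := Nat.mul_le_mul_left _ h2
      _ = s * ((n - (s+1)) - 1) + s * (s+1) := by ring
      _ ≤ s * ((n - (s+1)) - 1) + r * s := by
          have h3 : s * (s+1) ≤ r * s := by
            calc s * (s+1) = (s+1) * s := by ring
              _ ≤ r * s := Nat.mul_le_mul_right _ hsr
          omega
  calc m s r n ≤ (s * ((n - (s+1)) - 1) + r * s) / r := Nat.div_le_div_right h1
    _ = s * ((n - (s+1)) - 1) / r + s := by rw [Nat.add_mul_div_left _ _ hr]
    _ = m s r (n - (s+1)) + s := rfl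

/-- The Pascal chain lemma. -/
lemma chain (s r K : ℕ) (hsr : s + 1 ≤ r) :
    ∀ c n : ℕ, (n ≤ c ∨ m s r n ≤ m s r (n - (c+1)) + c) →
      Nat.choose (K + m s r n + 1) n ≤
        ∑ j ∈ range (c+2),
          (if j ≤ n then Nat.choose (K + m s r (n - j)) (n - j) else 0) := by
  intro c
  induction c with
  | zero =>
    intro n h
    match n with
    | 0 => simp
    | (n'+1) =>
      have hmm : m s r (n'+1) ≤ m s r n' := by
        rcases h with h | h
        · omega
        · simpa using h
      rw [Nat.choose_succ_succ]
      simp only [Nat.succ_eq_add_one]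
      rw [Finset.sum_range_succ, Finset.sum_range_succ, Finset.sum_range_zero]
      rw [if_pos (by omega : (0:ℕ) ≤ n'+1), if_pos (by omega : (1:ℕ) ≤ n'+1)]
      simp only [Nat.sub_zero, Nat.add_sub_cancel]
      have t1 : Nat.choose (K + m s r (n'+1)) n' ≤ Nat.choose (K + m s r n') n' :=
        Nat.choose_le_choose _ (by omega)
      omega
  | succ c ih =>
    intro n h
    match n with
    | 0 =>
      have hmem : (0:ℕ) ∈ range (c+3) := by simp
      have hsingle := Finset.single_le_sum
        (f := fun j => if j ≤ 0 then Nat.choose (K + m s r (0 - j)) (0 - j) else 0)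
        (fun i _ => Nat.zero_le _) hmem
      simpa using hsingle
    | (n'+1) =>
      rw [Nat.choose_succ_succ]
      simp only [Nat.succ_eq_add_one]
      rw [show c + 1 + 2 = c + 3 from by omega]
      by_cases hε : m s r (n'+1) ≤ m s r n'
      · -- stop case: the first two terms of the sum suffice
        have t1 : Nat.choose (K + m s r (n'+1)) n' ≤ Nat.choose (K + m s r n') n' :=
          Nat.choose_le_choose _ (by omega)
        have hsub : range 2 ⊆ range (c+3) := Finset.range_subset_range.2 (by omega)
        have h2 : ∑ j ∈ range 2,
            (if j ≤ n'+1 then Nat.choose (K + m s r (n'+1 - j)) (n'+1 - j) else 0) ≤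
            ∑ j ∈ range (c+3),
            (if j ≤ n'+1 then Nat.choose (K + m s r (n'+1 - j)) (n'+1 - j) else 0) :=
          Finset.sum_le_sum_of_subset hsub
        rw [Finset.sum_range_succ, Finset.sum_range_succ, Finset.sum_range_zero] at h2
        rw [if_pos (by omega : (0:ℕ) ≤ n'+1), if_pos (by omega : (1:ℕ) ≤ n'+1)] at h2
        simp only [Nat.sub_zero, Nat.add_sub_cancel] at h2
        omega
      · -- chain case: m (n'+1) = m n' + 1, recurse
        have hup : m s r (n'+1) ≤ m s r n' + 1 := m_succ_le s r n' hsr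
        have heq : m s r (n'+1) = m s r n' + 1 := by omega
        have hIHhyp : n' ≤ c ∨ m s r n' ≤ m s r (n' - (c+1)) + c := by
          rcases h with h | h
          · left; omega
          · right
            have hidx : n' + 1 - (c+1+1) = n' - (c+1) := by omega
            rw [hidx] at h
            omega
        have hIH := ih n' hIHhyp
        have hshift : ∑ j ∈ range (c+3),
            (if j ≤ n'+1 then Nat.choose (K + m s r (n'+1 - j)) (n'+1 - j) else 0)
            = (∑ j ∈ range (c+2),
                (if j ≤ n' then Nat.choose (K + m s r (n' - j)) (n' - j) else 0))
              + Nat.choose (K + m s r (n'+1)) (n'+1) := by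
          rw [Finset.sum_range_succ']
          congr 1
          · refine Finset.sum_congr rfl fun j _ => ?_
            have e2 : n' + 1 - (j+1) = n' - j := by omega
            have e1 : (j + 1 ≤ n' + 1) ↔ (j ≤ n') := by omega
            rw [e2]
            exact if_congr e1 rfl rfl
        have hkey : K + m s r (n'+1) = K + m s r n' + 1 := by omega
        rw [hshift, hkey]
        omega

/-- Recursion for the Gentile weight. -/
lemma gentile_succ (G K n : ℕ) :
    gentileWeight G (K+1) n
      = ∑ j ∈ range (G+1), (if j ≤ n then gentileWeight G K (n-j) else 0) := by
  unfold gentileWeight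
  rw [pow_succ, Finset.mul_sum, Polynomial.finset_sum_coeff]
  refine Finset.sum_congr rfl fun j _ => ?_
  rw [Polynomial.coeff_mul_X_pow']

/-- The strengthened inequality: for every `n`,
`C(K + ⌊s(n-1)/r⌋, n) ≤ W_{s+1}(K, n)`. -/
lemma key (s r : ℕ) (hsr : s + 1 ≤ r) :
    ∀ K n, Nat.choose (K + m s r n) n ≤ gentileWeight (s+1) K n := by
  intro K
  induction K with
  | zero =>
    intro n
    match n with
    | 0 => simp [gentileWeight, m]
    | (n'+1) =>
      have h0 : m s r (n'+1) < n'+1 := by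
        have := m_le s r (n'+1) hsr
        omega
      rw [Nat.choose_eq_zero_of_lt (by simpa using h0)]
      exact Nat.zero_le _
  | succ K ih =>
    intro n
    have hchain := chain s r K hsr s n (Or.symm (Or.inl (m_window s r n hsr)))
    have hstep : ∑ j ∈ range (s+2),
        (if j ≤ n then Nat.choose (K + m s r (n - j)) (n - j) else 0) ≤
        ∑ j ∈ range (s+2), (if j ≤ n then gentileWeight (s+1) K (n-j) else 0) := by
      refine Finset.sum_le_sum fun j _ => ?_
      split
      · exact ih (n - j)
      · exact le_refl 0
    have hrec : gentileWeight (s+1) (K+1) n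
        = ∑ j ∈ range (s+2), (if j ≤ n then gentileWeight (s+1) K (n-j) else 0) := by
      have := gentile_succ (s+1) K n
      simpa using this
    have hL : K + 1 + m s r n = K + m s r n + 1 := by omega
    rw [hL, hrec]
    exact le_trans hchain hstep

end Stmt8Aux

/-- For coprime `q ≤ r`, `N = rP + 1`, `K ≥ 1`, and `G = r − q + 1`, the
Haldane statistical weight is majorized by the Gentile one:
`C(K + (r−q)P, N) ≤ W_G(K, N)`. -/
theorem stmt8 (q r P K N G : ℕ) (hq : 1 ≤ q) (hqr : q ≤ r) (hcop : Nat.Coprime q r)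
    (hK : 1 ≤ K) (hN : N = r * P + 1) (hG : G = r - q + 1) :
    Nat.choose (K + (r - q) * P) N ≤ gentileWeight G K N := by
  have hsr : (r - q) + 1 ≤ r := by omega
  have hr : 0 < r := by omega
  have hm : Stmt8Aux.m (r - q) r N = (r - q) * P := by
    unfold Stmt8Aux.m
    rw [hN]
    simp only [Nat.add_sub_cancel]
    rw [show (r - q) * (r * P) = r * ((r - q) * P) from by ring]
    exact Nat.mul_div_cancel_left _ hr
  have := Stmt8Aux.key (r - q) r hsr K N
  rw [hm] at this
  rw [hG]
  exact this
end

section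
/- Let G ≥ 1, K ≥ 1, and let i, N be integers with 1 ≤ i ≤ G and N ≥ i. Then Σ k_i · K! / (k_1!⋯k_G!·(K − k_1 − … − k_G)!) = K · W_G(K−1, N−i), where the sum runs over all G-tuples (k_1, …, k_G) of non-negative integers with k_1 + 2k_2 + … + G·k_G = N and k_1 + … + k_G ≤ K. Equivalently, the mean number of states occupied by exactly i particles under the Gentile measure is ⟨k_i⟩ = K · W_G(K−1, N−i) / W_G(K, N) whenever W_G(K,N) ≠ 0. -/
open Finset

lemma sum_mul_update (G : ℕ) (w l : Fin G → ℕ) (idx : Fin G) (v : ℕ) :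
    ∑ j, w j * Function.update l idx v j
      = w idx * v + ∑ j ∈ Finset.univ.erase idx, w j * l j := by
  rw [← Finset.add_sum_erase Finset.univ (fun j => w j * Function.update l idx v j)
    (Finset.mem_univ idx)]
  congr 1
  · rw [Function.update_self]
  · refine Finset.sum_congr rfl fun j hj => ?_
    rw [Function.update_of_ne (Finset.mem_erase.1 hj).1]

lemma gentile_key (G K N : ℕ) :
    gentileWeight G K N = ∑ m ∈ Finset.range (K+1),
      ∑ k ∈ (Finset.piAntidiag (Finset.univ : Finset (Fin G)) m).filter
          (fun k => ∑ j, (j.1+1) * k j = N),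
        Nat.multinomial Finset.univ k * K.choose m := by
  have hpoly : (∑ j ∈ Finset.range (G + 1), (Polynomial.X : Polynomial ℕ) ^ j) ^ K
      = ∑ m ∈ Finset.range (K+1), ∑ k ∈ Finset.piAntidiag (Finset.univ : Finset (Fin G)) m,
          (((Nat.multinomial Finset.univ k) * K.choose m : ℕ) : Polynomial ℕ) *
            Polynomial.X ^ (∑ j, (j.1+1) * k j) := by
    rw [Finset.sum_range_succ', pow_zero, ← Fin.sum_univ_eq_sum_range
      (fun j => (Polynomial.X : Polynomial ℕ) ^ (j+1)), add_pow]
    refine Finset.sum_congr rfl fun m hm => ?_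
    rw [one_pow, mul_one, Finset.sum_pow_eq_sum_piAntidiag, Finset.sum_mul]
    refine Finset.sum_congr rfl fun k hk => ?_
    simp_rw [← pow_mul, Finset.prod_pow_eq_pow_sum]
    push_cast
    ring
  unfold gentileWeight
  rw [hpoly, Polynomial.finset_sum_coeff]
  refine Finset.sum_congr rfl fun m hm => ?_
  rw [Polynomial.finset_sum_coeff, Finset.sum_filter]
  refine Finset.sum_congr rfl fun k hk => ?_
  rw [← nsmul_eq_mul, Polynomial.coeff_smul, Polynomial.coeff_X_pow, smul_eq_mul]
  by_cases h : (∑ j : Fin G, ((j : ℕ) + 1) * k j) = N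
  · simp [h]
  · simp [h, Ne.symm h]

lemma gentile_eq_sum (G K N : ℕ) :
    (gentileWeight G K N : ℚ) =
      ∑ l ∈ (Fintype.piFinset fun _ : Fin G => Finset.range (N + 1)).filter
          (fun l => (∑ j, (j.1 + 1) * l j) = N ∧ (∑ j, l j) ≤ K),
        (Nat.factorial K : ℚ) /
          ((∏ j, (Nat.factorial (l j) : ℚ)) * (Nat.factorial (K - ∑ j, l j) : ℚ)) := by
  have hmaps : ∀ l ∈ (Fintype.piFinset fun _ : Fin G => Finset.range (N + 1)).filter
      (fun l => (∑ j, (j.1 + 1) * l j) = N ∧ (∑ j, l j) ≤ K),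
      (∑ j, l j) ∈ Finset.range (K + 1) := by
    intro l hl
    simp only [Finset.mem_filter] at hl
    exact Finset.mem_range.2 (Nat.lt_succ_of_le hl.2.2)
  rw [← Finset.sum_fiberwise_of_maps_to hmaps, gentile_key]
  push_cast
  refine Finset.sum_congr rfl fun m hm => ?_
  have hmK : m ≤ K := Nat.lt_succ_iff.1 (Finset.mem_range.1 hm)
  have hset : ((Finset.piAntidiag (Finset.univ : Finset (Fin G)) m).filter
        (fun k => ∑ j, (j.1+1) * k j = N))
      = ((Fintype.piFinset fun _ : Fin G => Finset.range (N + 1)).filter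
          (fun l => (∑ j, (j.1 + 1) * l j) = N ∧ (∑ j, l j) ≤ K)).filter
          (fun l => (∑ j, l j) = m) := by
    ext k
    simp only [Finset.mem_filter, Finset.mem_piAntidiag, Fintype.mem_piFinset,
      Finset.mem_range, Finset.mem_univ, imp_true_iff, and_true]
    constructor
    · rintro ⟨hsum, hN⟩
      have hjN : ∀ j : Fin G, (j.1 + 1) * k j ≤ N := fun j =>
        hN ▸ Finset.single_le_sum (f := fun j : Fin G => (j.1+1) * k j)
          (fun _ _ => Nat.zero_le _) (Finset.mem_univ j)
      refine ⟨⟨fun j => ?_, hN, hsum ▸ hmK⟩, hsum⟩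
      have h1 : k j ≤ (j.1 + 1) * k j := Nat.le_mul_of_pos_left _ (Nat.succ_pos _)
      exact Nat.lt_succ_of_le (h1.trans (hjN j))
    · rintro ⟨⟨-, hN, -⟩, hsum⟩
      exact ⟨hsum, hN⟩
  rw [hset]
  refine Finset.sum_congr rfl fun k hk => ?_
  simp only [Finset.mem_filter] at hk
  obtain ⟨⟨-, hN, -⟩, hsum⟩ := hk
  have hprodpos : (0:ℚ) < ∏ j, ((k j).factorial : ℚ) :=
    Finset.prod_pos fun j _ => by exact_mod_cast (k j).factorial_pos
  have hmult : (Nat.multinomial Finset.univ k : ℚ) = (m.factorial : ℚ) / ∏ j, ((k j).factorial : ℚ) := by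
    rw [eq_div_iff hprodpos.ne']
    have := Nat.multinomial_spec (Finset.univ : Finset (Fin G)) k
    rw [hsum] at this
    rw [mul_comm]
    exact_mod_cast congrArg (Nat.cast (R := ℚ)) this
  rw [hsum, hmult, Nat.cast_choose ℚ hmK]
  have h2 : ((K - m).factorial : ℚ) ≠ 0 := by exact_mod_cast (K-m).factorial_ne_zero
  have h3 : (m.factorial : ℚ) ≠ 0 := by exact_mod_cast m.factorial_ne_zero
  field_simp

lemma sum_update' (G : ℕ) (l : Fin G → ℕ) (idx : Fin G) (v : ℕ) :
    ∑ j, Function.update l idx v j = v + ∑ j ∈ Finset.univ.erase idx, l j := by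
  rw [← Finset.add_sum_erase Finset.univ (fun j => Function.update l idx v j)
    (Finset.mem_univ idx)]
  congr 1
  · rw [Function.update_self]
  · refine Finset.sum_congr rfl fun j hj => ?_
    rw [Function.update_of_ne (Finset.mem_erase.1 hj).1]

lemma prod_fac_update (G : ℕ) (l : Fin G → ℕ) (idx : Fin G) (v : ℕ) :
    ∏ j, ((Function.update l idx v j).factorial : ℚ)
      = (v.factorial : ℚ) * ∏ j ∈ Finset.univ.erase idx, ((l j).factorial : ℚ) := by
  rw [← Finset.mul_prod_erase Finset.univ (fun j => ((Function.update l idx v j).factorial : ℚ))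
    (Finset.mem_univ idx)]
  congr 1
  · rw [Function.update_self]
  · refine Finset.prod_congr rfl fun j hj => ?_
    rw [Function.update_of_ne (Finset.mem_erase.1 hj).1]

lemma bound_of_sum (G N : ℕ) (l : Fin G → ℕ) (h : ∑ j, (j.1+1) * l j = N) :
    ∀ j, l j < N + 1 := fun j =>
  Nat.lt_succ_of_le ((Nat.le_mul_of_pos_left _ (Nat.succ_pos _)).trans
    (h ▸ Finset.single_le_sum (f := fun j : Fin G => (j.1+1) * l j)
      (fun _ _ => Nat.zero_le _) (Finset.mem_univ j)))

/-- For `G ≥ 1`, `K ≥ 1`, `1 ≤ i ≤ G` and `N ≥ i`: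
`Σ kᵢ · K!/(k₁!⋯k_G!·(K − Σⱼ kⱼ)!) = K · W_G(K−1, N−i)`, the sum running over all
`G`-tuples `(k₁, …, k_G)` of non-negative integers with `Σⱼ j·kⱼ = N` and `Σⱼ kⱼ ≤ K`;
i.e. the Gentile-measure mean number of states occupied by exactly `i` particles is
`⟨kᵢ⟩ = K · W_G(K−1, N−i) / W_G(K, N)`. -/
theorem stmt10 (G K i N : ℕ) (hG : 1 ≤ G) (hK : 1 ≤ K) (hi1 : 1 ≤ i) (hiG : i ≤ G)
    (hN : i ≤ N) :
    ∑ l ∈ (Fintype.piFinset fun _ : Fin G => Finset.range (N + 1)).filter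
        (fun l => (∑ j, (j.1 + 1) * l j) = N ∧ (∑ j, l j) ≤ K),
      (l ⟨i - 1, by omega⟩ : ℚ) *
        ((Nat.factorial K : ℚ) /
          ((∏ j, (Nat.factorial (l j) : ℚ)) * (Nat.factorial (K - ∑ j, l j) : ℚ))) =
      (K : ℚ) * (gentileWeight G (K - 1) (N - i) : ℚ) := by
  set idx : Fin G := ⟨i - 1, by omega⟩ with hidxdef
  have hidx1 : (idx : ℕ) + 1 = i := by simp only [hidxdef]; omega
  rw [gentile_eq_sum, Finset.mul_sum]
  rw [← Finset.sum_filter_of_ne (p := fun l => l idx ≠ 0)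
    (fun l hl h0 => by
      intro hz
      exact h0 (by rw [hz]; simp))]
  refine Finset.sum_nbij' (fun l => Function.update l idx (l idx - 1))
    (fun l => Function.update l idx (l idx + 1)) ?_ ?_ ?_ ?_ ?_
  · -- forward membership
    intro a ha
    simp only [Finset.mem_filter, Fintype.mem_piFinset, Finset.mem_range] at ha ⊢
    obtain ⟨⟨-, hsum, hle⟩, h0⟩ := ha
    have hc : 1 ≤ a idx := Nat.pos_of_ne_zero h0
    have hsum' : ∑ j, (j.1+1) * Function.update a idx (a idx - 1) j = N - i := by
      rw [sum_mul_update]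
      have h1 : ∑ j, (j.1+1) * a j
          = (idx.1+1) * a idx + ∑ j ∈ Finset.univ.erase idx, (j.1+1) * a j :=
        (Finset.add_sum_erase _ _ (Finset.mem_univ idx)).symm
      rw [h1, hidx1] at hsum
      rw [hidx1]
      have h2 : i * a idx = i * (a idx - 1) + i := by
        conv_lhs => rw [show a idx = (a idx - 1) + 1 from (Nat.succ_pred_eq_of_pos hc).symm]
        rw [Nat.mul_succ]
      omega
    refine ⟨fun j => bound_of_sum G (N - i) _ hsum' j, hsum', ?_⟩
    rw [sum_update']
    have h3 : ∑ j, a j = a idx + ∑ j ∈ Finset.univ.erase idx, a j :=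
      (Finset.add_sum_erase _ _ (Finset.mem_univ idx)).symm
    omega
  · -- backward membership
    intro b hb
    simp only [Finset.mem_filter, Fintype.mem_piFinset, Finset.mem_range] at hb ⊢
    obtain ⟨-, hsum, hle⟩ := hb
    have hsum' : ∑ j, (j.1+1) * Function.update b idx (b idx + 1) j = N := by
      rw [sum_mul_update, hidx1]
      have h1 : ∑ j, (j.1+1) * b j
          = (idx.1+1) * b idx + ∑ j ∈ Finset.univ.erase idx, (j.1+1) * b j :=
        (Finset.add_sum_erase _ _ (Finset.mem_univ idx)).symm
      rw [h1, hidx1] at hsum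
      rw [Nat.mul_succ]
      omega
    refine ⟨⟨fun j => bound_of_sum G N _ hsum' j, hsum', ?_⟩, ?_⟩
    · rw [sum_update']
      have h3 : ∑ j, b j = b idx + ∑ j ∈ Finset.univ.erase idx, b j :=
        (Finset.add_sum_erase _ _ (Finset.mem_univ idx)).symm
      omega
    · simp [Function.update_self]
  · -- left inverse
    intro a ha
    simp only [Finset.mem_filter] at ha
    have h0 : a idx ≠ 0 := ha.2
    simp only [Function.update_idem, Function.update_self]
    rw [show a idx - 1 + 1 = a idx by omega, Function.update_eq_self]
  · -- right inverse
    intro b hb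
    simp [Function.update_idem, Function.update_self]
  · -- term equality
    intro a ha
    simp only [Finset.mem_filter, Fintype.mem_piFinset, Finset.mem_range] at ha
    obtain ⟨⟨-, hsum, hle⟩, h0⟩ := ha
    have hc : 1 ≤ a idx := Nat.pos_of_ne_zero h0
    set c := a idx with hcdef
    set S := ∑ j ∈ Finset.univ.erase idx, a j with hSdef
    set P := ∏ j ∈ Finset.univ.erase idx, ((a j).factorial : ℚ) with hPdef
    have hSa : ∑ j, a j = c + S := (Finset.add_sum_erase _ _ (Finset.mem_univ idx)).symm
    have hPa : ∏ j, ((a j).factorial : ℚ) = (c.factorial : ℚ) * P :=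
      (Finset.mul_prod_erase Finset.univ (fun j => ((a j).factorial : ℚ))
        (Finset.mem_univ idx)).symm
    have hSu : ∑ j, Function.update a idx (c - 1) j = (c - 1) + S := sum_update' G a idx _
    have hPu : ∏ j, ((Function.update a idx (c - 1) j).factorial : ℚ)
        = ((c-1).factorial : ℚ) * P := prod_fac_update G a idx _
    have hupidx : Function.update a idx (c - 1) idx = c - 1 := Function.update_self _ _ _
    rw [hSa, hPa, hSu, hPu]
    have hcle : c + S ≤ K := hSa ▸ hle
    have hD : K - (c + S) = (K - 1) - ((c - 1) + S) := by omega
    have hcfac : (c.factorial : ℚ) = (c : ℚ) * ((c-1).factorial : ℚ) := by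
      rw [show c = (c - 1) + 1 from (Nat.succ_pred_eq_of_pos hc).symm]
      push_cast [Nat.factorial_succ]
      simp
    have hKfac : (K.factorial : ℚ) = (K : ℚ) * ((K-1).factorial : ℚ) := by
      rw [show K = (K - 1) + 1 from (Nat.succ_pred_eq_of_pos hK).symm]
      push_cast [Nat.factorial_succ]
      simp
    rw [hD, hcfac, hKfac]
    have hPpos : (0:ℚ) < P := Finset.prod_pos fun j _ => by exact_mod_cast (a j).factorial_pos
    have hc1 : ((c-1).factorial : ℚ) ≠ 0 := by exact_mod_cast (c-1).factorial_ne_zero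
    have hD1 : (((K-1) - ((c-1)+S)).factorial : ℚ) ≠ 0 := by
      exact_mod_cast ((K-1) - ((c-1)+S)).factorial_ne_zero
    have hcQ : (c : ℚ) ≠ 0 := by exact_mod_cast h0
    field_simp
end

section
/- Let G ≥ 1 be an integer and ρ a real number with 0 < ρ < 1. Then there exists a unique real number t > 0 such that Σ_{j=1}^{G} j·t^j = Gρ · Σ_{j=0}^{G} t^j. (Equivalently, equation Gρ = t(1−(G+1)t^G+G·t^{G+1})/((1−t)(1−t^{G+1})) has a unique positive solution.) -/
open Finset

private lemma phi_strict (G : ℕ) (a : ℝ) (ha : 0 < a) :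
    StrictMonoOn (fun t : ℝ => ∑ j ∈ Finset.range (G + 1), ((j : ℝ) - a) * t ^ ((j : ℝ) - a))
      (Set.Ioi 0) := by
  intro s hs t ht hst
  simp only [Set.mem_Ioi] at hs ht
  have hterm : ∀ j ∈ Finset.range (G + 1),
      ((j : ℝ) - a) * s ^ ((j : ℝ) - a) ≤ ((j : ℝ) - a) * t ^ ((j : ℝ) - a) := by
    intro j _
    rcases le_or_gt ((j : ℝ) - a) 0 with hc | hc
    · have h1 : t ^ ((j : ℝ) - a) ≤ s ^ ((j : ℝ) - a) :=
        Real.rpow_le_rpow_of_nonpos hs hst.le hc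
      exact mul_le_mul_of_nonpos_left h1 hc
    · have h1 : s ^ ((j : ℝ) - a) ≤ t ^ ((j : ℝ) - a) :=
        Real.rpow_le_rpow hs.le hst.le hc.le
      exact mul_le_mul_of_nonneg_left h1 hc.le
  have h0 : ((0 : ℝ) - a) * s ^ ((0 : ℝ) - a) < ((0 : ℝ) - a) * t ^ ((0 : ℝ) - a) := by
    have h1 : t ^ ((0 : ℝ) - a) < s ^ ((0 : ℝ) - a) :=
      Real.rpow_lt_rpow_of_neg hs hst (by linarith)
    have h2 : (0 : ℝ) - a < 0 := by linarith
    nlinarith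
  have h0' : (0 : ℕ) ∈ Finset.range (G + 1) := by simp
  exact Finset.sum_lt_sum (by intro j hj; exact hterm j hj) ⟨0, h0', by simpa using h0⟩

/-- For an integer `G ≥ 1` and a real `0 < ρ < 1`, there exists a unique
real `t > 0` such that `Σ_{j=1}^{G} j·t^j = Gρ · Σ_{j=0}^{G} t^j`. -/
theorem stmt12 (G : ℕ) (hG : 1 ≤ G) (ρ : ℝ) (hρ0 : 0 < ρ) (hρ1 : ρ < 1) :
    ∃! t : ℝ, 0 < t ∧
      ∑ j ∈ Finset.Icc 1 G, (j : ℝ) * t ^ j =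
        (G : ℝ) * ρ * ∑ j ∈ Finset.range (G + 1), t ^ j := by
  set a : ℝ := (G : ℝ) * ρ with ha_def
  have hG0 : (0 : ℝ) < G := by exact_mod_cast hG
  have ha0 : 0 < a := by positivity
  have haG : a < G := by
    have := mul_lt_mul_of_pos_left hρ1 hG0
    simpa [ha_def] using this
  set F : ℝ → ℝ := fun t => ∑ j ∈ Finset.range (G + 1), ((j : ℝ) - a) * t ^ j with hF_def
  -- the equation is equivalent to F t = 0
  have key : ∀ t : ℝ,
      (∑ j ∈ Finset.Icc 1 G, (j : ℝ) * t ^ j =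
        (G : ℝ) * ρ * ∑ j ∈ Finset.range (G + 1), t ^ j) ↔ F t = 0 := by
    intro t
    have hIcc : ∑ j ∈ Finset.Icc 1 G, (j : ℝ) * t ^ j
        = ∑ j ∈ Finset.range (G + 1), (j : ℝ) * t ^ j := by
      refine Finset.sum_subset ?_ ?_
      · intro j hj
        rw [Finset.mem_Icc] at hj
        rw [Finset.mem_range]
        omega
      · intro j hj hj'
        simp only [Finset.mem_range, Finset.mem_Icc, not_and, not_le] at hj hj'
        have : j = 0 := by omega
        simp [this]
    have hsplit : F t = (∑ j ∈ Finset.range (G + 1), (j : ℝ) * t ^ j)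
        - a * ∑ j ∈ Finset.range (G + 1), t ^ j := by
      simp [hF_def, sub_mul, Finset.sum_sub_distrib, Finset.mul_sum]
    rw [hIcc, hsplit, sub_eq_zero, ha_def]
  -- continuity of F
  have hFcont : Continuous F := by
    apply continuous_finset_sum
    intro j _
    exact (continuous_const.mul (continuous_pow j))
  -- F 0 < 0
  have hF0 : F 0 < 0 := by
    have : F 0 = -a := by
      simp only [hF_def]
      rw [Finset.sum_eq_single 0]
      · simp
      · intro j _ hj
        simp [zero_pow hj]
      · simp
    rw [this]; linarith
  -- find T with F T > 0
  obtain ⟨T, hT1, hFT⟩ : ∃ T : ℝ, 1 ≤ T ∧ 0 < F T := by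
    refine ⟨max 1 ((G : ℝ) * a / ((G : ℝ) - a) + 1), le_max_left _ _, ?_⟩
    set T := max 1 ((G : ℝ) * a / ((G : ℝ) - a) + 1) with hT_def
    have hT1 : (1 : ℝ) ≤ T := le_max_left _ _
    have hT0 : (0 : ℝ) < T := by linarith
    have hTbig : (G : ℝ) * a / ((G : ℝ) - a) + 1 ≤ T := le_max_right _ _
    have hTG : (G : ℝ) * a < ((G : ℝ) - a) * T := by
      have h1 : (G : ℝ) * a / ((G : ℝ) - a) < T := by linarith
      have h2 : 0 < (G : ℝ) - a := by linarith
      calc (G : ℝ) * a = ((G : ℝ) * a / ((G : ℝ) - a)) * ((G : ℝ) - a) := by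
            field_simp
        _ < T * ((G : ℝ) - a) := by
            apply mul_lt_mul_of_pos_right h1 h2
        _ = ((G : ℝ) - a) * T := by ring
    have hsucc : F T = ((G : ℝ) - a) * T ^ G
        + ∑ j ∈ Finset.range G, ((j : ℝ) - a) * T ^ j := by
      simp only [hF_def]
      rw [Finset.sum_range_succ]; ring
    have hbound : ∀ j ∈ Finset.range G,
        -a * T ^ (G - 1) ≤ ((j : ℝ) - a) * T ^ j := by
      intro j hj
      rw [Finset.mem_range] at hj
      have hTj : (0 : ℝ) < T ^ j := by positivity
      have hTG1 : (0 : ℝ) < T ^ (G - 1) := by positivity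
      rcases le_or_gt ((j : ℝ) - a) 0 with hc | hc
      · have hle : T ^ j ≤ T ^ (G - 1) := pow_le_pow_right₀ hT1 (by omega)
        have h1 : ((j : ℝ) - a) * T ^ (G - 1) ≤ ((j : ℝ) - a) * T ^ j :=
          mul_le_mul_of_nonpos_left hle hc
        have h2 : -a * T ^ (G - 1) ≤ ((j : ℝ) - a) * T ^ (G - 1) := by
          have : -a ≤ (j : ℝ) - a := by
            have : (0 : ℝ) ≤ j := Nat.cast_nonneg j
            linarith
          exact mul_le_mul_of_nonneg_right this hTG1.le
        linarith
      · have h1 : 0 ≤ ((j : ℝ) - a) * T ^ j := mul_nonneg hc.le hTj.le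
        have h2 : -a * T ^ (G - 1) ≤ 0 := by nlinarith
        linarith
    have hsum : -((G : ℝ) * a * T ^ (G - 1))
        ≤ ∑ j ∈ Finset.range G, ((j : ℝ) - a) * T ^ j := by
      calc -((G : ℝ) * a * T ^ (G - 1))
          = ∑ _j ∈ Finset.range G, -a * T ^ (G - 1) := by
            rw [Finset.sum_const, Finset.card_range]; ring
        _ ≤ _ := Finset.sum_le_sum hbound
    have hpow : T ^ G = T ^ (G - 1) * T := by
      rw [← pow_succ]
      congr 1
      omega
    have hTG1 : (0 : ℝ) < T ^ (G - 1) := by positivity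
    have : ((G : ℝ) * a) * T ^ (G - 1) < (((G : ℝ) - a) * T) * T ^ (G - 1) :=
      mul_lt_mul_of_pos_right hTG hTG1
    rw [hsucc, hpow]
    nlinarith
  -- existence via IVT
  obtain ⟨t₀, ht₀mem, ht₀⟩ : ∃ t₀ ∈ Set.Icc (0 : ℝ) T, F t₀ = 0 := by
    have h01 : (0 : ℝ) ≤ T := by linarith
    have := intermediate_value_Icc h01 hFcont.continuousOn
    have hmem : (0 : ℝ) ∈ Set.Icc (F 0) (F T) := ⟨hF0.le, hFT.le⟩
    obtain ⟨t₀, ht₀, ht₀'⟩ := this hmem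
    exact ⟨t₀, ht₀, ht₀'⟩
  have ht₀pos : 0 < t₀ := by
    rcases lt_or_eq_of_le ht₀mem.1 with h | h
    · exact h
    · exfalso
      rw [← h] at ht₀
      rw [ht₀] at hF0
      exact lt_irrefl _ hF0
  -- uniqueness via strict monotonicity of Φ
  have huniq : ∀ s t : ℝ, 0 < s → 0 < t → F s = 0 → F t = 0 → s = t := by
    intro s t hs ht hFs hFt
    set Φ : ℝ → ℝ := fun u =>
      ∑ j ∈ Finset.range (G + 1), ((j : ℝ) - a) * u ^ ((j : ℝ) - a) with hΦ_def
    have hΦF : ∀ u : ℝ, 0 < u → Φ u = F u * u ^ (-a : ℝ) := by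
      intro u hu
      simp only [hΦ_def, hF_def]
      simp only [Finset.sum_mul]
      apply Finset.sum_congr rfl
      intro j _
      rw [sub_eq_add_neg, Real.rpow_add hu, Real.rpow_natCast]
      ring
    have hΦs : Φ s = 0 := by rw [hΦF s hs, hFs]; ring
    have hΦt : Φ t = 0 := by rw [hΦF t ht, hFt]; ring
    by_contra hne
    rcases lt_or_gt_of_ne hne with h | h
    · have := phi_strict G a ha0 (Set.mem_Ioi.2 hs) (Set.mem_Ioi.2 ht) h
      rw [← hΦ_def] at this
      rw [hΦs, hΦt] at this
      exact lt_irrefl _ this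
    · have := phi_strict G a ha0 (Set.mem_Ioi.2 ht) (Set.mem_Ioi.2 hs) h
      rw [← hΦ_def] at this
      rw [hΦs, hΦt] at this
      exact lt_irrefl _ this
  refine ⟨t₀, ⟨ht₀pos, (key t₀).2 ht₀⟩, ?_⟩
  rintro t ⟨htpos, hteq⟩
  exact huniq t t₀ htpos ht₀pos ((key t).1 hteq) ht₀
end

section
/- Let G ≥ 1 be an integer, ρ a real number, and x > 0 a real number satisfying Σ_{j=1}^{G} j·x^j = Gρ · Σ_{j=0}^{G} x^j. Then y = 1/x satisfies Σ_{j=1}^{G} j·y^j = G(1−ρ) · Σ_{j=0}^{G} y^j, and for every integer 0 ≤ i ≤ G one has y^i / Σ_{j=0}^{G} y^j = x^{G−i} / Σ_{j=0}^{G} x^j. (This is the duality κ_i(1−ρ) = κ_{G−i}(ρ) for the limiting occupation fractions.) -/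
open Finset

/-- **duality `κᵢ(1−ρ) = κ_{G−i}(ρ)`.** Let `G ≥ 1`, `ρ` real, and `x > 0`
with `Σ_{j=1}^{G} j·x^j = Gρ·Σ_{j=0}^{G} x^j`. Then `y = 1/x` satisfies
`Σ_{j=1}^{G} j·y^j = G(1−ρ)·Σ_{j=0}^{G} y^j`, and for every `0 ≤ i ≤ G`,
`y^i / Σ_{j=0}^{G} y^j = x^{G−i} / Σ_{j=0}^{G} x^j`. -/
theorem stmt13 (G : ℕ) (hG : 1 ≤ G) (ρ x : ℝ) (hx : 0 < x)
    (heq : ∑ j ∈ Finset.Icc 1 G, (j : ℝ) * x ^ j =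
      (G : ℝ) * ρ * ∑ j ∈ Finset.range (G + 1), x ^ j) :
    (∑ j ∈ Finset.Icc 1 G, (j : ℝ) * (1 / x) ^ j =
        (G : ℝ) * (1 - ρ) * ∑ j ∈ Finset.range (G + 1), (1 / x) ^ j) ∧
      ∀ i : ℕ, i ≤ G →
        (1 / x) ^ i / (∑ j ∈ Finset.range (G + 1), (1 / x) ^ j) =
          x ^ (G - i) / (∑ j ∈ Finset.range (G + 1), x ^ j) := by
  have hx0 : x ≠ 0 := ne_of_gt hx
  have hxG : (0:ℝ) < x ^ G := pow_pos hx G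
  set S : ℝ := ∑ j ∈ Finset.range (G + 1), x ^ j with hS
  have hSpos : 0 < S := Finset.sum_pos (fun j _ => pow_pos hx j) ⟨0, by simp⟩
  -- key pointwise identity
  have hkey : ∀ j : ℕ, j ≤ G → (1 / x) ^ j * x ^ G = x ^ (G - j) := by
    intro j hj
    rw [← pow_sub_mul_pow x hj, one_div, inv_pow]
    field_simp
  -- Icc sums equal range sums (j = 0 term vanishes)
  have hicc : ∀ y : ℝ, (∑ j ∈ Finset.Icc 1 G, (j : ℝ) * y ^ j)
      = ∑ j ∈ Finset.range (G + 1), (j : ℝ) * y ^ j := by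
    intro y
    rw [Finset.range_eq_Ico, Finset.sum_eq_sum_Ico_succ_bot (by omega)]
    rw [Finset.Ico_add_one_right_eq_Icc]
    simp
  -- sum of (1/x)^j
  have h1 : (∑ j ∈ Finset.range (G + 1), (1 / x) ^ j) = S / x ^ G := by
    rw [eq_div_iff (ne_of_gt hxG), Finset.sum_mul, hS,
      ← Finset.sum_range_reflect (fun j => x ^ j) (G + 1)]
    refine Finset.sum_congr rfl fun j hj => ?_
    have hjG : j ≤ G := Nat.lt_succ_iff.mp (Finset.mem_range.mp hj)
    rw [hkey j hjG]
    congr 1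
  -- weighted sum of (1/x)^j
  have h2 : (∑ j ∈ Finset.range (G + 1), (j : ℝ) * (1 / x) ^ j)
      = (G : ℝ) * (1 - ρ) * S / x ^ G := by
    rw [eq_div_iff (ne_of_gt hxG), Finset.sum_mul]
    have hlhs : (∑ j ∈ Finset.range (G + 1), (j : ℝ) * (1 / x) ^ j * x ^ G)
        = ∑ j ∈ Finset.range (G + 1), ((G : ℝ) - j) * x ^ j := by
      rw [← Finset.sum_range_reflect (fun j => ((G : ℝ) - j) * x ^ j) (G + 1)]
      refine Finset.sum_congr rfl fun j hj => ?_
      have hjG : j ≤ G := Nat.lt_succ_iff.mp (Finset.mem_range.mp hj)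
      rw [mul_assoc, hkey j hjG]
      have h1' : (G + 1) - 1 - j = G - j := by omega
      rw [h1']
      have : ((G : ℝ) - ((G - j : ℕ) : ℝ)) = (j : ℝ) := by
        have : ((G - j : ℕ) : ℝ) = (G : ℝ) - j := by
          push_cast [Nat.cast_sub hjG]; ring
        rw [this]; ring
      rw [this]
    rw [hlhs]
    have hsplit : (∑ j ∈ Finset.range (G + 1), ((G : ℝ) - j) * x ^ j)
        = (G : ℝ) * S - ∑ j ∈ Finset.range (G + 1), (j : ℝ) * x ^ j := by
      rw [hS, Finset.mul_sum, ← Finset.sum_sub_distrib]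
      exact Finset.sum_congr rfl fun j _ => by ring
    rw [hsplit, ← hicc x, heq]
    ring
  constructor
  · rw [hicc, h2, h1]; ring
  · intro i hi
    rw [h1, div_div_eq_mul_div, hkey i hi]
end

section
/- Let ρ be a real number with 0 < ρ < 1 and let x > 0 satisfy x + 2x² = 2ρ(1 + x + x²) (the case G = 2). Then x/(1+x+x²) = −1/3 + (1/3)·√(1 + 12ρ − 12ρ²) and x²/(1+x+x²) = 1/6 + ρ − (1/6)·√(1 + 12ρ − 12ρ²); consequently 1/(1+x+x²) = 7/6 − ρ − (1/6)·√(1 + 12ρ − 12ρ²). -/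
/-- **Gentile statistics of order `G = 2`.** For `0 < ρ < 1` and `x > 0` with
`x + 2x² = 2ρ(1 + x + x²)`, the limiting occupation fractions are
`κ₁ = x/(1+x+x²) = −1/3 + (1/3)√(1+12ρ−12ρ²)`,
`κ₂ = x²/(1+x+x²) = 1/6 + ρ − (1/6)√(1+12ρ−12ρ²)`, and
`κ₀ = 1/(1+x+x²) = 7/6 − ρ − (1/6)√(1+12ρ−12ρ²)`. -/
theorem stmt14 (ρ x : ℝ) (hρ0 : 0 < ρ) (hρ1 : ρ < 1) (hx : 0 < x)
    (heq : x + 2 * x ^ 2 = 2 * ρ * (1 + x + x ^ 2)) :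
    x / (1 + x + x ^ 2) = -1 / 3 + (1 / 3) * Real.sqrt (1 + 12 * ρ - 12 * ρ ^ 2) ∧
      x ^ 2 / (1 + x + x ^ 2) = 1 / 6 + ρ - (1 / 6) * Real.sqrt (1 + 12 * ρ - 12 * ρ ^ 2) ∧
      1 / (1 + x + x ^ 2) = 7 / 6 - ρ - (1 / 6) * Real.sqrt (1 + 12 * ρ - 12 * ρ ^ 2) := by
  set s : ℝ := 1 + x + x ^ 2 with hs_def
  have hs : 0 < s := by positivity
  have harg : (0:ℝ) ≤ 1 + 12 * ρ - 12 * ρ ^ 2 := by nlinarith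
  set D : ℝ := Real.sqrt (1 + 12 * ρ - 12 * ρ ^ 2) with hD_def
  have hD0 : 0 ≤ D := Real.sqrt_nonneg _
  have hD2 : D ^ 2 = 1 + 12 * ρ - 12 * ρ ^ 2 := Real.sq_sqrt harg
  have hkey : (3 * x + s) ^ 2 = (s * D) ^ 2 := by
    rw [mul_pow, hD2, hs_def]
    linear_combination (6 * (1 + x + x ^ 2) - 3 * (x + 2 * x ^ 2)
      - 6 * ρ * (1 + x + x ^ 2)) * heq
  have hsd : 3 * x + s = s * D := by
    have h1 : 0 ≤ 3 * x + s := by positivity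
    have h2 : 0 ≤ s * D := mul_nonneg hs.le hD0
    nlinarith [sq_nonneg (3 * x + s - s * D)]
  have hsne : s ≠ 0 := ne_of_gt hs
  refine ⟨?_, ?_, ?_⟩
  · rw [div_eq_iff hsne]
    linear_combination (1/3) * hsd
  · rw [div_eq_iff hsne]
    linear_combination (-1/6) * hsd + (1/2) * heq
  · rw [div_eq_iff hsne]
    linear_combination (-1/6) * hsd + (-1/2) * heq
end

section
/- Let q ≥ 1 be an integer, r = q+1 (so r−q = 1, the 'semionic family'), P ≥ 0, N = rP+1, and let K be an integer with K ≥ qP + 1. Then under the Haldane probability measure the mean number of doubly occupied states is ⟨k_2⟩ = Σ_{λ ⊢ N} k_2(λ)·ℙ(λ) = N·P/(K+P), and the mean number of singly occupied states is ⟨k_1⟩ = Σ_{λ ⊢ N} k_1(λ)·ℙ(λ) = N·(K−P)/(K+P). -/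
open Finset

namespace Stmt16Aux

lemma vandermonde (a b n : ℕ) :
    ∑ m ∈ range (n+1), a.choose m * b.choose (n - m) = (a + b).choose n := by
  rw [Nat.add_choose_eq, Finset.Nat.sum_antidiagonal_eq_sum_range_succ_mk]

lemma weighted_vandermonde (P K n : ℕ) :
    ∑ m ∈ range (n+1+1), m * (P.choose m * K.choose (n+1 - m))
      = P * ((P-1) + K).choose n := by
  rcases P with _ | p
  · rw [Finset.sum_eq_zero, Nat.zero_mul]
    intro m hm
    rcases Nat.eq_zero_or_pos m with h | h
    · simp [h]
    · rw [Nat.choose_eq_zero_of_lt h]; ring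
  · rw [Finset.sum_range_succ']
    simp only [Nat.zero_mul, add_zero]
    have : ∀ m ∈ range (n+1), (m+1) * ((p+1).choose (m+1) * K.choose (n+1 - (m+1)))
        = (p+1) * (p.choose m * K.choose (n - m)) := by
      intro m hm
      have h1 : (m+1) * ((p+1).choose (m+1)) = (p+1) * p.choose m := by
        simpa [mul_comm] using (Nat.add_one_mul_choose_eq p m).symm
      have h2 : n + 1 - (m+1) = n - m := by omega
      rw [h2, ← mul_assoc, h1, mul_assoc]
    rw [Finset.sum_congr rfl this, ← Finset.mul_sum, vandermonde]
    simp

end Stmt16Aux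

namespace Stmt16Aux

/-- The partition of `N` with `min m (N/2)` parts equal to 2 and the rest 1. -/
def pt (N m : ℕ) : Nat.Partition N where
  parts := Multiset.replicate (min m (N/2)) 2 + Multiset.replicate (N - 2 * min m (N/2)) 1
  parts_pos := by
    intro i hi
    rw [Multiset.mem_add] at hi
    rcases hi with h | h <;> · have := Multiset.eq_of_mem_replicate h; omega
  parts_sum := by
    rw [Multiset.sum_add, Multiset.sum_replicate, Multiset.sum_replicate,
      smul_eq_mul, smul_eq_mul]
    omega

lemma pt_count_one (N m : ℕ) (hm : m ≤ N / 2) :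
    (pt N m).parts.count 1 = N - 2 * m := by
  simp [pt, Multiset.count_replicate, min_eq_left hm]

lemma pt_count_two (N m : ℕ) (hm : m ≤ N / 2) :
    (pt N m).parts.count 2 = m := by
  simp [pt, Multiset.count_replicate, min_eq_left hm]

lemma pt_count_other (N m i : ℕ) (h1 : i ≠ 1) (h2 : i ≠ 2) :
    (pt N m).parts.count i = 0 := by
  simp [pt, Multiset.count_replicate, h1, h2, Ne.symm h1, Ne.symm h2]

lemma pt_card (N m : ℕ) (hm : m ≤ N / 2) :
    Multiset.card (pt N m).parts = N - m := by
  simp only [pt, Multiset.card_add, Multiset.card_replicate, min_eq_left hm]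
  omega

lemma pt_parts_le (N m i : ℕ) (hi : i ∈ (pt N m).parts) : i ≤ 2 := by
  simp only [pt, Multiset.mem_add] at hi
  rcases hi with h | h <;> · have := Multiset.eq_of_mem_replicate h; omega

end Stmt16Aux

namespace Stmt16Aux

lemma parts_decomp {N : ℕ} (lam : Nat.Partition N) (h : ∀ i ∈ lam.parts, i ≤ 2) :
    lam.parts = Multiset.replicate (lam.parts.count 2) 2
      + Multiset.replicate (lam.parts.count 1) 1 := by
  ext i
  rw [Multiset.count_add, Multiset.count_replicate, Multiset.count_replicate]
  rcases eq_or_ne i 2 with rfl | h2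
  · simp
  rcases eq_or_ne i 1 with rfl | h1
  · simp
  · have : i ∉ lam.parts := by
      intro hi
      have := h i hi
      have := lam.parts_pos hi
      omega
    rw [Multiset.count_eq_zero_of_notMem this]
    simp [Ne.symm h1, Ne.symm h2]

lemma parts_sum_eq {N : ℕ} (lam : Nat.Partition N) (h : ∀ i ∈ lam.parts, i ≤ 2) :
    2 * lam.parts.count 2 + lam.parts.count 1 = N := by
  have hs := lam.parts_sum
  rw [parts_decomp lam h, Multiset.sum_add, Multiset.sum_replicate,
    Multiset.sum_replicate, smul_eq_mul, smul_eq_mul] at hs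
  omega

lemma sum_eq_range (N : ℕ) (F : Nat.Partition N → ℚ)
    (hF : ∀ lam : Nat.Partition N, ¬ (∀ i ∈ lam.parts, i ≤ 2) → F lam = 0) :
    ∑ lam : Nat.Partition N, F lam = ∑ m ∈ range (N / 2 + 1), F (pt N m) := by
  classical
  rw [← Finset.sum_filter_of_ne (p := fun lam : Nat.Partition N => ∀ i ∈ lam.parts, i ≤ 2)
      (fun x _ hx => by by_contra hc; exact hx (hF x hc))]
  have left_inv : ∀ lam ∈ Finset.univ.filter (fun lam : Nat.Partition N => ∀ i ∈ lam.parts, i ≤ 2),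
      pt N (lam.parts.count 2) = lam := by
    intro lam hlam
    rw [Finset.mem_filter] at hlam
    have hsum := parts_sum_eq lam hlam.2
    have hm : lam.parts.count 2 ≤ N / 2 := by omega
    apply Nat.Partition.ext
    conv_rhs => rw [parts_decomp lam hlam.2]
    simp only [pt, min_eq_left hm]
    rw [show N - 2 * lam.parts.count 2 = lam.parts.count 1 from by omega]
  refine Finset.sum_nbij' (fun lam => lam.parts.count 2) (pt N) ?_ ?_ ?_ ?_ ?_
  · intro lam hlam
    beta_reduce
    rw [Finset.mem_filter] at hlam
    have := parts_sum_eq lam hlam.2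
    rw [Finset.mem_range]
    omega
  · intro m hm
    rw [Finset.mem_range] at hm
    rw [Finset.mem_filter]
    exact ⟨Finset.mem_univ _, fun i hi => pt_parts_le N m i hi⟩
  · exact left_inv
  · intro m hm
    beta_reduce
    rw [Finset.mem_range] at hm
    exact pt_count_two N m (by omega)
  · intro lam hlam
    exact congrArg F (left_inv lam hlam).symm

end Stmt16Aux

namespace Stmt16Aux

lemma prod_fact (N m : ℕ) (hm : m ≤ N / 2) (hN : 1 ≤ N) :
    ∏ i ∈ Finset.Icc 1 N, (Nat.factorial ((pt N m).parts.count i) : ℚ)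
      = (Nat.factorial (N - 2 * m) : ℚ) * (Nat.factorial m : ℚ) := by
  rcases Nat.lt_or_ge N 2 with h2 | h2
  · have hN1 : N = 1 := by omega
    have hm0 : m = 0 := by omega
    subst hN1; subst hm0
    rw [show Finset.Icc 1 1 = {1} from rfl, Finset.prod_singleton, pt_count_one 1 0 (by omega)]
    norm_num [Nat.factorial]
  · have hsub : ({1, 2} : Finset ℕ) ⊆ Finset.Icc 1 N := by
      intro x hx
      simp only [Finset.mem_insert, Finset.mem_singleton] at hx
      rw [Finset.mem_Icc]
      omega
    rw [← Finset.prod_subset hsub (fun x hx hx2 => by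
      simp only [Finset.mem_insert, Finset.mem_singleton, not_or] at hx2
      rw [pt_count_other N m x hx2.1 hx2.2]
      norm_num [Nat.factorial])]
    rw [Finset.prod_insert (by norm_num), Finset.prod_singleton,
      pt_count_one N m hm, pt_count_two N m hm]

lemma prob_pt (q P K N m : ℕ) (hm : m ≤ N / 2) (hN : 1 ≤ N) :
    haldaneProb q (q+1) P K N (pt N m)
      = (P.choose m : ℚ) * (K.choose (N - m) : ℚ) / ((K + P).choose N : ℚ) := by
  have hqr : q + 1 - q = 1 := by omega
  rw [haldaneProb, haldaneWeight, multiFactor, hqr, one_mul]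
  rw [if_pos (fun i hi => by have := pt_parts_le N m i hi; omega)]
  rw [pt_count_one N m hm, pt_card N m hm, prod_fact N m hm hN]
  rw [show Finset.range (1+1) = {0, 1} from rfl, Finset.prod_insert (by norm_num),
    Finset.prod_singleton, pt_count_one N m hm, pt_count_two N m hm]
  rw [show (N - m) - (N - 2*m) = m from by omega]
  have hc : ((N - m).choose (N - 2*m) : ℚ)
      = ((N - m).factorial : ℚ) / (((N - 2*m).factorial : ℚ) * (m.factorial : ℚ)) := by
    rw [Nat.cast_choose ℚ (show N - 2*m ≤ N - m from by omega),
      show (N - m) - (N - 2*m) = m from by omega]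
  rw [hc]
  have h1 : ((N - m).factorial : ℚ) ≠ 0 := by positivity
  have h2 : ((N - 2*m).factorial : ℚ) ≠ 0 := by positivity
  have h3 : ((m).factorial : ℚ) ≠ 0 := by positivity
  norm_num [Nat.choose]
  rw [div_mul_cancel₀ _ (div_ne_zero h1 (by positivity))]

end Stmt16Aux


/-- **semionic family `r = q + 1`.** Let `q ≥ 1`, `r = q + 1`, `P ≥ 0`,
`N = rP + 1`, and `K ≥ qP + 1`. Under the Haldane probability measure, the mean number of
doubly occupied states is `⟨k₂⟩ = N·P/(K+P)` and the mean number of singly occupied states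
is `⟨k₁⟩ = N·(K−P)/(K+P)`. -/
theorem stmt16 (q r P K N : ℕ) (hq : 1 ≤ q) (hr : r = q + 1) (hN : N = r * P + 1)
    (hK : q * P + 1 ≤ K) :
    (∑ lam : Nat.Partition N, (lam.parts.count 2 : ℚ) * haldaneProb q r P K N lam =
        (N : ℚ) * (P : ℚ) / ((K : ℚ) + (P : ℚ))) ∧
      (∑ lam : Nat.Partition N, (lam.parts.count 1 : ℚ) * haldaneProb q r P K N lam =
        (N : ℚ) * ((K : ℚ) - (P : ℚ)) / ((K : ℚ) + (P : ℚ))) := by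
  subst hr
  have hP1 : (q+1) * P = q*P + P := by ring
  have hqP : P ≤ q * P := Nat.le_mul_of_pos_left P hq
  have hN1 : 1 ≤ N := by omega
  have hNP : 2 * P + 1 ≤ N := by omega
  have hKN : N ≤ K + P := by omega
  have hK1 : 1 ≤ K := by omega
  obtain ⟨n, hn⟩ : ∃ n, N = n + 1 := ⟨N - 1, by omega⟩
  have hT : (((K + P).choose N : ℕ) : ℚ) ≠ 0 := by
    exact_mod_cast (Nat.choose_pos hKN).ne'
  have hKP : ((K : ℚ) + (P : ℚ)) ≠ 0 := by positivity
  have hzero : ∀ lam : Nat.Partition N, ¬ (∀ i ∈ lam.parts, i ≤ 2) →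
      haldaneProb q (q+1) P K N lam = 0 := by
    intro lam h
    rw [haldaneProb, haldaneWeight,
      if_neg (by rw [show q+1-q+1 = 2 from by omega]; exact h)]
    ring
  have key : ∀ c : ℕ,
      ∑ lam : Nat.Partition N, (lam.parts.count c : ℚ) * haldaneProb q (q+1) P K N lam
        = ∑ m ∈ Finset.range (N/2 + 1), ((Stmt16Aux.pt N m).parts.count c : ℚ) *
            ((P.choose m : ℚ) * (K.choose (N - m) : ℚ) / ((K + P).choose N : ℚ)) := by
    intro c
    rw [Stmt16Aux.sum_eq_range N _ (fun lam h => by rw [hzero lam h, mul_zero])]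
    refine Finset.sum_congr rfl fun m hm => ?_
    rw [Finset.mem_range] at hm
    rw [Stmt16Aux.prob_pt q P K N m (by omega) hN1]
  have hsubset : Finset.range (N/2 + 1) ⊆ Finset.range (N + 1) :=
    Finset.range_subset_range.mpr (by omega)
  have hvan : ∀ x ∈ Finset.range (N + 1), x ∉ Finset.range (N/2 + 1) → P < x := by
    intro x hx hx'
    rw [Finset.mem_range] at hx
    rw [Finset.mem_range] at hx'
    omega
  have hS0 : ∑ m ∈ Finset.range (N/2 + 1), P.choose m * K.choose (N - m)
      = (K + P).choose N := by
    rw [Finset.sum_subset hsubset (fun x hx hx' => by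
      rw [Nat.choose_eq_zero_of_lt (hvan x hx hx')]; ring)]
    rw [Stmt16Aux.vandermonde P K N, Nat.add_comm]
  have hS1 : ∑ m ∈ Finset.range (N/2 + 1), m * (P.choose m * K.choose (N - m))
      = P * ((P - 1) + K).choose n := by
    rw [Finset.sum_subset hsubset (fun x hx hx' => by
      rw [Nat.choose_eq_zero_of_lt (hvan x hx hx')]; ring)]
    rw [hn]
    exact Stmt16Aux.weighted_vandermonde P K n
  -- the two range sums in ℚ
  have hB : ∑ m ∈ Finset.range (N/2 + 1),
      ((P.choose m : ℚ) * (K.choose (N - m) : ℚ) / ((K + P).choose N : ℚ)) = 1 := by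
    rw [← Finset.sum_div]
    rw [show ∑ m ∈ Finset.range (N/2 + 1), (P.choose m : ℚ) * (K.choose (N - m) : ℚ)
        = ((K + P).choose N : ℚ) from by exact_mod_cast congrArg (Nat.cast (R := ℚ)) hS0]
    exact div_self hT
  have hA : ∑ m ∈ Finset.range (N/2 + 1),
      (m : ℚ) * ((P.choose m : ℚ) * (K.choose (N - m) : ℚ) / ((K + P).choose N : ℚ))
      = (N : ℚ) * (P : ℚ) / ((K : ℚ) + (P : ℚ)) := by
    have : ∀ m ∈ Finset.range (N/2 + 1),
        (m : ℚ) * ((P.choose m : ℚ) * (K.choose (N - m) : ℚ) / ((K + P).choose N : ℚ))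
        = ((m * (P.choose m * K.choose (N - m)) : ℕ) : ℚ) / ((K + P).choose N : ℚ) := by
      intro m hm
      push_cast
      ring
    rw [Finset.sum_congr rfl this, ← Finset.sum_div,
      show ∑ m ∈ Finset.range (N/2 + 1),
          ((m * (P.choose m * K.choose (N - m)) : ℕ) : ℚ)
        = ((P * ((P - 1) + K).choose n : ℕ) : ℚ) from by
          exact_mod_cast congrArg (Nat.cast (R := ℚ)) hS1]
    rcases Nat.eq_zero_or_pos P with hP0 | hP0
    · subst hP0; simp
    · have hid : (K + P) * ((K + P - 1).choose (N - 1)) = (K + P).choose N * N := by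
        have := Nat.add_one_mul_choose_eq (K + P - 1) (N - 1)
        rw [show K + P - 1 + 1 = K + P from by omega,
          show N - 1 + 1 = N from by omega] at this
        exact this
      have hidQ : ((K : ℚ) + P) * (((K + P - 1).choose (N - 1) : ℕ) : ℚ)
          = (((K + P).choose N : ℕ) : ℚ) * N := by exact_mod_cast hid
      rw [show (P - 1) + K = K + P - 1 from by omega, show n = N - 1 from by omega]
      rw [div_eq_div_iff hT hKP]
      push_cast
      linear_combination (P : ℚ) * hidQ
  constructor
  · rw [key 2]
    rw [Finset.sum_congr rfl (fun m hm => by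
      rw [Stmt16Aux.pt_count_two N m (by rw [Finset.mem_range] at hm; omega)])]
    exact hA
  · rw [key 1]
    have hc1 : ∀ m ∈ Finset.range (N/2 + 1),
        ((Stmt16Aux.pt N m).parts.count 1 : ℚ) *
          ((P.choose m : ℚ) * (K.choose (N - m) : ℚ) / ((K + P).choose N : ℚ))
        = ((N : ℚ) - 2 * m) *
          ((P.choose m : ℚ) * (K.choose (N - m) : ℚ) / ((K + P).choose N : ℚ)) := by
      intro m hm
      rw [Finset.mem_range] at hm
      rw [Stmt16Aux.pt_count_one N m (by omega)]
      rw [Nat.cast_sub (by omega : 2 * m ≤ N)]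
      push_cast
      ring
    rw [Finset.sum_congr rfl hc1]
    have : ∑ m ∈ Finset.range (N/2 + 1), ((N : ℚ) - 2 * m) *
        ((P.choose m : ℚ) * (K.choose (N - m) : ℚ) / ((K + P).choose N : ℚ))
        = (N : ℚ) * (∑ m ∈ Finset.range (N/2 + 1),
            ((P.choose m : ℚ) * (K.choose (N - m) : ℚ) / ((K + P).choose N : ℚ)))
          - 2 * (∑ m ∈ Finset.range (N/2 + 1), (m : ℚ) *
            ((P.choose m : ℚ) * (K.choose (N - m) : ℚ) / ((K + P).choose N : ℚ))) := by
      rw [Finset.mul_sum, Finset.mul_sum, ← Finset.sum_sub_distrib]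
      exact Finset.sum_congr rfl fun m hm => by ring
    rw [this, hB, hA]
    field_simp
    ring
end
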